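/- arXiv:2107.05486 — 5 statements merged into one kernel-verified Lean document; each statement's English description precedes it below -/
import Mathlib

section
/- For all integers q ≥ 2, K ≥ 2 and every integer Δ > K·q^{K−1}·ln q, there exists a finite K-uniform simple hypergraph whose maximum degree is at most Δ and which admits no proper q-colouring. -/
/-- The degree of a vertex `v` in a hypergraph with hyperedge set `E`:
the number of hyperedges containing `v`. -/
def hypDegree (E : Finset (Finset ℕ)) (v : ℕ) : ℕ :=
  (E.filter (fun e => v ∈ e)).card

/-- A proper `q`-colouring: no hyperedge is monochromatic. -/
def ProperColouring (q : ℕ) (E : Finset (Finset ℕ)) (σ : ℕ → Fin q) : Prop :=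
  ∀ e ∈ E, ¬ ∀ u ∈ e, ∀ w ∈ e, σ u = σ w

open Finset

namespace Stmt0Aux

/-- `n^n ≤ n! * e^n`. -/
lemma pow_le_factorial_mul_exp (n : ℕ) : (n:ℝ)^n ≤ (n.factorial : ℝ) * Real.exp n := by
  induction n with
  | zero => simp
  | succ n ih =>
    have hpos : (0:ℝ) < Real.exp 1 := Real.exp_pos 1
    have key : ((n:ℝ)+1)^(n+1) ≤ ((n:ℝ)+1) * ((n:ℝ)^n * Real.exp 1) := by
      rcases Nat.eq_zero_or_pos n with h0 | hn
      · subst h0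
        norm_num [Nat.factorial]
      · have hn' : (0:ℝ) < n := by exact_mod_cast hn
        have h1 : ((n:ℝ)+1)^n ≤ (n:ℝ)^n * Real.exp 1 := by
          have : ((n:ℝ)+1) ≤ (n:ℝ) * Real.exp (1/(n:ℝ)) := by
            have := Real.add_one_le_exp (1/(n:ℝ))
            calc ((n:ℝ)+1) = (n:ℝ) * (1/(n:ℝ) + 1) := by field_simp; ring
              _ ≤ (n:ℝ) * Real.exp (1/(n:ℝ)) := by
                  apply mul_le_mul_of_nonneg_left this (le_of_lt hn')
          calc ((n:ℝ)+1)^n ≤ ((n:ℝ) * Real.exp (1/(n:ℝ)))^n := by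
                apply pow_le_pow_left₀ (by positivity) this
            _ = (n:ℝ)^n * (Real.exp (1/(n:ℝ)))^n := by rw [mul_pow]
            _ = (n:ℝ)^n * Real.exp 1 := by
                rw [← Real.exp_nat_mul]
                congr 1
                field_simp
        calc ((n:ℝ)+1)^(n+1) = ((n:ℝ)+1) * ((n:ℝ)+1)^n := by ring
          _ ≤ ((n:ℝ)+1) * ((n:ℝ)^n * Real.exp 1) := by
              apply mul_le_mul_of_nonneg_left h1 (by positivity)
    have cast1 : ((n+1 : ℕ) : ℝ) = (n:ℝ)+1 := by push_cast; ring
    rw [cast1]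
    calc ((n:ℝ)+1)^(n+1) = ((n:ℝ)+1)^(n+1) := rfl
      _ ≤ ((n:ℝ)+1) * ((n:ℝ)^n * Real.exp 1) := key
      _ ≤ ((n:ℝ)+1) * ((n.factorial : ℝ) * Real.exp n * Real.exp 1) := by
          apply mul_le_mul_of_nonneg_left _ (by positivity)
          apply mul_le_mul_of_nonneg_right ih (le_of_lt hpos)
      _ = ((n+1).factorial : ℝ) * Real.exp (n+1) := by
          rw [Nat.factorial_succ]
          push_cast
          rw [Real.exp_add]
          ring

/-- `n! * e^n ≤ e * n * n^n` for `n ≥ 1`. -/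
lemma factorial_mul_exp_le (n : ℕ) (hn : 1 ≤ n) :
    (n.factorial : ℝ) * Real.exp n ≤ Real.exp 1 * n * (n:ℝ)^n := by
  induction n with
  | zero => omega
  | succ n ih =>
    rcases Nat.eq_zero_or_pos n with h0 | hn'
    · subst h0
      norm_num [Nat.factorial]
    · have ihh := ih hn'
      have hn'' : (0:ℝ) < n := by exact_mod_cast hn'
      -- key : e * n * n^n ≤ (n+1)^(n+1)
      have hexp : Real.exp (1/((n:ℝ)+1)) ≤ ((n:ℝ)+1)/(n:ℝ) := by
        have h1 : (0:ℝ) < 1 - 1/((n:ℝ)+1) := by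
          rw [sub_pos, div_lt_one (by positivity)]; linarith
        have h2 := Real.add_one_le_exp (-(1/((n:ℝ)+1)))
        have h3 : 1 - 1/((n:ℝ)+1) ≤ Real.exp (-(1/((n:ℝ)+1))) := by linarith
        have h4 : Real.exp (1/((n:ℝ)+1)) = (Real.exp (-(1/((n:ℝ)+1))))⁻¹ := by
          rw [← Real.exp_neg]; ring_nf
        rw [h4]
        have h5 : (Real.exp (-(1/((n:ℝ)+1))))⁻¹ ≤ (1 - 1/((n:ℝ)+1))⁻¹ :=
          inv_anti₀ h1 h3
        apply h5.trans
        rw [inv_eq_one_div]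
        rw [div_le_div_iff₀ h1 (by positivity)]
        field_simp
        linarith
      have key : Real.exp 1 * (n:ℝ)^(n+1) ≤ ((n:ℝ)+1)^(n+1) := by
        have h6 : Real.exp (1/((n:ℝ)+1)) * (n:ℝ) ≤ ((n:ℝ)+1) := by
          exact (le_div_iff₀ hn'').mp hexp
        calc Real.exp 1 * (n:ℝ)^(n+1) = (Real.exp (1/((n:ℝ)+1)))^(n+1) * (n:ℝ)^(n+1) := by
              rw [← Real.exp_nat_mul]
              congr 2
              push_cast
              field_simp
          _ = (Real.exp (1/((n:ℝ)+1)) * (n:ℝ))^(n+1) := by rw [mul_pow]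
          _ ≤ ((n:ℝ)+1)^(n+1) := by
              apply pow_le_pow_left₀ (by positivity) h6
      have cast1 : ((n+1 : ℕ) : ℝ) = (n:ℝ)+1 := by push_cast; ring
      rw [cast1]
      calc ((n+1).factorial : ℝ) * Real.exp ((n:ℝ)+1)
          = ((n:ℝ)+1) * Real.exp 1 * ((n.factorial : ℝ) * Real.exp n) := by
            rw [Nat.factorial_succ]; push_cast; rw [Real.exp_add]; ring
        _ ≤ ((n:ℝ)+1) * Real.exp 1 * (Real.exp 1 * n * (n:ℝ)^n) := by
            apply mul_le_mul_of_nonneg_left ihh (by positivity)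
        _ = ((n:ℝ)+1) * Real.exp 1 * (Real.exp 1 * (n:ℝ)^(n+1)) := by ring
        _ ≤ ((n:ℝ)+1) * Real.exp 1 * (((n:ℝ)+1)^(n+1)) := by
            apply mul_le_mul_of_nonneg_left key (by positivity)
        _ = Real.exp 1 * ((n:ℝ)+1) * ((n:ℝ)+1)^(n+1) := by ring


/-- Method-of-types style bound. -/
lemma type_bound (q p : ℕ) (hp : 1 ≤ p) (c : Fin q → ℕ) (hc : ∑ j, c j = p) :
    (∏ j, ((c j).factorial : ℝ)) ≤
      (Real.exp 1 * p)^q * (p.factorial : ℝ) * ∏ j, ((c j : ℝ)/(p:ℝ))^(c j) := by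
  have hppos : (0:ℝ) < p := by exact_mod_cast hp
  have hcle : ∀ j, c j ≤ p := by
    intro j
    rw [← hc]
    exact Finset.single_le_sum (fun i _ => Nat.zero_le _) (mem_univ j)
  have step1 : (∏ j, ((c j).factorial : ℝ)) ≤
      ∏ j, (Real.exp 1 * p * ((c j:ℝ)^(c j) * Real.exp (-(c j:ℝ)))) := by
    apply Finset.prod_le_prod
    · intro j _; positivity
    · intro j _
      rcases Nat.eq_zero_or_pos (c j) with h0 | hcj
      · rw [h0]
        simp only [Nat.factorial_zero, Nat.cast_zero, pow_zero, one_mul, neg_zero,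
          Real.exp_zero, mul_one, Nat.cast_one]
        have hple1 : (1:ℝ) ≤ p := by exact_mod_cast hp
        nlinarith [Real.exp_one_gt_d9, hple1]
      · have h1 := factorial_mul_exp_le (c j) hcj
        have h2 : ((c j).factorial : ℝ) ≤ Real.exp 1 * (c j) * ((c j):ℝ)^(c j) * Real.exp (-(c j:ℝ)) := by
          have hepos : (0:ℝ) < Real.exp ((c j : ℝ)) := Real.exp_pos _
          rw [Real.exp_neg]
          have e1 : ((c j).factorial : ℝ) = ((c j).factorial : ℝ) * Real.exp (c j) * (Real.exp ((c j:ℝ)))⁻¹ := by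
            field_simp
          rw [e1]
          exact mul_le_mul_of_nonneg_right h1 (by positivity)
        apply h2.trans
        have : ((c j):ℝ) ≤ (p:ℝ) := by exact_mod_cast hcle j
        have h3 : Real.exp 1 * ↑(c j) ≤ Real.exp 1 * ↑p := by
          apply mul_le_mul_of_nonneg_left this (le_of_lt (Real.exp_pos 1))
        calc Real.exp 1 * ↑(c j) * (↑(c j))^(c j) * Real.exp (-(c j:ℝ))
            ≤ Real.exp 1 * ↑p * (↑(c j))^(c j) * Real.exp (-(c j:ℝ)) := by
              apply mul_le_mul_of_nonneg_right _ (by positivity)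
              apply mul_le_mul_of_nonneg_right h3 (by positivity)
          _ = Real.exp 1 * ↑p * ((↑(c j))^(c j) * Real.exp (-(c j:ℝ))) := by ring
  have step2 : ∏ j, (Real.exp 1 * p * ((c j:ℝ)^(c j) * Real.exp (-(c j:ℝ))))
      = (Real.exp 1 * p)^q * ((∏ j, (c j:ℝ)^(c j)) * Real.exp (-(p:ℝ))) := by
    rw [Finset.prod_mul_distrib, Finset.prod_const, Finset.card_univ, Fintype.card_fin]
    congr 1
    rw [Finset.prod_mul_distrib]
    congr 1
    rw [← Real.exp_sum]
    congr 1
    rw [Finset.sum_neg_distrib]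
    congr 1
    exact_mod_cast congrArg (Nat.cast : ℕ → ℝ) hc
  have hprod : ∏ j, ((c j:ℝ)/(p:ℝ))^(c j) = (∏ j, (c j:ℝ)^(c j)) / (p:ℝ)^p := by
    simp only [div_pow]
    rw [Finset.prod_div_distrib, Finset.prod_pow_eq_pow_sum, hc]
  have hpp : (0:ℝ) < (p:ℝ)^p := by positivity
  have hkey : Real.exp (-(p:ℝ)) * (p:ℝ)^p ≤ (p.factorial : ℝ) := by
    have h := pow_le_factorial_mul_exp p
    calc Real.exp (-(p:ℝ)) * (p:ℝ)^p
        ≤ Real.exp (-(p:ℝ)) * ((p.factorial:ℝ) * Real.exp (p:ℝ)) :=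
          mul_le_mul_of_nonneg_left h (le_of_lt (Real.exp_pos _))
      _ = (p.factorial:ℝ) * (Real.exp (-(p:ℝ)) * Real.exp (p:ℝ)) := by ring
      _ = (p.factorial:ℝ) := by rw [← Real.exp_add]; simp
  have step3 : (∏ j, (c j:ℝ)^(c j)) * Real.exp (-(p:ℝ))
      ≤ (p.factorial : ℝ) * ∏ j, ((c j:ℝ)/(p:ℝ))^(c j) := by
    rw [hprod]
    have hnn : (0:ℝ) ≤ ∏ j, (c j:ℝ)^(c j) := by positivity
    have hre : (p.factorial:ℝ) * ((∏ j, (c j:ℝ)^(c j))/(p:ℝ)^p)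
        = (∏ j, (c j:ℝ)^(c j)) * ((p.factorial:ℝ)/(p:ℝ)^p) := by ring
    rw [hre]
    exact mul_le_mul_of_nonneg_left ((le_div_iff₀ hpp).mpr hkey) hnn
  calc (∏ j, ((c j).factorial : ℝ))
      ≤ ∏ j, (Real.exp 1 * p * ((c j:ℝ)^(c j) * Real.exp (-(c j:ℝ)))) := step1
    _ = (Real.exp 1 * p)^q * ((∏ j, (c j:ℝ)^(c j)) * Real.exp (-(p:ℝ))) := step2
    _ ≤ (Real.exp 1 * p)^q * ((p.factorial : ℝ) * ∏ j, ((c j:ℝ)/(p:ℝ))^(c j)) := by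
        exact mul_le_mul_of_nonneg_left step3 (by positivity)
    _ = (Real.exp 1 * p)^q * (p.factorial : ℝ) * ∏ j, ((c j : ℝ)/(p:ℝ))^(c j) := by ring


abbrev P (K t r : ℕ) := (Fin t × Fin K) ⊕ (Fin r)

def NoMono (q K t r : ℕ) (v : P K t r → Fin q) : Prop :=
  ∀ i : Fin t, ¬ ∀ k k' : Fin K, v (Sum.inl (i,k)) = v (Sum.inl (i,k'))

instance (q K t r : ℕ) : DecidablePred (NoMono q K t r) := fun v => by
  unfold NoMono; infer_instance

lemma sum_prod_words (q m : ℕ) (x : Fin q → ℝ) :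
    ∑ f : Fin m → Fin q, ∏ k, x (f k) = (∑ j, x j)^m := by
  have h := Finset.prod_univ_sum (fun _ : Fin m => (univ : Finset (Fin q))) (fun _ j => x j)
  rw [Fintype.piFinset_univ] at h
  rw [← h, Finset.prod_const, Finset.card_univ, Fintype.card_fin]

lemma sum_good_chunk (q K : ℕ) (hK : 1 ≤ K) (x : Fin q → ℝ) (hx1 : ∑ j, x j = 1) :
    ∑ y ∈ univ.filter (fun y : Fin K → Fin q => ¬ ∀ k k', y k = y k'), ∏ k, x (y k)
      = 1 - ∑ j, (x j)^K := by
  have hsplit := Finset.sum_filter_add_sum_filter_not (univ : Finset (Fin K → Fin q))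
      (fun y => ∀ k k' : Fin K, y k = y k') (fun y => ∏ k, x (y k))
  have hall : ∑ y : Fin K → Fin q, ∏ k, x (y k) = 1 := by
    rw [sum_prod_words q K x, hx1, one_pow]
  have himg : univ.filter (fun y : Fin K → Fin q => ∀ k k', y k = y k')
      = univ.image (fun j : Fin q => Function.const (Fin K) j) := by
    ext y
    simp only [mem_filter, mem_univ, true_and, mem_image]
    constructor
    · intro hy
      exact ⟨y ⟨0, hK⟩, by funext k; exact (hy k ⟨0, hK⟩).symm⟩
    · rintro ⟨j, rfl⟩
      intro k k'; rfl
  have hmono : ∑ y ∈ univ.filter (fun y : Fin K → Fin q => ∀ k k', y k = y k'),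
      ∏ k, x (y k) = ∑ j, (x j)^K := by
    rw [himg, Finset.sum_image]
    · apply Finset.sum_congr rfl
      intro j _
      simp [Function.const, Finset.prod_const]
    · intro j _ j' _ hjj
      have := congrFun hjj ⟨0, hK⟩
      exact this
  linarith

def splitEquiv (q K t r : ℕ) : ((Fin t → Fin K → Fin q) × (Fin r → Fin q)) ≃ (P K t r → Fin q) where
  toFun Gh := Sum.elim (fun ik => Gh.1 ik.1 ik.2) Gh.2
  invFun v := (fun i k => v (Sum.inl (i,k)), fun s => v (Sum.inr s))
  left_inv := by rintro ⟨G,h⟩; rfl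
  right_inv := by intro v; funext u; rcases u with ⟨i,k⟩ | s <;> rfl

lemma sum_noMono_words (q K t r : ℕ) (hK : 1 ≤ K) (x : Fin q → ℝ) (hx1 : ∑ j, x j = 1) :
    ∑ v ∈ univ.filter (NoMono q K t r), ∏ u, x (v u) = (1 - ∑ j, (x j)^K)^t := by
  rw [Finset.sum_filter]
  rw [← Equiv.sum_comp (splitEquiv q K t r)
    (fun v => if NoMono q K t r v then ∏ u, x (v u) else 0)]
  rw [Fintype.sum_prod_type]
  have hsummand : ∀ (G : Fin t → Fin K → Fin q) (h : Fin r → Fin q),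
      (if NoMono q K t r (splitEquiv q K t r (G, h)) then
        ∏ u, x ((splitEquiv q K t r (G,h)) u) else 0)
      = (∏ i, (if (¬ ∀ k k' : Fin K, G i k = G i k') then ∏ k, x (G i k) else 0))
          * (∏ s, x (h s)) := by
    intro G h
    have hnm : NoMono q K t r (splitEquiv q K t r (G, h)) ↔
        ∀ i : Fin t, ¬ ∀ k k' : Fin K, G i k = G i k' := by
      simp [NoMono, splitEquiv]
    have hprod : ∏ u, x ((splitEquiv q K t r (G,h)) u)
        = (∏ i, ∏ k, x (G i k)) * (∏ s, x (h s)) := by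
      rw [show (splitEquiv q K t r (G,h)) = Sum.elim (fun ik : Fin t × Fin K => G ik.1 ik.2) h from rfl]
      rw [Fintype.prod_sum_type]
      congr 1
      rw [Fintype.prod_prod_type]
      rfl
    by_cases hc : ∀ i : Fin t, ¬ ∀ k k' : Fin K, G i k = G i k'
    · rw [if_pos (hnm.mpr hc), hprod]
      congr 1
      refine (Finset.prod_congr rfl (fun i _ => ?_)).symm
      exact if_pos (hc i)
    · rw [if_neg (fun hh => hc (hnm.mp hh))]
      push_neg at hc
      obtain ⟨i0, hi0⟩ := hc
      symm
      have hz : (if (¬ ∀ k k' : Fin K, G i0 k = G i0 k') then ∏ k, x (G i0 k) else 0) = 0 := by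
        rw [if_neg]; exact not_not_intro hi0
      rw [Finset.prod_eq_zero (mem_univ i0) hz, zero_mul]
  calc ∑ G : Fin t → Fin K → Fin q, ∑ h : Fin r → Fin q,
        (if NoMono q K t r (splitEquiv q K t r (G, h)) then
          ∏ u, x ((splitEquiv q K t r (G,h)) u) else 0)
      = ∑ G : Fin t → Fin K → Fin q, ∑ h : Fin r → Fin q,
        (∏ i, (if (¬ ∀ k k' : Fin K, G i k = G i k') then ∏ k, x (G i k) else 0))
          * (∏ s, x (h s)) := by
        exact Finset.sum_congr rfl (fun G _ => Finset.sum_congr rfl (fun h _ => hsummand G h))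
    _ = (∑ G : Fin t → Fin K → Fin q,
          ∏ i, (if (¬ ∀ k k' : Fin K, G i k = G i k') then ∏ k, x (G i k) else 0))
        * (∑ h : Fin r → Fin q, ∏ s, x (h s)) := by
        rw [Finset.sum_mul_sum]
    _ = (∑ G : Fin t → Fin K → Fin q,
          ∏ i, (if (¬ ∀ k k' : Fin K, G i k = G i k') then ∏ k, x (G i k) else 0)) := by
        rw [sum_prod_words q r x, hx1, one_pow, mul_one]
    _ = ∏ i : Fin t, ∑ y : Fin K → Fin q,
          (if (¬ ∀ k k' : Fin K, y k = y k') then ∏ k, x (y k) else 0) := by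
        have h := Finset.prod_univ_sum (fun _ : Fin t => (univ : Finset (Fin K → Fin q)))
          (fun _ y => (if (¬ ∀ k k' : Fin K, y k = y k') then ∏ k, x (y k) else 0))
        rw [Fintype.piFinset_univ] at h
        rw [← h]
    _ = (1 - ∑ j, (x j)^K)^t := by
        rw [Finset.prod_const, Finset.card_univ, Fintype.card_fin]
        congr 1
        rw [← Finset.sum_filter]
        exact sum_good_chunk q K hK x hx1


def cnt {α : Type*} [Fintype α] [DecidableEq α] (q : ℕ) (v : α → Fin q) (j : Fin q) : ℕ :=
  #(univ.filter fun u => v u = j)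

lemma sum_cnt {α : Type*} [Fintype α] [DecidableEq α] (q : ℕ) (v : α → Fin q) :
    ∑ j, cnt q v j = Fintype.card α := by
  rw [← Finset.card_univ]
  exact (Finset.card_eq_sum_card_fiberwise (fun u _ => mem_univ (v u))).symm

lemma prod_x_eq {α : Type*} [Fintype α] [DecidableEq α] (q : ℕ) (x : Fin q → ℝ)
    (v : α → Fin q) : ∏ u, x (v u) = ∏ j, (x j) ^ (cnt q v j) := by
  calc ∏ u, x (v u) = ∏ j : Fin q, ∏ u ∈ univ.filter (fun u => v u = j), x (v u) :=
        (Finset.prod_fiberwise univ v (fun u => x (v u))).symm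
    _ = ∏ j, (x j)^(cnt q v j) := by
        apply Finset.prod_congr rfl
        intro j _
        have hcg : ∀ u ∈ univ.filter (fun u => v u = j), x (v u) = x j := by
          intro u hu; rw [(mem_filter.mp hu).2]
        rw [Finset.prod_congr rfl hcg, Finset.prod_const]
        rfl

lemma cnt_comp_equiv {α β : Type*} [Fintype α] [Fintype β] [DecidableEq α] [DecidableEq β]
    (q : ℕ) (w : β → Fin q) (φ : α ≃ β) (j : Fin q) :
    cnt q (w ∘ φ) j = cnt q w j := by
  unfold cnt
  apply Finset.card_bij (fun u _ => φ u)
  · intro u hu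
    simp only [mem_filter, mem_univ, true_and] at hu ⊢
    exact hu
  · intro u _ u' _ h
    exact φ.injective h
  · intro z hz
    simp only [mem_filter, mem_univ, true_and] at hz
    refine ⟨φ.symm z, ?_, by simp⟩
    simp only [mem_filter, mem_univ, true_and, Function.comp_apply, Equiv.apply_symm_apply]
    exact hz

lemma S_le {α β : Type*} [Fintype α] [Fintype β] [DecidableEq α] [DecidableEq β] (q : ℕ)
    (v : α → Fin q) (w : β → Fin q) :
    #(univ.filter fun φ : α ≃ β => w ∘ φ = v) ≤ ∏ j, (cnt q v j).factorial := by
  rcases (univ.filter fun φ : α ≃ β => w ∘ φ = v).eq_empty_or_nonempty with h | h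
  · rw [h]; simp
  · obtain ⟨φ₀, hφ₀⟩ := h
    have hφ₀' : w ∘ φ₀ = v := (mem_filter.mp hφ₀).2
    have hfib : ∀ (φ : α ≃ β), w ∘ φ = v → ∀ (j : Fin q) (u : α), v u = j ↔ w (φ u) = j := by
      intro φ hφ j u
      rw [show w (φ u) = v u from congrFun hφ u]
    rw [← Fintype.card_subtype]
    have hcard2 : ∀ j : Fin q, Fintype.card {u : α // v u = j} = cnt q v j := by
      intro j
      rw [Fintype.card_subtype]
      rfl
    have hcard3 : ∀ j : Fin q,
        Fintype.card ({u : α // v u = j} ≃ {z : β // w z = j}) = (cnt q v j).factorial := by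
      intro j
      rw [Fintype.card_equiv (Equiv.subtypeEquiv φ₀ (hfib φ₀ hφ₀' j)), hcard2 j]
    calc Fintype.card {φ : α ≃ β // w ∘ φ = v}
        ≤ Fintype.card (∀ j : Fin q, ({u : α // v u = j} ≃ {z : β // w z = j})) := by
          apply Fintype.card_le_of_injective
            (fun φ => fun j => Equiv.subtypeEquiv φ.1 (hfib φ.1 φ.2 j))
          intro φ φ' h
          apply Subtype.ext
          apply Equiv.ext
          intro u
          have h1 := congrFun h (v u)
          have h2 := congrArg (fun (e : {u' : α // v u' = v u} ≃ {z : β // w z = v u}) =>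
            (e ⟨u, rfl⟩ : {z : β // w z = v u}).val) h1
          simpa [Equiv.subtypeEquiv] using h2
      _ = ∏ j : Fin q, Fintype.card ({u : α // v u = j} ≃ {z : β // w z = j}) :=
          Fintype.card_pi
      _ = ∏ j, (cnt q v j).factorial := Finset.prod_congr rfl (fun j _ => hcard3 j)


set_option maxHeartbeats 2000000 in
lemma line_bound (q K t r : ℕ) (hq : 1 ≤ q) (hK : 1 ≤ K) {β : Type*} [Fintype β]
    [DecidableEq β] (p : ℕ) (hp : 1 ≤ p) (hcard : Fintype.card β = p) (w : β → Fin q) :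
    (#(univ.filter fun φ : P K t r ≃ β => NoMono q K t r (w ∘ φ)) : ℝ)
      ≤ (Real.exp 1 * p)^q * (p.factorial : ℝ) * (1 - ((q:ℝ)^(K-1))⁻¹)^t := by
  set c : Fin q → ℕ := cnt q w with hc
  set x : Fin q → ℝ := fun j => (c j : ℝ)/(p:ℝ) with hx
  have hppos : (0:ℝ) < p := by exact_mod_cast hp
  have hcsum : ∑ j, c j = p := by rw [hc]; rw [sum_cnt]; exact hcard
  have hcsumR : ∑ j, (c j : ℝ) = (p:ℝ) := by exact_mod_cast congrArg (Nat.cast : ℕ → ℝ) hcsum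
  have hx0 : ∀ j, 0 ≤ x j := fun j => by rw [hx]; positivity
  have hx1 : ∑ j, x j = 1 := by
    rw [hx]
    rw [← Finset.sum_div, hcsumR]
    field_simp
  -- grouping
  have hgroup : #(univ.filter fun φ : P K t r ≃ β => NoMono q K t r (w ∘ φ))
      = ∑ v ∈ univ.filter (NoMono q K t r),
          #(univ.filter fun φ : P K t r ≃ β => w ∘ φ = v) := by
    rw [Finset.card_eq_sum_card_fiberwise
      (f := fun φ : P K t r ≃ β => w ∘ φ) (t := univ.filter (NoMono q K t r))
      (fun φ hφ => by
        simp only [Finset.mem_coe, mem_filter, mem_univ, true_and] at hφ ⊢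
        exact hφ)]
    apply Finset.sum_congr rfl
    intro v hv
    congr 1
    ext φ
    simp only [mem_filter, mem_univ, true_and] at hv ⊢
    constructor
    · rintro ⟨_, h2⟩; exact h2
    · intro h2; exact ⟨by rw [h2]; exact hv, h2⟩
  -- bound each fiber
  have hfiber : ∀ v ∈ univ.filter (NoMono q K t r),
      #(univ.filter fun φ : P K t r ≃ β => w ∘ φ = v)
        ≤ (if ∀ j, cnt q v j = c j then ∏ j, (c j).factorial else 0) := by
    intro v _
    by_cases hcond : ∀ j, cnt q v j = c j
    · rw [if_pos hcond]
      calc #(univ.filter fun φ : P K t r ≃ β => w ∘ φ = v)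
          ≤ ∏ j, (cnt q v j).factorial := S_le q v w
        _ = ∏ j, (c j).factorial := by
            exact Finset.prod_congr rfl (fun j _ => by rw [hcond j])
    · rw [if_neg hcond]
      simp only [Nat.le_zero, Finset.card_eq_zero, Finset.filter_eq_empty_iff]
      intro φ _ hφ
      apply hcond
      intro j
      rw [← hφ]
      rw [show cnt q (w ∘ φ) j = cnt q w j from cnt_comp_equiv q w φ j]
  set R : ℕ := #((univ.filter (NoMono q K t r)).filter (fun v => ∀ j, cnt q v j = c j)) with hR
  have hNR : #(univ.filter fun φ : P K t r ≃ β => NoMono q K t r (w ∘ φ))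
      ≤ R * ∏ j, (c j).factorial := by
    rw [hgroup]
    calc ∑ v ∈ univ.filter (NoMono q K t r),
          #(univ.filter fun φ : P K t r ≃ β => w ∘ φ = v)
        ≤ ∑ v ∈ univ.filter (NoMono q K t r),
            (if ∀ j, cnt q v j = c j then ∏ j, (c j).factorial else 0) :=
          Finset.sum_le_sum hfiber
      _ = ∑ v ∈ (univ.filter (NoMono q K t r)).filter (fun v => ∀ j, cnt q v j = c j),
            ∏ j, (c j).factorial := (Finset.sum_filter _ _).symm
      _ = R * ∏ j, (c j).factorial := by rw [Finset.sum_const, hR, smul_eq_mul]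
  -- real side
  have hRx : (R:ℝ) * ∏ j, (x j)^(c j) ≤ (1 - ∑ j, (x j)^K)^t := by
    have h1 : ∀ v ∈ (univ.filter (NoMono q K t r)).filter
        (fun v : P K t r → Fin q => ∀ j, cnt q v j = c j),
        ∏ u, x (v u) = ∏ j, (x j)^(c j) := by
      intro v hv
      rw [prod_x_eq q x v]
      exact Finset.prod_congr rfl (fun j _ => by rw [(Finset.mem_filter.mp hv).2 j])
    have heq : ∑ v ∈ (univ.filter (NoMono q K t r)).filter
        (fun v : P K t r → Fin q => ∀ j, cnt q v j = c j), ∏ u, x (v u)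
        = (R:ℝ) * ∏ j, (x j)^(c j) := by
      rw [Finset.sum_congr rfl h1, Finset.sum_const, nsmul_eq_mul]
    rw [← heq, ← sum_noMono_words q K t r hK x hx1]
    apply Finset.sum_le_sum_of_subset_of_nonneg (Finset.filter_subset _ _)
    intro v _ _
    exact Finset.prod_nonneg (fun u _ => hx0 (v u))
  have hxle1 : ∀ j, x j ≤ 1 := by
    intro j
    rw [hx]
    rw [div_le_one hppos]
    have : c j ≤ p := by
      rw [← hcsum]
      exact Finset.single_le_sum (fun i _ => Nat.zero_le _) (mem_univ j)
    exact_mod_cast this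
  have hKne : K ≠ 0 := by omega
  have hsle1 : ∑ j, (x j)^K ≤ 1 := by
    calc ∑ j, (x j)^K ≤ ∑ j, x j :=
          Finset.sum_le_sum (fun j _ => pow_le_of_le_one (hx0 j) (hxle1 j) hKne)
      _ = 1 := hx1
  have hsge : ((q:ℝ)^(K-1))⁻¹ ≤ ∑ j, (x j)^K := by
    have h := pow_sum_div_card_le_sum_pow (s := (univ : Finset (Fin q))) (f := x)
      (fun j _ => hx0 j) (K-1)
    rw [hx1, one_pow] at h
    simp only [Finset.card_univ, Fintype.card_fin] at h
    have hKe : K - 1 + 1 = K := by omega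
    rw [hKe] at h
    rw [inv_eq_one_div]
    exact h
  have hy0 : (0:ℝ) ≤ 1 - ∑ j, (x j)^K := by linarith
  have hpow : (1 - ∑ j, (x j)^K)^t ≤ (1 - ((q:ℝ)^(K-1))⁻¹)^t := by
    apply pow_le_pow_left₀ hy0
    linarith
  have htb := type_bound q p hp c hcsum
  have hNR' : (#(univ.filter fun φ : P K t r ≃ β => NoMono q K t r (w ∘ φ)) : ℝ)
      ≤ (R:ℝ) * ∏ j, ((c j).factorial : ℝ) := by
    have := hNR
    calc (#(univ.filter fun φ : P K t r ≃ β => NoMono q K t r (w ∘ φ)) : ℝ)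
        ≤ ((R * ∏ j, (c j).factorial : ℕ) : ℝ) := by exact_mod_cast hNR
      _ = (R:ℝ) * ∏ j, ((c j).factorial : ℝ) := by push_cast; ring
  calc (#(univ.filter fun φ : P K t r ≃ β => NoMono q K t r (w ∘ φ)) : ℝ)
      ≤ (R:ℝ) * ∏ j, ((c j).factorial : ℝ) := hNR'
    _ ≤ (R:ℝ) * ((Real.exp 1 * p)^q * (p.factorial : ℝ) * ∏ j, ((c j : ℝ)/(p:ℝ))^(c j)) :=
        mul_le_mul_of_nonneg_left htb (by positivity)
    _ = (Real.exp 1 * p)^q * (p.factorial : ℝ) * ((R:ℝ) * ∏ j, (x j)^(c j)) := by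
        rw [hx]; ring
    _ ≤ (Real.exp 1 * p)^q * (p.factorial : ℝ) * (1 - ((q:ℝ)^(K-1))⁻¹)^t := by
        apply mul_le_mul_of_nonneg_left (hRx.trans hpow) (by positivity)


lemma crux_aux (qR dR KR pR LQ LP s tR y : ℝ)
    (hLQ : 0 ≤ LQ) (hdR : 1 ≤ dR) (hqR : 2 ≤ qR) (hKR : 2 ≤ KR)
    (hy0 : 0 < y) (hy1 : y ≤ 1) (hLP : LP ≤ 2*s - 2) (hs : s*s = pR) (hs1 : 1 ≤ s)
    (htR : pR/KR - 1 ≤ tR)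
    (hbig : 3*qR*dR + dR + 1 ≤ s * (dR * y / KR - LQ)) :
    pR * LQ + qR*dR*(1 + LP) + 1 ≤ y * tR * dR := by
  have hK0 : (0:ℝ) < KR := by linarith
  have h1 : y * (pR/KR - 1) * dR ≤ y * tR * dR := by
    apply mul_le_mul_of_nonneg_right _ (by linarith)
    exact mul_le_mul_of_nonneg_left htR (le_of_lt hy0)
  have h2 : y * (pR/KR - 1) * dR = pR * (dR * y / KR) - y * dR := by
    field_simp
  have hyd : y * dR ≤ dR := by nlinarith
  have hql : qR*dR*(1 + LP) ≤ qR*dR*(2*s - 1) := by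
    apply mul_le_mul_of_nonneg_left _ (by nlinarith)
    linarith
  have h5 : qR*dR*(2*s - 1) + 1 + dR ≤ (3*qR*dR + dR + 1) * s := by
    have hqd0 : (0:ℝ) ≤ qR*dR := by nlinarith
    have e1 : qR*dR*(2*s - 1) ≤ 2*(qR*dR)*s := by nlinarith
    have e2 : 1 + dR ≤ (dR+1)*s := by nlinarith
    have e3 : (0:ℝ) ≤ (qR*dR)*s := by nlinarith
    nlinarith [e1, e2, e3]
  have h6 : (3*qR*dR + dR + 1) * s ≤ (s * (dR * y / KR - LQ)) * s :=
    mul_le_mul_of_nonneg_right hbig (by linarith)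
  have h7 : (s * (dR * y / KR - LQ)) * s = pR * (dR*y/KR - LQ) := by
    rw [mul_comm, ← mul_assoc, hs]
  nlinarith [h1, h2, h5, h6, h7, hql, hyd]

lemma num_bound (q K Δ p t : ℕ) (hq : 2 ≤ q) (hK : 2 ≤ K) (hΔ1 : 1 ≤ Δ)
    (hthr : (K : ℝ) * (q : ℝ) ^ (K - 1) * Real.log q < Δ)
    (hpK : K ≤ p) (hpΔ : Δ ≤ p) (hp1 : 1 ≤ p)
    (ht : K * t + p % K = p)
    (hbig : (3*(q:ℝ)*Δ + Δ + 1)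
      ≤ Real.sqrt p * ((Δ:ℝ) * ((q:ℝ)^(K-1))⁻¹ / K - Real.log q)) :
    (Δ:ℝ) * ((q:ℝ)^p * ((Real.exp 1 * p)^q * (p.factorial:ℝ)
        * (1 - ((q:ℝ)^(K-1))⁻¹)^t)^Δ)^p
      < ((p.factorial : ℝ))^(Δ*p) := by
  set y : ℝ := ((q:ℝ)^(K-1))⁻¹ with hy
  have hqR : (2:ℝ) ≤ q := by exact_mod_cast hq
  have hpR : (1:ℝ) ≤ p := by exact_mod_cast hp1
  have hppos : (0:ℝ) < p := by linarith
  have hq1R : (1:ℝ) ≤ (q:ℝ) := by linarith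
  have hQpos : (0:ℝ) < (q:ℝ)^(K-1) := by positivity
  have hQ1 : (1:ℝ) ≤ (q:ℝ)^(K-1) := by
    calc (1:ℝ) = 1^(K-1) := (one_pow _).symm
    _ ≤ (q:ℝ)^(K-1) := pow_le_pow_left₀ (by norm_num) hq1R _
  have hy0 : 0 < y := by rw [hy]; positivity
  have hy1 : y ≤ 1 := by rw [hy]; exact inv_le_one_of_one_le₀ hQ1
  have hF : (0:ℝ) < (p.factorial : ℝ) := by exact_mod_cast p.factorial_pos
  have hlogq : 0 ≤ Real.log q := Real.log_nonneg hq1R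
  have hKR : (2:ℝ) ≤ K := by exact_mod_cast hK
  have hΔR : (1:ℝ) ≤ Δ := by exact_mod_cast hΔ1
  have heps : Real.log q < (Δ:ℝ) * y / K := by
    have h0 : (Δ:ℝ) * y / K = (Δ:ℝ) / ((K:ℝ) * (q:ℝ)^(K-1)) := by
      rw [hy]; field_simp
    rw [h0, lt_div_iff₀ (by positivity)]
    calc Real.log q * ((K:ℝ)*(q:ℝ)^(K-1)) = (K:ℝ)*(q:ℝ)^(K-1)*Real.log q := by ring
      _ < Δ := hthr
  have htR : (p:ℝ) / K - 1 ≤ (t:ℝ) := by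
    have hmod : p % K < K := Nat.mod_lt _ (by omega)
    have hcast : (K:ℝ) * t + ((p % K : ℕ) : ℝ) = p := by
      exact_mod_cast congrArg (Nat.cast : ℕ → ℝ) ht
    have hmR : ((p % K : ℕ) : ℝ) < K := by exact_mod_cast hmod
    rw [sub_le_iff_le_add, div_le_iff₀ (by linarith : (0:ℝ) < K)]
    nlinarith
  have hsq : Real.sqrt p * Real.sqrt p = p := Real.mul_self_sqrt (le_of_lt hppos)
  have hsq1 : 1 ≤ Real.sqrt p := by nlinarith [Real.sqrt_nonneg (p:ℝ), hsq]
  have hlogp : Real.log p ≤ 2 * Real.sqrt p - 2 := by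
    have h1 : Real.log (Real.sqrt p) ≤ Real.sqrt p - 1 :=
      Real.log_le_sub_one_of_pos (by linarith)
    have h2 : Real.log (Real.sqrt p) = Real.log p / 2 := Real.log_sqrt (le_of_lt hppos)
    linarith
  have hcrux : (p:ℝ) * Real.log q + (q:ℝ)*(Δ:ℝ)*(1 + Real.log p) + 1 ≤ y * t * Δ := by
    have := crux_aux (q:ℝ) (Δ:ℝ) (K:ℝ) (p:ℝ) (Real.log q) (Real.log p) (Real.sqrt p)
      (t:ℝ) y hlogq hΔR hqR hKR hy0 hy1 hlogp hsq hsq1 htR hbig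
    linarith [this]
  set W : ℝ := (q:ℝ)^p * ((Real.exp 1 * p)^q)^Δ * ((1 - y)^t)^Δ with hW
  have h1my : 0 ≤ 1 - y := by linarith
  have hW0 : 0 ≤ W := by rw [hW]; positivity
  have hWexp : W ≤ Real.exp (-1) := by
    have e1 : (q:ℝ)^p = Real.exp ((p:ℝ) * Real.log q) := by
      rw [Real.exp_nat_mul, Real.exp_log (by linarith : (0:ℝ) < q)]
    have e2 : ((Real.exp 1 * p)^q)^Δ = Real.exp ((q:ℝ)*(Δ:ℝ)*(1 + Real.log p)) := by
      have : Real.exp 1 * p = Real.exp (1 + Real.log p) := by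
        rw [Real.exp_add, Real.exp_log hppos]
      rw [this, ← pow_mul, ← Real.exp_nat_mul]
      congr 1
      push_cast
      ring
    have e3 : ((1 - y)^t)^Δ ≤ Real.exp (-(y * t * Δ)) := by
      have h1 : 1 - y ≤ Real.exp (-y) := by
        have := Real.add_one_le_exp (-y)
        linarith
      have h2 : ((1 - y)^t)^Δ ≤ (Real.exp (-y))^(t*Δ) := by
        rw [pow_mul]
        exact pow_le_pow_left₀ (by positivity) (pow_le_pow_left₀ h1my h1 t) Δ
      have h3 : (Real.exp (-y))^(t*Δ) = Real.exp (-(y * t * Δ)) := by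
        rw [← Real.exp_nat_mul]
        congr 1
        push_cast
        ring
      rw [← h3]
      exact h2
    calc W = Real.exp ((p:ℝ) * Real.log q) * Real.exp ((q:ℝ)*(Δ:ℝ)*(1 + Real.log p))
          * ((1 - y)^t)^Δ := by rw [hW, e1, e2]
      _ ≤ Real.exp ((p:ℝ) * Real.log q) * Real.exp ((q:ℝ)*(Δ:ℝ)*(1 + Real.log p))
          * Real.exp (-(y * t * Δ)) := by
          apply mul_le_mul_of_nonneg_left e3 (by positivity)
      _ = Real.exp ((p:ℝ) * Real.log q + (q:ℝ)*(Δ:ℝ)*(1 + Real.log p) + -(y * t * Δ)) := by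
          rw [← Real.exp_add, ← Real.exp_add]
      _ ≤ Real.exp (-1) := by
          apply Real.exp_le_exp.mpr
          linarith
  have hΔW : (Δ:ℝ) * W^p < 1 := by
    have hWp : W^p ≤ Real.exp (-(p:ℝ)) := by
      calc W^p ≤ (Real.exp (-1))^p := pow_le_pow_left₀ hW0 hWexp p
        _ = Real.exp (-(p:ℝ)) := by rw [← Real.exp_nat_mul]; congr 1; ring
    have hΔexp : (Δ:ℝ) < Real.exp (p:ℝ) := by
      have h1 : (Δ:ℝ) ≤ (p:ℝ) := by exact_mod_cast hpΔ
      linarith [Real.add_one_le_exp (p:ℝ)]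
    calc (Δ:ℝ) * W^p ≤ (Δ:ℝ) * Real.exp (-(p:ℝ)) := by
          apply mul_le_mul_of_nonneg_left hWp (by positivity)
      _ < Real.exp (p:ℝ) * Real.exp (-(p:ℝ)) := by
          apply mul_lt_mul_of_pos_right hΔexp (Real.exp_pos _)
      _ = 1 := by rw [← Real.exp_add]; simp
  -- final algebra
  have hexpand : (Δ:ℝ) * ((q:ℝ)^p * ((Real.exp 1 * p)^q * (p.factorial:ℝ) * (1 - y)^t)^Δ)^p
      = (Δ:ℝ) * W^p * ((p.factorial:ℝ))^(Δ*p) := by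
    rw [hW]
    rw [mul_pow ((Real.exp 1 * p)^q * (p.factorial:ℝ)) ((1-y)^t) Δ]
    rw [mul_pow ((Real.exp 1 * p)^q) ((p.factorial:ℝ)) Δ]
    rw [show (q:ℝ)^p * (((Real.exp 1 * p)^q)^Δ * ((p.factorial:ℝ))^Δ * ((1-y)^t)^Δ)
        = ((q:ℝ)^p * ((Real.exp 1 * p)^q)^Δ * ((1-y)^t)^Δ) * ((p.factorial:ℝ))^Δ from by ring]
    rw [mul_pow]
    rw [← pow_mul ((p.factorial:ℝ)) Δ p]
    ring
  rw [hexpand]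
  calc (Δ:ℝ) * W^p * ((p.factorial:ℝ))^(Δ*p)
      < 1 * ((p.factorial:ℝ))^(Δ*p) := by
        apply mul_lt_mul_of_pos_right hΔW (by positivity)
    _ = ((p.factorial:ℝ))^(Δ*p) := by rw [one_mul]


section Geom

variable (q K Δ p : ℕ) [Fact p.Prime]

def slp (a : Fin Δ) : ZMod p := (a.val : ZMod p)

lemma slp_inj (hΔp : Δ ≤ p) : Function.Injective (slp Δ p) := by
  intro a a' h
  have h1 : ((a.val : ZMod p)).val = ((a'.val : ZMod p)).val := by rw [slp] at h; rw [slp] at h; rw [h]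
  rw [ZMod.val_cast_of_lt (lt_of_lt_of_le a.isLt hΔp),
    ZMod.val_cast_of_lt (lt_of_lt_of_le a'.isLt hΔp)] at h1
  exact Fin.ext h1

def linePt (A b z : ZMod p) : ZMod p × ZMod p := (z, A * z + b)

def edg (Φs : Fin Δ × ZMod p → (P K (p/K) (p%K) ≃ ZMod p)) (a : Fin Δ) (b : ZMod p)
    (i : Fin (p/K)) : Finset (ZMod p × ZMod p) :=
  univ.image (fun k : Fin K => linePt p (slp Δ p a) b ((Φs (a,b)) (Sum.inl (i,k))))

lemma mem_edg (Φs) (a : Fin Δ) (b : ZMod p) (i : Fin (p/K)) (u : ZMod p × ZMod p) :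
    u ∈ edg K Δ p Φs a b i ↔
      ∃ k : Fin K, linePt p (slp Δ p a) b ((Φs (a,b)) (Sum.inl (i,k))) = u := by
  simp [edg]

lemma edg_snd (Φs) (a : Fin Δ) (b : ZMod p) (i : Fin (p/K)) (u : ZMod p × ZMod p)
    (hu : u ∈ edg K Δ p Φs a b i) : u.2 = slp Δ p a * u.1 + b := by
  rw [mem_edg] at hu
  obtain ⟨k, hk⟩ := hu
  rw [← hk]
  rfl

lemma edg_card (Φs) (a : Fin Δ) (b : ZMod p) (i : Fin (p/K)) :
    (edg K Δ p Φs a b i).card = K := by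
  rw [edg, Finset.card_image_of_injective _ ?hinj, Finset.card_univ, Fintype.card_fin]
  case hinj =>
    intro k k' h
    have h1 : ((Φs (a,b)) (Sum.inl (i,k)) : ZMod p) = (Φs (a,b)) (Sum.inl (i,k')) :=
      congrArg Prod.fst h
    have h2 := (Φs (a,b)).injective h1
    simpa using h2

lemma edg_inter (hΔp : Δ ≤ p) (Φs) (a a' : Fin Δ) (b b' : ZMod p) (i i' : Fin (p/K))
    (hne : edg K Δ p Φs a b i ≠ edg K Δ p Φs a' b' i') :
    (edg K Δ p Φs a b i ∩ edg K Δ p Φs a' b' i').card ≤ 1 := by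
  by_cases haa : a = a'
  · subst haa
    by_cases hbb : b = b'
    · subst hbb
      have hii : i ≠ i' := fun h => hne (by rw [h])
      have : edg K Δ p Φs a b i ∩ edg K Δ p Φs a b i' = ∅ := by
        rw [Finset.eq_empty_iff_forall_notMem]
        intro u hu
        rw [Finset.mem_inter, mem_edg, mem_edg] at hu
        obtain ⟨⟨k, hk⟩, ⟨k', hk'⟩⟩ := hu
        have h1 : ((Φs (a,b)) (Sum.inl (i,k)) : ZMod p) = (Φs (a,b)) (Sum.inl (i',k')) := by
          have := hk.trans hk'.symm
          exact congrArg Prod.fst this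
        have h2 := (Φs (a,b)).injective h1
        apply hii
        simpa using congrArg (fun s => Sum.elim (fun ik : Fin (p/K) × Fin K => ik.1)
          (fun _ => i) s) h2
      rw [this]
      simp
    · have : edg K Δ p Φs a b i ∩ edg K Δ p Φs a b' i' = ∅ := by
        rw [Finset.eq_empty_iff_forall_notMem]
        intro u hu
        rw [Finset.mem_inter] at hu
        have h1 := edg_snd K Δ p Φs a b i u hu.1
        have h2 := edg_snd K Δ p Φs a b' i' u hu.2
        apply hbb
        have := h1.symm.trans h2
        exact add_left_cancel this
      rw [this]
      simp
  · rw [Finset.card_le_one]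
    intro u hu u' hu'
    rw [Finset.mem_inter] at hu hu'
    have h1 := edg_snd K Δ p Φs a b i u hu.1
    have h2 := edg_snd K Δ p Φs a' b' i' u hu.2
    have h3 := edg_snd K Δ p Φs a b i u' hu'.1
    have h4 := edg_snd K Δ p Φs a' b' i' u' hu'.2
    have hA : slp Δ p a - slp Δ p a' ≠ 0 :=
      fun h => haa (slp_inj Δ p hΔp (sub_eq_zero.mp h))
    have e1 : (slp Δ p a - slp Δ p a') * u.1 = b' - b := by
      have h12 := h1.symm.trans h2
      linear_combination h12
    have e2 : (slp Δ p a - slp Δ p a') * u'.1 = b' - b := by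
      have h34 := h3.symm.trans h4
      linear_combination h34
    have hfst : u.1 = u'.1 := mul_left_cancel₀ hA (e1.trans e2.symm)
    have hsnd : u.2 = u'.2 := by rw [h1, h3, hfst]
    exact Prod.ext hfst hsnd

end Geom

lemma prod_le_sum_pow (Δ : ℕ) (hΔ : 1 ≤ Δ) (f : Fin Δ → ℝ) (hf : ∀ a, 0 ≤ f a) :
    ∏ a, f a ≤ ∑ a, (f a)^Δ := by
  obtain ⟨a₀, _, hmax⟩ := Finset.exists_max_image univ f ⟨⟨0, hΔ⟩, mem_univ _⟩
  calc ∏ a, f a ≤ ∏ _a : Fin Δ, f a₀ :=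
        Finset.prod_le_prod (fun a _ => hf a) (fun a _ => hmax a (mem_univ a))
    _ = (f a₀)^Δ := by rw [Finset.prod_const, Finset.card_univ, Fintype.card_fin]
    _ ≤ ∑ a, (f a)^Δ :=
        Finset.single_le_sum (fun a _ => pow_nonneg (hf a) Δ) (mem_univ a₀)

section Count

variable (q K Δ p : ℕ) [Fact p.Prime]

def wrd (σ : ZMod p × ZMod p → Fin q) (A b : ZMod p) : ZMod p → Fin q :=
  fun z => σ (z, A * z + b)

def ProperV (E : Finset (Finset (ZMod p × ZMod p))) (σ : ZMod p × ZMod p → Fin q) : Prop :=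
  ∀ e ∈ E, ¬ ∀ u ∈ e, ∀ u' ∈ e, σ u = σ u'

instance (E : Finset (Finset (ZMod p × ZMod p))) (σ : ZMod p × ZMod p → Fin q) :
    Decidable (ProperV q p E σ) := by
  unfold ProperV; infer_instance

def Egrid (Φs : Fin Δ × ZMod p → (P K (p/K) (p%K) ≃ ZMod p)) :
    Finset (Finset (ZMod p × ZMod p)) :=
  univ.image (fun x : (Fin Δ × ZMod p) × Fin (p/K) => edg K Δ p Φs x.1.1 x.1.2 x.2)

def NlC (w : ZMod p → Fin q) : ℕ :=
  #(univ.filter fun φ : P K (p/K) (p%K) ≃ ZMod p => NoMono q K (p/K) (p%K) (w ∘ φ))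

lemma proper_noMono (Φs) (σ : ZMod p × ZMod p → Fin q)
    (hσ : ProperV q p (Egrid K Δ p Φs) σ) (ab : Fin Δ × ZMod p) :
    NoMono q K (p/K) (p%K) (wrd q p σ (slp Δ p ab.1) ab.2 ∘ (Φs ab)) := by
  intro i hall
  apply hσ (edg K Δ p Φs ab.1 ab.2 i)
  · apply Finset.mem_image_of_mem _ (mem_univ ((ab.1, ab.2), i))
  · intro u hu u' hu'
    obtain ⟨k, hk⟩ := (mem_edg K Δ p Φs ab.1 ab.2 i u).mp hu
    obtain ⟨k', hk'⟩ := (mem_edg K Δ p Φs ab.1 ab.2 i u').mp hu'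
    have e1 : σ u = (wrd q p σ (slp Δ p ab.1) ab.2 ∘ (Φs ab)) (Sum.inl (i,k)) := by
      rw [← hk]; rfl
    have e2 : σ u' = (wrd q p σ (slp Δ p ab.1) ab.2 ∘ (Φs ab)) (Sum.inl (i,k')) := by
      rw [← hk']; rfl
    rw [e1, e2]
    exact hall k k'

lemma Egrid_degree (hKp : K ≤ p) (hK1 : 1 ≤ K) (Φs) (v : ZMod p × ZMod p) :
    ((Egrid K Δ p Φs).filter (fun e => v ∈ e)).card ≤ Δ := by
  have ht1 : 0 < p / K := Nat.div_pos hKp (by omega)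
  have hsub : (Egrid K Δ p Φs).filter (fun e => v ∈ e) ⊆
      univ.image (fun a : Fin Δ =>
        edg K Δ p Φs a (v.2 - slp Δ p a * v.1)
          (Sum.elim (fun ik : Fin (p/K) × Fin K => ik.1) (fun _ => (⟨0, ht1⟩ : Fin (p/K)))
            ((Φs (a, v.2 - slp Δ p a * v.1)).symm v.1))) := by
    intro e he
    rw [mem_filter] at he
    obtain ⟨x, _, hx⟩ := Finset.mem_image.mp he.1
    have hve : v ∈ edg K Δ p Φs x.1.1 x.1.2 x.2 := by rw [hx]; exact he.2
    obtain ⟨k, hk⟩ := (mem_edg K Δ p Φs x.1.1 x.1.2 x.2 v).mp hve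
    have hv1 : (Φs (x.1.1, x.1.2)) (Sum.inl (x.2, k)) = v.1 := congrArg Prod.fst hk
    have hv2 : v.2 = slp Δ p x.1.1 * v.1 + x.1.2 := edg_snd K Δ p Φs x.1.1 x.1.2 x.2 v hve
    have hb : v.2 - slp Δ p x.1.1 * v.1 = x.1.2 := by rw [hv2]; ring
    rw [Finset.mem_image]
    refine ⟨x.1.1, mem_univ _, ?_⟩
    rw [hb]
    have hsymm : (Φs (x.1.1, x.1.2)).symm v.1 = Sum.inl (x.2, k) :=
      (Equiv.symm_apply_eq _).mpr hv1.symm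
    rw [show ((x.1.1, x.1.2) : Fin Δ × ZMod p) = x.1 from rfl, hsymm]
    rw [← hx]
    rfl
  calc ((Egrid K Δ p Φs).filter (fun e => v ∈ e)).card
      ≤ (univ.image _).card := Finset.card_le_card hsub
    _ ≤ (univ : Finset (Fin Δ)).card := Finset.card_image_le
    _ = Δ := by rw [Finset.card_univ, Fintype.card_fin]

end Count

section Main

variable (q K Δ p : ℕ) [Fact p.Prime]

def slopeEquiv (q p : ℕ) (A : ZMod p) :
    (ZMod p → ZMod p → Fin q) ≃ (ZMod p × ZMod p → Fin q) where
  toFun := fun W u => W (u.2 - A * u.1) u.1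
  invFun := fun σ b z => σ (z, A * z + b)
  left_inv := by
    intro W
    funext b z
    have harg : A * z + b - A * z = b := by ring
    simp only [harg]
  right_inv := by
    intro σ
    funext u
    have harg : A * u.1 + (u.2 - A * u.1) = u.2 := by ring
    simp only [harg]

lemma slopeEquiv_wrd (q p : ℕ) [Fact p.Prime] (A : ZMod p) (W : ZMod p → ZMod p → Fin q) (b : ZMod p) :
    wrd q p (slopeEquiv q p A W) A b = W b := by
  funext z
  show W (A * z + b - A * z) z = W b z
  have harg : A * z + b - A * z = b := by ring
  rw [harg]

lemma exists_good (hq : 2 ≤ q) (hK : 2 ≤ K) (hΔ1 : 1 ≤ Δ)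
    (hthr : (K : ℝ) * (q : ℝ) ^ (K - 1) * Real.log q < Δ)
    (hKp : K ≤ p) (hΔp : Δ ≤ p)
    (hbig : (3*(q:ℝ)*Δ + Δ + 1)
      ≤ Real.sqrt p * ((Δ:ℝ) * ((q:ℝ)^(K-1))⁻¹ / K - Real.log q)) :
    ∃ Φs : Fin Δ × ZMod p → (P K (p/K) (p%K) ≃ ZMod p),
      ∀ σ : ZMod p × ZMod p → Fin q, ¬ ProperV q p (Egrid K Δ p Φs) σ := by
  have hp1 : 1 ≤ p := le_trans (by omega) hKp
  have hcardF : Fintype.card (ZMod p) = p := ZMod.card p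
  have hcardP : Fintype.card (P K (p/K) (p%K)) = p := by
    simp only [Fintype.card_sum, Fintype.card_prod, Fintype.card_fin]
    rw [mul_comm]
    exact Nat.div_add_mod p K
  have ePF : P K (p/K) (p%K) ≃ ZMod p := Fintype.equivOfCardEq (hcardP.trans hcardF.symm)
  have hcardPerm : Fintype.card (P K (p/K) (p%K) ≃ ZMod p) = p.factorial := by
    rw [Fintype.card_equiv ePF, hcardP]
  have hcardSpace : Fintype.card ((Fin Δ × ZMod p) → (P K (p/K) (p%K) ≃ ZMod p))
      = p.factorial ^ (Δ * p) := by
    rw [Fintype.card_fun, hcardPerm, Fintype.card_prod, Fintype.card_fin, hcardF]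
  by_contra hcon
  push_neg at hcon
  -- lower bound
  have hlow : (Fintype.card ((Fin Δ × ZMod p) → (P K (p/K) (p%K) ≃ ZMod p)))
      ≤ ∑ Φs : (Fin Δ × ZMod p) → (P K (p/K) (p%K) ≃ ZMod p),
          #(univ.filter (fun σ : ZMod p × ZMod p → Fin q =>
            ProperV q p (Egrid K Δ p Φs) σ)) := by
    rw [← Finset.card_univ]
    have := Finset.card_nsmul_le_sum
      (univ : Finset ((Fin Δ × ZMod p) → (P K (p/K) (p%K) ≃ ZMod p)))
      (fun Φs => #(univ.filter (fun σ : ZMod p × ZMod p → Fin q =>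
        ProperV q p (Egrid K Δ p Φs) σ))) 1 ?hge
    · simpa using this
    case hge =>
      intro Φs _
      obtain ⟨σ, hσ⟩ := hcon Φs
      rw [Nat.succ_le_iff, Finset.card_pos]
      exact ⟨σ, by simp [hσ]⟩
  -- swap
  have hswap : ∑ Φs : (Fin Δ × ZMod p) → (P K (p/K) (p%K) ≃ ZMod p),
      #(univ.filter (fun σ : ZMod p × ZMod p → Fin q => ProperV q p (Egrid K Δ p Φs) σ))
      = ∑ σ : ZMod p × ZMod p → Fin q,
          #(univ.filter (fun Φs : (Fin Δ × ZMod p) → (P K (p/K) (p%K) ≃ ZMod p) =>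
            ProperV q p (Egrid K Δ p Φs) σ)) := by
    simp_rw [Finset.card_filter]
    exact Finset.sum_comm
  -- per sigma bound
  have hB : ∀ σ : ZMod p × ZMod p → Fin q,
      #(univ.filter (fun Φs : (Fin Δ × ZMod p) → (P K (p/K) (p%K) ≃ ZMod p) =>
          ProperV q p (Egrid K Δ p Φs) σ))
      ≤ ∏ ab : Fin Δ × ZMod p, NlC q K p (wrd q p σ (slp Δ p ab.1) ab.2) := by
    intro σ
    have hsub : (univ.filter (fun Φs : (Fin Δ × ZMod p) → (P K (p/K) (p%K) ≃ ZMod p) =>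
        ProperV q p (Egrid K Δ p Φs) σ)) ⊆
        Fintype.piFinset (fun ab : Fin Δ × ZMod p =>
          univ.filter (fun φ : P K (p/K) (p%K) ≃ ZMod p =>
            NoMono q K (p/K) (p%K) (wrd q p σ (slp Δ p ab.1) ab.2 ∘ φ))) := by
      intro Φs hΦs
      rw [Fintype.mem_piFinset]
      intro ab
      rw [mem_filter]
      exact ⟨mem_univ _, proper_noMono q K Δ p Φs σ (mem_filter.mp hΦs).2 ab⟩
    calc #(univ.filter (fun Φs : (Fin Δ × ZMod p) → (P K (p/K) (p%K) ≃ ZMod p) =>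
          ProperV q p (Egrid K Δ p Φs) σ))
        ≤ #(Fintype.piFinset (fun ab : Fin Δ × ZMod p =>
            univ.filter (fun φ : P K (p/K) (p%K) ≃ ZMod p =>
              NoMono q K (p/K) (p%K) (wrd q p σ (slp Δ p ab.1) ab.2 ∘ φ)))) :=
          Finset.card_le_card hsub
      _ = ∏ ab : Fin Δ × ZMod p, NlC q K p (wrd q p σ (slp Δ p ab.1) ab.2) :=
          Fintype.card_piFinset _
  -- real-side quantities
  set B0 : ℝ := (Real.exp 1 * p)^q * (p.factorial:ℝ) * (1 - ((q:ℝ)^(K-1))⁻¹)^(p/K) with hB0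
  set Z1 : ℝ := ∑ w : ZMod p → Fin q, (NlC q K p w : ℝ)^Δ with hZ1
  have hlb : ∀ w : ZMod p → Fin q, (NlC q K p w : ℝ) ≤ B0 :=
    fun w => line_bound q K (p/K) (p%K) (by omega) (by omega) p hp1 hcardF w
  have hB0nn : 0 ≤ B0 := by
    rw [hB0]
    apply le_trans (Nat.cast_nonneg (NlC q K p (fun _ => ⟨0, by omega⟩))) (hlb _)
  have hZ1nn : 0 ≤ Z1 := by
    rw [hZ1]
    apply Finset.sum_nonneg
    intro w _
    positivity
  have hE : Z1 ≤ (q:ℝ)^p * B0^Δ := by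
    rw [hZ1]
    calc ∑ w : ZMod p → Fin q, (NlC q K p w : ℝ)^Δ
        ≤ #(univ : Finset (ZMod p → Fin q)) • B0^Δ := by
          apply Finset.sum_le_card_nsmul
          intro w _
          exact pow_le_pow_left₀ (Nat.cast_nonneg _) (hlb w) Δ
      _ = (q:ℝ)^p * B0^Δ := by
          rw [Finset.card_univ, Fintype.card_fun, hcardF, Fintype.card_fin, nsmul_eq_mul]
          push_cast
          ring
  -- per-slope factorization
  have hD : ∀ a : Fin Δ, ∑ σ : ZMod p × ZMod p → Fin q,
      ∏ b : ZMod p, (NlC q K p (wrd q p σ (slp Δ p a) b) : ℝ)^Δ = Z1 ^ p := by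
    intro a
    set A := slp Δ p a with hA
    calc ∑ σ : ZMod p × ZMod p → Fin q,
          ∏ b : ZMod p, (NlC q K p (wrd q p σ A b) : ℝ)^Δ
        = ∑ W : ZMod p → ZMod p → Fin q,
            ∏ b : ZMod p, (NlC q K p (wrd q p (slopeEquiv q p A W) A b) : ℝ)^Δ :=
          (Equiv.sum_comp (slopeEquiv q p A)
            (fun σ => ∏ b : ZMod p, (NlC q K p (wrd q p σ A b) : ℝ)^Δ)).symm
      _ = ∑ W : ZMod p → ZMod p → Fin q,
            ∏ b : ZMod p, (NlC q K p (W b) : ℝ)^Δ := by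
          apply Finset.sum_congr rfl
          intro W _
          apply Finset.prod_congr rfl
          intro b _
          rw [slopeEquiv_wrd q p A W b]
      _ = ∏ _b : ZMod p, ∑ w : ZMod p → Fin q, (NlC q K p w : ℝ)^Δ := by
          have h := Finset.prod_univ_sum (fun _ : ZMod p => (univ : Finset (ZMod p → Fin q)))
            (fun _ w => (NlC q K p w : ℝ)^Δ)
          rw [Fintype.piFinset_univ] at h
          rw [← h]
      _ = Z1 ^ p := by
          rw [Finset.prod_const, Finset.card_univ, hcardF, hZ1]
  -- combine
  have total : (∑ Φs : (Fin Δ × ZMod p) → (P K (p/K) (p%K) ≃ ZMod p),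
      (#(univ.filter (fun σ : ZMod p × ZMod p → Fin q =>
        ProperV q p (Egrid K Δ p Φs) σ)) : ℝ))
      ≤ (Δ:ℝ) * ((q:ℝ)^p * B0^Δ)^p := by
    calc (∑ Φs : (Fin Δ × ZMod p) → (P K (p/K) (p%K) ≃ ZMod p),
        (#(univ.filter (fun σ : ZMod p × ZMod p → Fin q =>
          ProperV q p (Egrid K Δ p Φs) σ)) : ℝ))
        = ∑ σ : ZMod p × ZMod p → Fin q,
            (#(univ.filter (fun Φs : (Fin Δ × ZMod p) → (P K (p/K) (p%K) ≃ ZMod p) =>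
              ProperV q p (Egrid K Δ p Φs) σ)) : ℝ) := by
          exact_mod_cast congrArg (Nat.cast : ℕ → ℝ) hswap
      _ ≤ ∑ σ : ZMod p × ZMod p → Fin q,
            (∏ ab : Fin Δ × ZMod p, (NlC q K p (wrd q p σ (slp Δ p ab.1) ab.2) : ℝ)) := by
          apply Finset.sum_le_sum
          intro σ _
          calc (#(univ.filter (fun Φs : (Fin Δ × ZMod p) → (P K (p/K) (p%K) ≃ ZMod p) =>
                ProperV q p (Egrid K Δ p Φs) σ)) : ℝ)
              ≤ ((∏ ab : Fin Δ × ZMod p, NlC q K p (wrd q p σ (slp Δ p ab.1) ab.2) : ℕ) : ℝ) := by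
                exact_mod_cast hB σ
            _ = ∏ ab : Fin Δ × ZMod p, (NlC q K p (wrd q p σ (slp Δ p ab.1) ab.2) : ℝ) := by
                push_cast
                rfl
      _ ≤ ∑ σ : ZMod p × ZMod p → Fin q, ∑ a : Fin Δ,
            ∏ b : ZMod p, (NlC q K p (wrd q p σ (slp Δ p a) b) : ℝ)^Δ := by
          apply Finset.sum_le_sum
          intro σ _
          rw [Fintype.prod_prod_type]
          have hamgm := prod_le_sum_pow Δ hΔ1
            (fun a => ∏ b : ZMod p, (NlC q K p (wrd q p σ (slp Δ p a) b) : ℝ))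
            (fun a => Finset.prod_nonneg (fun b _ => Nat.cast_nonneg _))
          apply le_trans hamgm
          apply Finset.sum_le_sum
          intro a _
          rw [← Finset.prod_pow]
      _ = ∑ a : Fin Δ, ∑ σ : ZMod p × ZMod p → Fin q,
            ∏ b : ZMod p, (NlC q K p (wrd q p σ (slp Δ p a) b) : ℝ)^Δ := Finset.sum_comm
      _ = ∑ _a : Fin Δ, Z1 ^ p := Finset.sum_congr rfl (fun a _ => hD a)
      _ = (Δ:ℝ) * Z1 ^ p := by
          rw [Finset.sum_const, Finset.card_univ, Fintype.card_fin, nsmul_eq_mul]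
      _ ≤ (Δ:ℝ) * ((q:ℝ)^p * B0^Δ)^p := by
          apply mul_le_mul_of_nonneg_left _ (Nat.cast_nonneg _)
          exact pow_le_pow_left₀ hZ1nn hE p
  -- numeric contradiction
  have hnum := num_bound q K Δ p (p/K) hq hK hΔ1 hthr hKp hΔp hp1 (Nat.div_add_mod p K) hbig
  have hcards : ((p.factorial ^ (Δ * p) : ℕ) : ℝ)
      ≤ ∑ Φs : (Fin Δ × ZMod p) → (P K (p/K) (p%K) ≃ ZMod p),
          (#(univ.filter (fun σ : ZMod p × ZMod p → Fin q =>
            ProperV q p (Egrid K Δ p Φs) σ)) : ℝ) := by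
    rw [← hcardSpace]
    exact_mod_cast hlow
  rw [hB0] at total
  have : ((p.factorial : ℝ))^(Δ*p) ≤ (Δ:ℝ) * ((q:ℝ)^p * ((Real.exp 1 * p)^q * (p.factorial:ℝ)
      * (1 - ((q:ℝ)^(K-1))⁻¹)^(p/K))^Δ)^p := by
    calc ((p.factorial : ℝ))^(Δ*p) = ((p.factorial ^ (Δ * p) : ℕ) : ℝ) := by push_cast; rfl
      _ ≤ _ := hcards.trans total
  linarith

end Main

end Stmt0Aux

open Stmt0Aux

/-- For all integers `q ≥ 2`, `K ≥ 2` and every integer `Δ > K·q^{K−1}·ln q`,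
there exists a finite `K`-uniform simple hypergraph whose maximum degree is at most `Δ`
and which admits no proper `q`-colouring. -/
theorem stmt0 (q K : ℕ) (hq : 2 ≤ q) (hK : 2 ≤ K) (Δ : ℕ)
    (hΔ : (K : ℝ) * (q : ℝ) ^ (K - 1) * Real.log q < Δ) :
    ∃ E : Finset (Finset ℕ),
      (∀ e ∈ E, e.card = K) ∧
      (∀ e₁ ∈ E, ∀ e₂ ∈ E, e₁ ≠ e₂ → (e₁ ∩ e₂).card ≤ 1) ∧
      (∀ v, hypDegree E v ≤ Δ) ∧
      ¬ ∃ σ : ℕ → Fin q, ProperColouring q E σ := by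
  -- Δ ≥ 1
  have hΔ1 : 1 ≤ Δ := by
    by_contra h
    have : Δ = 0 := by omega
    subst this
    have h1 : (0:ℝ) ≤ (K : ℝ) * (q : ℝ) ^ (K - 1) * Real.log q := by
      have : (0:ℝ) ≤ Real.log q := Real.log_nonneg (by exact_mod_cast by omega : (1:ℝ) ≤ q)
      positivity
    simp at hΔ
    linarith
  -- epsilon
  set ε : ℝ := (Δ:ℝ) * ((q:ℝ)^(K-1))⁻¹ / K - Real.log q with hε
  have hεpos : 0 < ε := by
    rw [hε]
    have h0 : (Δ:ℝ) * ((q:ℝ)^(K-1))⁻¹ / K = (Δ:ℝ) / ((K:ℝ) * (q:ℝ)^(K-1)) := by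
      field_simp
    rw [h0, sub_pos, lt_div_iff₀ (by positivity)]
    calc Real.log q * ((K:ℝ)*(q:ℝ)^(K-1)) = (K:ℝ)*(q:ℝ)^(K-1)*Real.log q := by ring
      _ < Δ := hΔ
  set C : ℝ := 3*(q:ℝ)*Δ + Δ + 1 with hC
  have hCpos : 0 < C := by rw [hC]; positivity
  obtain ⟨n₀, hn₀⟩ := exists_nat_ge ((C/ε)^2)
  obtain ⟨p, hp_ge, hp_prime⟩ := Nat.exists_infinite_primes (max (max K Δ) n₀)
  haveI : Fact p.Prime := ⟨hp_prime⟩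
  have hKp : K ≤ p := le_trans (le_trans (le_max_left _ _) (le_max_left _ _)) hp_ge
  have hΔp : Δ ≤ p := le_trans (le_trans (le_max_right _ _) (le_max_left _ _)) hp_ge
  have hn₀p : n₀ ≤ p := le_trans (le_max_right _ _) hp_ge
  have hbig : C ≤ Real.sqrt p * ε := by
    have h1 : ((C/ε)^2 : ℝ) ≤ (p:ℝ) := by
      calc ((C/ε)^2 : ℝ) ≤ (n₀:ℝ) := hn₀
        _ ≤ (p:ℝ) := by exact_mod_cast hn₀p
    have h2 : C/ε ≤ Real.sqrt p := by
      rw [show (C/ε : ℝ) = Real.sqrt ((C/ε)^2) from (Real.sqrt_sq (by positivity)).symm]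
      exact Real.sqrt_le_sqrt h1
    calc C = (C/ε) * ε := by field_simp
      _ ≤ Real.sqrt p * ε := mul_le_mul_of_nonneg_right h2 (le_of_lt hεpos)
  obtain ⟨Φs, hΦs⟩ := exists_good q K Δ p hq hK hΔ1 hΔ hKp hΔp (by rw [← hC, ← hε]; exact hbig)
  -- encoding
  have hppos : 0 < p := hp_prime.pos
  set enc : ZMod p × ZMod p → ℕ := fun u => u.1.val + p * u.2.val with henc
  have henc_inj : Function.Injective enc := by
    intro u u' h
    rw [henc] at h
    simp only at h
    have hv1 : u.1.val = u'.1.val := by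
      have h1 := congrArg (fun n => n % p) h
      simpa [Nat.add_mul_mod_self_left, Nat.mod_eq_of_lt (ZMod.val_lt u.1),
        Nat.mod_eq_of_lt (ZMod.val_lt u'.1)] using h1
    have hv2 : u.2.val = u'.2.val := by
      have h2 := congrArg (fun n => n / p) h
      simpa [Nat.add_mul_div_left _ _ hppos, Nat.div_eq_of_lt (ZMod.val_lt u.1),
        Nat.div_eq_of_lt (ZMod.val_lt u'.1)] using h2
    have e1 : u.1 = u'.1 := ZMod.val_injective p hv1
    have e2 : u.2 = u'.2 := ZMod.val_injective p hv2
    exact Prod.ext e1 e2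
  refine ⟨(Egrid K Δ p Φs).image (fun e => e.image enc), ?_, ?_, ?_, ?_⟩
  · -- cardinality
    intro e' he'
    obtain ⟨e, he, rfl⟩ := Finset.mem_image.mp he'
    obtain ⟨x, _, hx⟩ := Finset.mem_image.mp he
    rw [Finset.card_image_of_injective _ henc_inj, ← hx]
    exact edg_card K Δ p Φs x.1.1 x.1.2 x.2
  · -- linearity
    intro e₁' he₁' e₂' he₂' hne
    obtain ⟨e₁, he₁, rfl⟩ := Finset.mem_image.mp he₁'
    obtain ⟨e₂, he₂, rfl⟩ := Finset.mem_image.mp he₂'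
    have hee : e₁ ≠ e₂ := fun h => hne (by rw [h])
    rw [← Finset.image_inter _ _ henc_inj, Finset.card_image_of_injective _ henc_inj]
    obtain ⟨x₁, _, hx₁⟩ := Finset.mem_image.mp he₁
    obtain ⟨x₂, _, hx₂⟩ := Finset.mem_image.mp he₂
    rw [← hx₁, ← hx₂]
    apply edg_inter K Δ p hΔp Φs
    rw [hx₁, hx₂]
    exact hee
  · -- degree
    intro v
    unfold hypDegree
    by_cases hv : ∃ u : ZMod p × ZMod p, enc u = v
    · obtain ⟨u, rfl⟩ := hv
      have hsub : ((Egrid K Δ p Φs).image (fun e => e.image enc)).filter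
          (fun e => enc u ∈ e)
          ⊆ ((Egrid K Δ p Φs).filter (fun e => u ∈ e)).image (fun e => e.image enc) := by
        intro e' he'
        rw [Finset.mem_filter] at he'
        obtain ⟨e, he, rfl⟩ := Finset.mem_image.mp he'.1
        apply Finset.mem_image_of_mem
        rw [Finset.mem_filter]
        refine ⟨he, ?_⟩
        obtain ⟨w, hw, hwe⟩ := Finset.mem_image.mp he'.2
        rwa [henc_inj hwe] at hw
      calc (((Egrid K Δ p Φs).image (fun e => e.image enc)).filter
            (fun e => enc u ∈ e)).card
          ≤ (((Egrid K Δ p Φs).filter (fun e => u ∈ e)).image (fun e => e.image enc)).card :=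
            Finset.card_le_card hsub
        _ ≤ ((Egrid K Δ p Φs).filter (fun e => u ∈ e)).card := Finset.card_image_le
        _ ≤ Δ := Egrid_degree K Δ p hKp (by omega) Φs u
    · have : ((Egrid K Δ p Φs).image (fun e => e.image enc)).filter (fun e => v ∈ e) = ∅ := by
        rw [Finset.filter_eq_empty_iff]
        intro e' he'
        obtain ⟨e, _, rfl⟩ := Finset.mem_image.mp he'
        intro hvmem
        obtain ⟨w, _, hwe⟩ := Finset.mem_image.mp hvmem
        exact hv ⟨w, hwe⟩
      rw [this]
      simp
  · -- no proper colouring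
    rintro ⟨σ, hσ⟩
    apply hΦs (σ ∘ enc)
    unfold ProperV
    intro e he hall
    apply hσ (e.image enc) (Finset.mem_image_of_mem _ he)
    intro m hm m' hm'
    obtain ⟨u, hu, rfl⟩ := Finset.mem_image.mp hm
    obtain ⟨u', hu', rfl⟩ := Finset.mem_image.mp hm'
    exact hall u hu u' hu'
end

section
/- Let q ≥ 2, k ≥ 2 and Δ ≥ 1 be integers, set t := (q^k − q)^{1/Δ}, and let B be the (q+1)×(q+1) real matrix indexed by {0,1,…,q} with B_{00} = t², B_{0j} = B_{j0} = t for all j ∈ {1,…,q}, B_{ii} = 0 for i ∈ {1,…,q}, and B_{ij} = 1 for distinct i, j ∈ {1,…,q}. Let G = (V, E) be a finite Δ-regular simple graph, and let H_G be the 2k-uniform hypergraph on vertex set V × {1,…,k} whose hyperedges are the sets ({u} ∪ {v}) × {1,…,k} for each edge {u, v} ∈ E. Then Σ_{σ : V → {0,1,…,q}} Π_{{u,v} ∈ E} B_{σ(u)σ(v)} equals the number of maps τ : V × {1,…,k} → {1,…,q} such that no hyperedge of H_G is monochromatic under τ. -/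
set_option linter.unnecessarySeqFocus false

open scoped BigOperators

/-- The interaction matrix `B` on spins `{0,1,…,q}`: `B_{00} = t²`, `B_{0j} = B_{j0} = t`
for `j ≠ 0`, `B_{ii} = 0` for `i ≠ 0`, and `B_{ij} = 1` for distinct nonzero `i, j`. -/
noncomputable def Bmat (q : ℕ) (t : ℝ) (i j : Fin (q + 1)) : ℝ :=
  if i = 0 ∧ j = 0 then t ^ 2
  else if i = 0 ∨ j = 0 then t
  else if i = j then 0 else 1

lemma Bmat_symm (q : ℕ) (t : ℝ) (i j : Fin (q + 1)) : Bmat q t i j = Bmat q t j i := by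
  unfold Bmat
  by_cases hi : i = 0 <;> by_cases hj : j = 0 <;> by_cases hij : i = j <;>
    simp_all <;> simp [eq_comm, hij]

/-- The weight of an unordered edge under an assignment `σ`, well-defined since `B` is
symmetric. -/
noncomputable def edgeWeight (q : ℕ) (t : ℝ) {V : Type*} (σ : V → Fin (q + 1)) :
    Sym2 V → ℝ :=
  Sym2.lift ⟨fun u v => Bmat q t (σ u) (σ v), fun u v => Bmat_symm q t (σ u) (σ v)⟩


open Finset
open Finset

noncomputable def trc (q k : ℕ) (c : Fin k → Fin q) : Fin (q + 1) :=
  if h : ∃ j : Fin q, ∀ i, c i = j then h.choose.succ else 0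

lemma trc_eq_zero {q k : ℕ} (c : Fin k → Fin q) :
    trc q k c = 0 ↔ ¬ ∃ j : Fin q, ∀ i, c i = j := by
  unfold trc
  split
  · rename_i h
    simp only [h, not_true_eq_false, iff_false]
    exact Fin.succ_ne_zero _
  · rename_i h; simp [h]

lemma trc_eq_succ {q k : ℕ} (hk : k ≠ 0) (c : Fin k → Fin q) (j : Fin q) :
    trc q k c = j.succ ↔ ∀ i, c i = j := by
  have i0 : Fin k := ⟨0, Nat.pos_of_ne_zero hk⟩
  unfold trc
  split
  · rename_i h
    constructor
    · intro he i
      have hc := h.choose_spec i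
      rwa [Fin.succ_inj.mp he] at hc
    · intro hc
      have := (h.choose_spec i0).symm.trans (hc i0)
      rw [this]
  · rename_i h
    constructor
    · intro he; exact absurd he.symm (Fin.succ_ne_zero _)
    · intro hc; exact absurd ⟨j, hc⟩ h

lemma card_trc_succ {q k : ℕ} (hk : k ≠ 0) (j : Fin q) :
    (univ.filter fun c : Fin k → Fin q => trc q k c = j.succ).card = 1 := by
  rw [Finset.card_eq_one]
  refine ⟨fun _ => j, ?_⟩
  ext c
  simp [trc_eq_succ hk, funext_iff]

lemma card_trc_zero {q k : ℕ} (hk : k ≠ 0) :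
    (univ.filter fun c : Fin k → Fin q => trc q k c = 0).card = q ^ k - q := by
  classical
  have hsplit := Finset.card_filter_add_card_filter_not
    (s := (univ : Finset (Fin k → Fin q))) (p := fun c => trc q k c = 0)
  have huniv : (univ : Finset (Fin k → Fin q)).card = q ^ k := by
    simp [Fintype.card_fun]
  have hne : (univ.filter fun c : Fin k → Fin q => ¬ trc q k c = 0).card = q := by
    have himg : (univ.filter fun c : Fin k → Fin q => ¬ trc q k c = 0)
        = univ.image (fun j : Fin q => (fun _ => j : Fin k → Fin q)) := by
      ext c
      simp only [mem_filter, mem_univ, true_and, mem_image]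
      constructor
      · intro h
        obtain ⟨j, hj⟩ := not_not.mp (fun hne => h ((trc_eq_zero c).mpr hne))
        exact ⟨j, (funext hj).symm⟩
      · rintro ⟨j, rfl⟩ h0
        exact (trc_eq_zero _).mp h0 ⟨j, fun _ => rfl⟩
    rw [himg, Finset.card_image_of_injective _ ?_, card_univ, Fintype.card_fin]
    intro a b hab
    exact congrFun hab ⟨0, Nat.pos_of_ne_zero hk⟩
  omega
noncomputable def cnt (q k : ℕ) (x : Fin (q + 1)) : ℕ := if x = 0 then q ^ k - q else 1

lemma card_cluster {q k : ℕ} (hk : k ≠ 0) (x : Fin (q + 1)) :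
    (univ.filter fun c : Fin k → Fin q => trc q k c = x).card = cnt q k x := by
  rcases Fin.eq_zero_or_eq_succ x with rfl | ⟨j, rfl⟩
  · rw [card_trc_zero hk]; rfl
  · rw [card_trc_succ hk j]
    simp [cnt, Fin.succ_ne_zero]

lemma card_fiber {q k : ℕ} {V : Type*} [Fintype V] [DecidableEq V] (hk : k ≠ 0)
    (σ : V → Fin (q + 1)) :
    (univ.filter fun τ : V × Fin k → Fin q =>
        ∀ v, trc q k (fun i => τ (v, i)) = σ v).card = ∏ v, cnt q k (σ v) := by
  classical
  rw [← Fintype.card_subtype]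
  have e1 : {τ : V × Fin k → Fin q // ∀ v, trc q k (fun i => τ (v, i)) = σ v}
      ≃ ∀ v : V, {c : Fin k → Fin q // trc q k c = σ v} :=
    (Equiv.subtypeEquiv (Equiv.curry V (Fin k) (Fin q))
        (q := fun f => ∀ v, trc q k (f v) = σ v) (fun τ => Iff.rfl)).trans
      (Equiv.subtypePiEquivPi (p := fun v c => trc q k c = σ v))
  rw [Fintype.card_congr e1, Fintype.card_pi]
  exact Finset.prod_congr rfl fun v _ => by rw [Fintype.card_subtype, card_cluster hk]

lemma prod_edge {V : Type*} [Fintype V] [DecidableEq V] (G : SimpleGraph V)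
    [DecidableRel G.Adj] (f : V → ℝ) :
    ∏ e ∈ G.edgeFinset,
        Sym2.lift ⟨fun u v => f u * f v, fun u v => mul_comm _ _⟩ e
      = ∏ v, f v ^ G.degree v := by
  have h1 : ∏ d : G.Dart, f d.fst
      = ∏ e ∈ G.edgeFinset,
          Sym2.lift ⟨fun u v => f u * f v, fun u v => mul_comm _ _⟩ e := by
    rw [← Finset.prod_fiberwise_of_maps_to (g := fun d : G.Dart => d.edge)
      (t := G.edgeFinset) (fun d _ => by simp [SimpleGraph.Dart.edge_mem])]
    refine Finset.prod_congr rfl fun e he => ?_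
    rw [SimpleGraph.mem_edgeFinset] at he
    induction' e with u v
    set d : G.Dart := ⟨(u, v), he⟩ with hd
    have hfib : (univ.filter fun d' : G.Dart => d'.edge = s(u, v)) = {d, d.symm} := by
      have := d.edge_fiber
      convert this using 2
      exact Iff.rfl
    rw [hfib, Finset.prod_pair d.symm_ne.symm]
    simp [Sym2.lift_mk, hd]
  have h2 : ∏ d : G.Dart, f d.fst = ∏ v, f v ^ G.degree v := by
    rw [← Finset.prod_fiberwise_of_maps_to (g := fun d : G.Dart => d.fst)
      (t := (univ : Finset V)) (fun d _ => mem_univ _)]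
    refine Finset.prod_congr rfl fun v _ => ?_
    have hc : ∀ d ∈ univ.filter (fun d : G.Dart => d.fst = v), f d.fst = f v := by
      intro d hd; rw [mem_filter] at hd; rw [hd.2]
    rw [Finset.prod_congr rfl hc, Finset.prod_const, G.dart_fst_fiber_card_eq_degree v]
  rw [← h1, h2]

/-- The partition function `Z_B(G)` of the spin system with interaction matrix `B` on a
`Δ`-regular graph `G` equals the number of proper `q`-colourings of the `2k`-uniform
hypergraph `H_G` obtained by replacing each vertex by a cluster of `k` vertices and each
edge `{u,v}` by the hyperedge `({u} ∪ {v}) × {1,…,k}`. -/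
theorem stmt3 (q k Δ : ℕ) (hq : 2 ≤ q) (hk : 2 ≤ k) (hΔ : 1 ≤ Δ)
    (t : ℝ) (ht : t = ((q : ℝ) ^ k - q) ^ (1 / (Δ : ℝ)))
    (V : Type*) [Fintype V] [DecidableEq V]
    (G : SimpleGraph V) [DecidableRel G.Adj]
    (hreg : ∀ v : V, G.degree v = Δ) :
    ∑ σ : V → Fin (q + 1), ∏ e ∈ G.edgeFinset, edgeWeight q t σ e
      = (Nat.card {τ : V × Fin k → Fin q //
          ∀ e ∈ G.edgeFinset, ¬ ∀ w ∈ e, ∀ w' ∈ e, ∀ i i' : Fin k,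
            τ (w, i) = τ (w', i')} : ℝ) := by
  classical
  have hk0 : k ≠ 0 := by omega
  have i0 : Fin k := ⟨0, by omega⟩
  have hqk : q ≤ q ^ k := Nat.le_self_pow hk0 q
  have hbase : (0:ℝ) ≤ (q:ℝ) ^ k - q := by
    have : ((q:ℕ):ℝ) ≤ ((q ^ k : ℕ):ℝ) := Nat.cast_le.mpr hqk
    push_cast at this
    linarith
  have htΔ : t ^ Δ = (q:ℝ) ^ k - q := by
    rw [ht, ← Real.rpow_natCast (((q:ℝ) ^ k - q) ^ (1 / (Δ:ℝ))) Δ,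
      ← Real.rpow_mul hbase, one_div_mul_cancel (by positivity), Real.rpow_one]
  have hqk_cast : ((q ^ k - q : ℕ) : ℝ) = (q:ℝ) ^ k - q := by
    rw [Nat.cast_sub hqk]
    push_cast
    ring
  set P : (V × Fin k → Fin q) → Prop := fun τ =>
    ∀ e ∈ G.edgeFinset, ¬ ∀ w ∈ e, ∀ w' ∈ e, ∀ i i' : Fin k,
      τ (w, i) = τ (w', i') with hP
  set T : (V × Fin k → Fin q) → (V → Fin (q + 1)) := fun τ v =>
    trc q k (fun i => τ (v, i)) with hT
  rw [Nat.card_eq_fintype_card, Fintype.card_subtype,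
    Finset.card_eq_sum_card_fiberwise (f := T) (t := (univ : Finset (V → Fin (q + 1))))
      (fun τ _ => mem_univ _), Nat.cast_sum]
  refine Finset.sum_congr rfl fun σ _ => ?_
  rw [Finset.filter_filter]
  by_cases hbad : ∃ e ∈ G.edgeFinset, ∃ j : Fin q, ∀ w ∈ e, σ w = j.succ
  · -- a monochromatic-forcing edge exists: both sides are zero
    obtain ⟨e0, he0, j, hj⟩ := hbad
    have hzero : edgeWeight q t σ e0 = 0 := by
      revert he0 hj
      induction e0 using Sym2.ind with
      | _ u v =>
        intro he0 hj
        have hu : σ u = j.succ := hj u (Sym2.mem_mk_left u v)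
        have hv : σ v = j.succ := hj v (Sym2.mem_mk_right u v)
        show Bmat q t (σ u) (σ v) = 0
        rw [hu, hv]
        simp [Bmat, Fin.succ_ne_zero]
    have hempty : (univ.filter fun τ => P τ ∧ T τ = σ) = ∅ := by
      rw [Finset.filter_eq_empty_iff]
      rintro τ - ⟨hPτ, hTτ⟩
      apply hPτ e0 he0
      have hall : ∀ w ∈ e0, ∀ i : Fin k, τ (w, i) = j := by
        intro w hw i
        have h1 : trc q k (fun i => τ (w, i)) = σ w := congrFun hTτ w
        rw [hj w hw] at h1
        exact (trc_eq_succ hk0 _ j).mp h1 i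
      intro w hw w' hw' i i'
      rw [hall w hw i, hall w' hw' i']
    rw [Finset.prod_eq_zero he0 hzero, hempty]
    simp
  · -- no such edge: every τ in the fiber is proper
    have hPiff : ∀ τ, (∀ v, trc q k (fun i => τ (v, i)) = σ v) → P τ := by
      intro τ hTτ e
      induction e using Sym2.ind with
      | _ u v =>
        intro he hmono
        set j := τ (u, i0) with hjdef
        have hjj : ∀ w ∈ s(u, v), ∀ i : Fin k, τ (w, i) = j := fun w hw i =>
          hmono w hw u (Sym2.mem_mk_left u v) i i0
        refine hbad ⟨s(u, v), he, j, fun w hw => ?_⟩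
        rw [← hTτ w]
        exact (trc_eq_succ hk0 _ j).mpr (hjj w hw)
    have hfe : (univ.filter fun τ => P τ ∧ T τ = σ)
        = univ.filter fun τ => ∀ v, trc q k (fun i => τ (v, i)) = σ v := by
      refine Finset.filter_congr fun τ _ => ?_
      constructor
      · rintro ⟨-, h2⟩
        exact fun v => congrFun h2 v
      · intro h
        exact ⟨hPiff τ h, funext h⟩
    rw [hfe, card_fiber hk0 σ, Nat.cast_prod]
    set f : V → ℝ := fun w => if σ w = 0 then t else 1 with hf
    have hEW : ∀ e ∈ G.edgeFinset, edgeWeight q t σ e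
        = Sym2.lift ⟨fun u v => f u * f v, fun u v => mul_comm _ _⟩ e := by
      intro e
      induction e using Sym2.ind with
      | _ u v =>
        intro he
        have hnb : ¬ (σ u = σ v ∧ σ u ≠ 0) := by
          rintro ⟨h1, h2⟩
          rcases Fin.eq_zero_or_eq_succ (σ u) with h0 | ⟨j, hj⟩
          · exact h2 h0
          · refine hbad ⟨s(u, v), he, j, fun w hw => ?_⟩
            rcases Sym2.mem_iff.mp hw with rfl | rfl
            · exact hj
            · rw [← h1]; exact hj
        show Bmat q t (σ u) (σ v) = f u * f v
        by_cases hu : σ u = 0 <;> by_cases hv : σ v = 0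
        · simp [Bmat, hu, hv, hf, sq]
        · simp [Bmat, hu, hv, hf]
        · simp [Bmat, hu, hv, hf]
        · have hne : σ u ≠ σ v := fun h => hnb ⟨h, hu⟩
          simp [Bmat, hu, hv, hne, hf]
    rw [Finset.prod_congr rfl hEW, prod_edge G f]
    refine Finset.prod_congr rfl fun v _ => ?_
    rw [hreg v]
    by_cases h0 : σ v = 0
    · simp only [h0, cnt, if_true, hqk_cast, ← htΔ, if_pos, hf]
    · simp [h0, cnt, hf]
end

section
/- Let q ≥ 2, k ≥ 2 and d ≥ 2 be integers and t := (q^k − q)^{1/(d+1)}. Suppose R_0, R_1, …, R_q, C_0, C_1, …, C_q are positive reals for which there exist positive constants A and B such that R_0 = A·t^d·(t·C_0 + Σ_{j=1}^q C_j)^d, R_i = A·(t·C_0 + Σ_{j∈{1,…,q}, j≠i} C_j)^d for each i ∈ {1,…,q}, C_0 = B·t^d·(t·R_0 + Σ_{i=1}^q R_i)^d, and C_j = B·(t·R_0 + Σ_{i∈{1,…,q}, i≠j} R_i)^d for each j ∈ {1,…,q}. Then the set of distinct values among {R_1, …, R_q} has at most 3 elements, and likewise the set of distinct values among {C_1, …,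 C_q} has at most 3 elements. -/
open scoped BigOperators

set_option maxHeartbeats 1000000 in
private lemma key_card (A B s S : ℝ) (d : ℕ) (hA : 0 < A) (hB : 0 < B) (hd : 2 ≤ d)
    (T : Finset ℝ)
    (hT : ∀ x ∈ T, A * (s - B * (S - x) ^ d) ^ d = x ∧ x < S ∧
      0 < s - B * (S - x) ^ d) :
    T.card ≤ 3 := by
  by_contra hcard
  push_neg at hcard
  obtain ⟨T', hsub, hT4⟩ := Finset.exists_subset_card_eq (show 4 ≤ T.card by omega)
  set e := T'.orderIsoOfFin hT4 with he
  set x : Fin 4 → ℝ := fun i => (e i : ℝ) with hxdef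
  have hxT : ∀ i, x i ∈ T := fun i => hsub (e i).2
  have hxmono : ∀ i j : Fin 4, i < j → x i < x j := fun i j hij =>
    Subtype.coe_lt_coe.mpr (e.strictMono hij)
  -- basic facts about the four fixed points
  have hfix : ∀ i, A * (s - B * (S - x i) ^ d) ^ d = x i := fun i => (hT _ (hxT i)).1
  have hxS : ∀ i, x i < S := fun i => (hT _ (hxT i)).2.1
  have hgpos0 : 0 < s - B * (S - x 0) ^ d := (hT _ (hxT 0)).2.2
  -- monotonicity of g on (-∞, S]
  have hgmono : ∀ u v : ℝ, u ≤ v → v ≤ S →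
      s - B * (S - u) ^ d ≤ s - B * (S - v) ^ d := by
    intro u v huv hvS
    have h1 : (S - v) ^ d ≤ (S - u) ^ d :=
      pow_le_pow_left₀ (by linarith) (by linarith) d
    nlinarith
  have hd1 : (1 : ℝ) ≤ (d : ℝ) := by exact_mod_cast Nat.one_le_of_lt hd
  have hdR : ((d : ℝ) - 1) ≠ 0 := by
    have : (2 : ℝ) ≤ (d : ℝ) := by exact_mod_cast hd
    linarith
  -- the map whose zeros are the fixed points
  set kf : ℝ → ℝ := fun z => A * (s - B * (S - z) ^ d) ^ d - z with hkf
  have hkc : Continuous kf := by fun_prop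
  have hder : ∀ y : ℝ, HasDerivAt kf
      (A * B * (d : ℝ) ^ 2 * ((s - B * (S - y) ^ d) * (S - y)) ^ (d - 1) - 1) y := by
    intro y
    have h1 : HasDerivAt (fun z : ℝ => S - z) (-1) y := by
      simpa using (hasDerivAt_id y).const_sub S
    have h2 := h1.pow d
    have h3 := (h2.const_mul B).const_sub s
    have h4 := (h3.pow d).const_mul A
    have h5 := h4.sub (hasDerivAt_id y)
    convert h5 using 1
    · rfl
    · rfl
    · rfl
    simp only [mul_pow, Pi.pow_apply]
    push_cast
    ring
  have hroot : ∀ i : Fin 4, kf (x i) = 0 := fun i => by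
    have := hfix i; simp only [hkf]; linarith
  -- Rolle between consecutive fixed points
  have rolle : ∀ i j : Fin 4, i < j →
      ∃ ξ ∈ Set.Ioo (x i) (x j),
        A * B * (d : ℝ) ^ 2 * ((s - B * (S - ξ) ^ d) * (S - ξ)) ^ (d - 1) - 1 = 0 := by
    intro i j hij
    obtain ⟨ξ, hmem, hz⟩ := exists_deriv_eq_zero (hxmono i j hij) hkc.continuousOn
      (by rw [hroot i, hroot j])
    refine ⟨ξ, hmem, ?_⟩
    rw [← (hder ξ).deriv]
    exact hz
  obtain ⟨ξ₁, hξ₁, hz₁⟩ := rolle 0 1 (by decide)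
  obtain ⟨ξ₂, hξ₂, hz₂⟩ := rolle 1 2 (by decide)
  obtain ⟨ξ₃, hξ₃, hz₃⟩ := rolle 2 3 (by decide)
  have hx01 : x 0 < x 1 := hxmono 0 1 (by decide)
  have hx12 : x 1 < x 2 := hxmono 1 2 (by decide)
  have hx23 : x 2 < x 3 := hxmono 2 3 (by decide)
  -- all critical points lie in (x 0, x 3)
  have hmemI : ∀ ξ : ℝ, x 0 < ξ → ξ < x 3 →
      0 < s - B * (S - ξ) ^ d ∧ 0 < S - ξ := by
    intro ξ h1 h2
    have hS3 := hxS 3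
    constructor
    · have := hgmono (x 0) ξ h1.le (by linarith)
      linarith
    · linarith
  set c0 : ℝ := -Real.log (A * B * (d : ℝ) ^ 2) / ((d : ℝ) - 1) with hc0
  have hcrit : ∀ ξ : ℝ, x 0 < ξ → ξ < x 3 →
      A * B * (d : ℝ) ^ 2 * ((s - B * (S - ξ) ^ d) * (S - ξ)) ^ (d - 1) - 1 = 0 →
      Real.log (s - B * (S - ξ) ^ d) + Real.log (S - ξ) = c0 := by
    intro ξ h1 h2 heq
    obtain ⟨hg, hSξ⟩ := hmemI ξ h1 h2
    set u : ℝ := (s - B * (S - ξ) ^ d) * (S - ξ) with hu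
    have hupos : 0 < u := mul_pos hg hSξ
    have hABd : 0 < A * B * (d : ℝ) ^ 2 := by positivity
    have heq' : A * B * (d : ℝ) ^ 2 * u ^ (d - 1) = 1 := by linarith
    have hlog := congrArg Real.log heq'
    rw [Real.log_mul (ne_of_gt hABd) (pow_ne_zero _ (ne_of_gt hupos)),
      Real.log_pow, Real.log_one] at hlog
    have hcast : ((d - 1 : ℕ) : ℝ) = (d : ℝ) - 1 := by
      have : 1 ≤ d := by omega
      push_cast [this]; ring
    rw [hcast] at hlog
    have hlu : Real.log u = c0 := by
      rw [hc0]; field_simp; linarith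
    rw [← Real.log_mul (ne_of_gt hg) (ne_of_gt hSξ)]
    exact hlu
  have hv₁ := hcrit ξ₁ hξ₁.1 (by linarith [hξ₁.2]) hz₁
  have hv₂ := hcrit ξ₂ (by linarith [hξ₂.1]) (by linarith [hξ₂.2]) hz₂
  have hv₃ := hcrit ξ₃ (by linarith [hξ₃.1]) hξ₃.2 hz₃
  have h12 : ξ₁ < ξ₂ := by linarith [hξ₁.2, hξ₂.1]
  have h23 : ξ₂ < ξ₃ := by linarith [hξ₂.2, hξ₃.1]
  -- weights
  set pa : ℝ := (ξ₃ - ξ₂) / (ξ₃ - ξ₁) with hpa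
  set pb : ℝ := (ξ₂ - ξ₁) / (ξ₃ - ξ₁) with hpb
  have h13 : ξ₁ < ξ₃ := lt_trans h12 h23
  have hpa0 : 0 < pa := div_pos (by linarith) (by linarith)
  have hpb0 : 0 < pb := div_pos (by linarith) (by linarith)
  have h31 : ξ₃ - ξ₁ ≠ 0 := by intro h; linarith
  have hpab : pa + pb = 1 := by
    rw [hpa, hpb, ← add_div, show ξ₃ - ξ₂ + (ξ₂ - ξ₁) = ξ₃ - ξ₁ by ring,
      div_self h31]
  have hcomb : pa * ξ₁ + pb * ξ₃ = ξ₂ := by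
    rw [hpa, hpb]
    field_simp
    ring
  -- positivity of factors at ξ₁, ξ₂, ξ₃
  obtain ⟨hg₁, hS₁⟩ := hmemI ξ₁ hξ₁.1 (by linarith [hξ₁.2])
  obtain ⟨hg₂, hS₂⟩ := hmemI ξ₂ (by linarith [hξ₂.1]) (by linarith [hξ₂.2])
  obtain ⟨hg₃, hS₃⟩ := hmemI ξ₃ (by linarith [hξ₃.1]) hξ₃.2
  -- convexity of (S - ·)^d on the nonnegative part
  have hconv : (S - ξ₂) ^ d ≤ pa * (S - ξ₁) ^ d + pb * (S - ξ₃) ^ d := by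
    have hmem1 : (S - ξ₁) ∈ Set.Ici (0 : ℝ) := Set.mem_Ici.mpr hS₁.le
    have hmem3 : (S - ξ₃) ∈ Set.Ici (0 : ℝ) := Set.mem_Ici.mpr hS₃.le
    have := (convexOn_pow d).2 hmem1 hmem3 hpa0.le hpb0.le hpab
    simp only [smul_eq_mul] at this
    have harg : pa * (S - ξ₁) + pb * (S - ξ₃) = S - ξ₂ := by
      linear_combination S * hpab - hcomb
    rw [harg] at this
    exact this
  -- concavity step for g
  have hgconc : pa * (s - B * (S - ξ₁) ^ d) + pb * (s - B * (S - ξ₃) ^ d)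
      ≤ s - B * (S - ξ₂) ^ d := by
    have hkey : pa * (s - B * (S - ξ₁) ^ d) + pb * (s - B * (S - ξ₃) ^ d)
        = s - B * (pa * (S - ξ₁) ^ d + pb * (S - ξ₃) ^ d) := by
      linear_combination s * hpab
    have h2 := mul_le_mul_of_nonneg_left hconv hB.le
    rw [hkey]
    linarith
  have hcombo_pos : 0 < pa * (s - B * (S - ξ₁) ^ d) + pb * (s - B * (S - ξ₃) ^ d) := by
    positivity
  -- log concavity (non-strict) for the g-part
  have hlogg : pa * Real.log (s - B * (S - ξ₁) ^ d) + pb * Real.log (s - B * (S - ξ₃) ^ d)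
      ≤ Real.log (s - B * (S - ξ₂) ^ d) := by
    have h1 := strictConcaveOn_log_Ioi.concaveOn.2 (Set.mem_Ioi.mpr hg₁)
      (Set.mem_Ioi.mpr hg₃) hpa0.le hpb0.le hpab
    simp only [smul_eq_mul] at h1
    calc pa * Real.log (s - B * (S - ξ₁) ^ d) + pb * Real.log (s - B * (S - ξ₃) ^ d)
        ≤ Real.log (pa * (s - B * (S - ξ₁) ^ d) + pb * (s - B * (S - ξ₃) ^ d)) := h1
      _ ≤ Real.log (s - B * (S - ξ₂) ^ d) := Real.log_le_log hcombo_pos hgconc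
  -- strict log concavity for the (S - ·)-part
  have hlogS : pa * Real.log (S - ξ₁) + pb * Real.log (S - ξ₃) < Real.log (S - ξ₂) := by
    have hne : (S - ξ₁) ≠ (S - ξ₃) := by intro h; apply absurd h; intro h'; linarith
    have h1 := strictConcaveOn_log_Ioi.2 (Set.mem_Ioi.mpr hS₁) (Set.mem_Ioi.mpr hS₃)
      hne hpa0 hpb0 hpab
    simp only [smul_eq_mul] at h1
    have harg : pa * (S - ξ₁) + pb * (S - ξ₃) = S - ξ₂ := by
      linear_combination S * hpab - hcomb
    rw [harg] at h1
    exact h1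
  -- contradiction
  have hfinal : pa * c0 + pb * c0 <
      Real.log (s - B * (S - ξ₂) ^ d) + Real.log (S - ξ₂) := by
    calc pa * c0 + pb * c0
        = pa * (Real.log (s - B * (S - ξ₁) ^ d) + Real.log (S - ξ₁))
          + pb * (Real.log (s - B * (S - ξ₃) ^ d) + Real.log (S - ξ₃)) := by
          rw [hv₁, hv₃]
      _ = (pa * Real.log (s - B * (S - ξ₁) ^ d) + pb * Real.log (s - B * (S - ξ₃) ^ d))
          + (pa * Real.log (S - ξ₁) + pb * Real.log (S - ξ₃)) := by ring
      _ < Real.log (s - B * (S - ξ₂) ^ d) + Real.log (S - ξ₂) := by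
          exact add_lt_add_of_le_of_lt hlogg hlogS
  rw [hv₂] at hfinal
  have : pa * c0 + pb * c0 = c0 := by rw [← add_mul, hpab, one_mul]
  linarith

/-- If positive reals `R_0,…,R_q, C_0,…,C_q` satisfy the tree recursion (fixpoint equations)
for the `(q+1)`-spin system with `t = (q^k − q)^{1/(d+1)}`, then the values `R_1,…,R_q`
take at most `3` distinct values, and likewise for `C_1,…,C_q`. -/
theorem stmt4 (q k d : ℕ) (hq : 2 ≤ q) (hk : 2 ≤ k) (hd : 2 ≤ d)
    (t : ℝ) (ht : t = ((q : ℝ) ^ k - q) ^ (1 / ((d : ℝ) + 1)))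
    (R C : ℕ → ℝ) (A B : ℝ) (hA : 0 < A) (hB : 0 < B)
    (hRpos : ∀ i ≤ q, 0 < R i) (hCpos : ∀ i ≤ q, 0 < C i)
    (hR0 : R 0 = A * t ^ d * (t * C 0 + ∑ j ∈ Finset.Icc 1 q, C j) ^ d)
    (hRi : ∀ i ∈ Finset.Icc 1 q,
      R i = A * (t * C 0 + ∑ j ∈ (Finset.Icc 1 q).erase i, C j) ^ d)
    (hC0 : C 0 = B * t ^ d * (t * R 0 + ∑ i ∈ Finset.Icc 1 q, R i) ^ d)
    (hCj : ∀ j ∈ Finset.Icc 1 q,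
      C j = B * (t * R 0 + ∑ i ∈ (Finset.Icc 1 q).erase j, R i) ^ d) :
    ((Finset.Icc 1 q).image R).card ≤ 3 ∧ ((Finset.Icc 1 q).image C).card ≤ 3 := by
  have hq2 : (2 : ℝ) ≤ (q : ℝ) := by exact_mod_cast hq
  have ht0 : 0 < t := by
    rw [ht]
    apply Real.rpow_pos_of_pos
    have h1 : (q : ℝ) ^ 2 ≤ (q : ℝ) ^ k := pow_le_pow_right₀ (by linarith) hk
    nlinarith
  set Sv : ℝ := t * R 0 + ∑ i ∈ Finset.Icc 1 q, R i with hSv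
  set sv : ℝ := t * C 0 + ∑ j ∈ Finset.Icc 1 q, C j with hsv
  have hRpos' : ∀ i ∈ Finset.Icc 1 q, 0 < R i :=
    fun i hi => hRpos i (Finset.mem_Icc.mp hi).2
  have hCpos' : ∀ i ∈ Finset.Icc 1 q, 0 < C i :=
    fun i hi => hCpos i (Finset.mem_Icc.mp hi).2
  have hR0pos : 0 < R 0 := hRpos 0 (by omega)
  have hC0pos : 0 < C 0 := hCpos 0 (by omega)
  have hCe : ∀ i ∈ Finset.Icc 1 q, C i = B * (Sv - R i) ^ d := by
    intro i hi
    rw [hCj i hi]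
    congr 1
    rw [Finset.sum_erase_eq_sub hi, hSv]
    ring
  have hRe : ∀ i ∈ Finset.Icc 1 q, R i = A * (sv - C i) ^ d := by
    intro i hi
    rw [hRi i hi]
    congr 1
    rw [Finset.sum_erase_eq_sub hi, hsv]
    ring
  have hTprop : ∀ x ∈ (Finset.Icc 1 q).image R,
      A * (sv - B * (Sv - x) ^ d) ^ d = x ∧ x < Sv ∧ 0 < sv - B * (Sv - x) ^ d := by
    intro x hx
    obtain ⟨i, hi, rfl⟩ := Finset.mem_image.mp hx
    have hle : R i ≤ ∑ j ∈ Finset.Icc 1 q, R j :=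
      Finset.single_le_sum (fun j hj => (hRpos' j hj).le) hi
    have hleC : C i ≤ ∑ j ∈ Finset.Icc 1 q, C j :=
      Finset.single_le_sum (fun j hj => (hCpos' j hj).le) hi
    have htR0 : 0 < t * R 0 := mul_pos ht0 hR0pos
    have htC0 : 0 < t * C 0 := mul_pos ht0 hC0pos
    refine ⟨?_, ?_, ?_⟩
    · rw [← hCe i hi, ← hRe i hi]
    · rw [hSv]; linarith
    · rw [← hCe i hi, hsv]; linarith
  have h3R := key_card A B sv Sv d hA hB hd _ hTprop
  refine ⟨h3R, ?_⟩
  have himg : (Finset.Icc 1 q).image C =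
      ((Finset.Icc 1 q).image R).image (fun x => B * (Sv - x) ^ d) := by
    rw [Finset.image_image]
    exact Finset.image_congr (fun i hi => hCe i hi)
  rw [himg]
  exact le_trans Finset.card_image_le h3R
end

section
/- Let q ≥ 4 be an even integer, k ≥ 2 and d ≥ 5q^k integers, and t := (q^k − q)^{1/(d+1)}. Let q_1, q_2, q_3 ≥ 0 be reals with q_1 + q_2 + q_3 = q. Define, for nonnegative reals R_0, R_1, R_2, R_3, C_0, C_1, C_2, C_3 with S := R_0·C_0·t² + (Σ_{i=1}^3 q_i R_i)·C_0·t + (Σ_{i=1}^3 q_i C_i)·R_0·t + (Σ_{i=1}^3 q_i R_i)(Σ_{i=1}^3 q_i C_i) − Σ_{i=1}^3 q_i R_i C_i > 0, the function Φ^S := (d+1)·ln S − d·ln(R_0^{(d+1)/d} + Σ_{i=1}^3 q_i R_i^{(d+1)/d}) − d·ln(C_0^{(d+1)/d} + Σ_{i=1}^3 q_i C_i^{(d+1)/d}). If (R_0, R_1, R_2, R_3, C_0, C_1, C_2, C_3) attains the maximum of Φ^S over this region, then: (a) R_0 > 0 and C_0 > 0; (b) for every i ∈ {1,2,3} with q_i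 > 0, R_i > 0 and C_i > 0; (c) for distinct i, j ∈ {1,2,3} with q_i > 0 and q_j > 0, R_i = R_j if and only if C_i = C_j. -/
open scoped BigOperators

/-- The quantity `S` appearing in the definition of `Φ^S`. -/
noncomputable def Sfun (t : ℝ) (qv : Fin 3 → ℝ) (R0 : ℝ) (R : Fin 3 → ℝ)
    (C0 : ℝ) (C : Fin 3 → ℝ) : ℝ :=
  R0 * C0 * t ^ 2 + (∑ i, qv i * R i) * C0 * t + (∑ i, qv i * C i) * R0 * t
    + (∑ i, qv i * R i) * (∑ i, qv i * C i) - ∑ i, qv i * R i * C i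

/-- The function `Φ^S`. -/
noncomputable def PhiS (d : ℕ) (t : ℝ) (qv : Fin 3 → ℝ) (R0 : ℝ) (R : Fin 3 → ℝ)
    (C0 : ℝ) (C : Fin 3 → ℝ) : ℝ :=
  ((d : ℝ) + 1) * Real.log (Sfun t qv R0 R C0 C)
    - (d : ℝ) * Real.log (R0 ^ (((d : ℝ) + 1) / d) + ∑ i, qv i * R i ^ (((d : ℝ) + 1) / d))
    - (d : ℝ) * Real.log (C0 ^ (((d : ℝ) + 1) / d) + ∑ i, qv i * C i ^ (((d : ℝ) + 1) / d))

section Auxiliary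

open Real

/-- Interior stationarity: a one-variable objective of the form
`x ↦ (d+1) log (S0 + a x) - d log (B + w x^((d+1)/d))` that is maximized (among nonnegative
feasible `x`) at an interior point `x0 > 0` has vanishing derivative there. -/
lemma phi_stationary (d : ℕ) (hd : 0 < d) (a S0 B w x0 : ℝ) (hx0 : 0 < x0)
    (hS : 0 < S0 + a * x0) (hBx : 0 < B + w * x0 ^ (((d:ℝ)+1)/d))
    (hmax : ∀ x, 0 ≤ x → 0 < S0 + a * x →
      ((d:ℝ)+1) * Real.log (S0 + a * x) - (d:ℝ) * Real.log (B + w * x ^ (((d:ℝ)+1)/d))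
        ≤ ((d:ℝ)+1) * Real.log (S0 + a * x0) - (d:ℝ) * Real.log (B + w * x0 ^ (((d:ℝ)+1)/d))) :
    ((d:ℝ)+1) * (a / (S0 + a * x0))
      = (d:ℝ) * ((w * ((((d:ℝ)+1)/d) * x0 ^ ((((d:ℝ)+1)/d) - 1))) / (B + w * x0 ^ (((d:ℝ)+1)/d))) := by
  set p : ℝ := ((d:ℝ)+1)/d with hp
  have h1 : HasDerivAt (fun x : ℝ => S0 + a * x) a x0 := by
    simpa using ((hasDerivAt_id x0).const_mul a).const_add S0
  have hlog1 : HasDerivAt (fun x => Real.log (S0 + a * x)) (a / (S0 + a * x0)) x0 :=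
    h1.log (ne_of_gt hS)
  have h2 : HasDerivAt (fun x : ℝ => x ^ p) (p * x0 ^ (p - 1)) x0 :=
    Real.hasDerivAt_rpow_const (Or.inl hx0.ne')
  have h3 : HasDerivAt (fun x : ℝ => B + w * x ^ p) (w * (p * x0 ^ (p - 1))) x0 :=
    (h2.const_mul w).const_add B
  have hlog2 : HasDerivAt (fun x => Real.log (B + w * x ^ p))
      (w * (p * x0 ^ (p - 1)) / (B + w * x0 ^ p)) x0 := h3.log (ne_of_gt hBx)
  have hf : HasDerivAt
      (fun x => ((d:ℝ)+1) * Real.log (S0 + a * x) - (d:ℝ) * Real.log (B + w * x ^ p))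
      (((d:ℝ)+1) * (a / (S0 + a * x0)) - (d:ℝ) * (w * (p * x0 ^ (p - 1)) / (B + w * x0 ^ p))) x0 :=
    (hlog1.const_mul _).sub (hlog2.const_mul _)
  have hopen : IsOpen {x : ℝ | 0 < x ∧ 0 < S0 + a * x} :=
    (isOpen_lt continuous_const continuous_id).inter
      (isOpen_lt continuous_const (continuous_const.add (continuous_const.mul continuous_id)))
  have hloc : IsLocalMax
      (fun x => ((d:ℝ)+1) * Real.log (S0 + a * x) - (d:ℝ) * Real.log (B + w * x ^ p)) x0 := by
    filter_upwards [hopen.mem_nhds ⟨hx0, hS⟩] with x hx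
    exact hmax x hx.1.le hx.2
  have := hloc.hasDerivAt_eq_zero hf
  linarith [this]

/-- Boundary improvement: for an objective of the form
`x ↦ (d+1) log (S0 + a x) - d log (B + w x^((d+1)/d))` with `a > 0`, the value at some small
`x > 0` strictly exceeds the value at `0`. -/
lemma phi_improve (d : ℕ) (hd : 0 < d) (a S0 B w : ℝ) (ha : 0 < a) (hS0 : 0 < S0) (hB : 0 < B)
    (hw : 0 ≤ w) :
    ∃ x : ℝ, 0 < x ∧ 0 < S0 + a * x ∧
      ((d:ℝ)+1) * Real.log S0 - (d:ℝ) * Real.log B <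
      ((d:ℝ)+1) * Real.log (S0 + a * x) - (d:ℝ) * Real.log (B + w * x ^ (((d:ℝ)+1)/d)) := by
  have hdpos : (0:ℝ) < d := Nat.cast_pos.mpr hd
  set η : ℝ := min 1 (min (S0/a) ((((d:ℝ)+1)*a*B) / (4*S0*((d:ℝ)*w+1)))) with hηdef
  have hηpos : 0 < η :=
    lt_min one_pos (lt_min (div_pos hS0 ha) (div_pos (by positivity) (by positivity)))
  have hη1 : η ≤ 1 := min_le_left _ _
  have hη2 : η ≤ S0/a := (min_le_right _ _).trans (min_le_left _ _)
  have hη3 : η ≤ (((d:ℝ)+1)*a*B) / (4*S0*((d:ℝ)*w+1)) := (min_le_right _ _).trans (min_le_right _ _)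
  refine ⟨η ^ d, pow_pos hηpos d, ?_, ?_⟩
  · have : 0 < a * η ^ d := by positivity
    linarith
  have hxη : η ^ d ≤ η := by
    calc η ^ d ≤ η ^ 1 := pow_le_pow_of_le_one hηpos.le hη1 hd
    _ = η := pow_one η
  have hax : a * η ^ d ≤ S0 := by
    have h1 : η * a ≤ S0 := (le_div_iff₀ ha).mp hη2
    nlinarith [mul_le_mul_of_nonneg_left hxη ha.le]
  have hrp : (η ^ d : ℝ) ^ (((d:ℝ)+1)/d) = η ^ (d+1) := by
    rw [← Real.rpow_natCast η d, ← Real.rpow_mul hηpos.le, ← Real.rpow_natCast η (d+1)]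
    congr 1
    push_cast
    field_simp
  rw [hrp]
  have hSx : 0 < S0 + a * η ^ d := by positivity
  have hBx : 0 < B + w * η ^ (d+1) := by positivity
  have hlow : ((d:ℝ)+1) * Real.log (S0 + a * η ^ d) - ((d:ℝ)+1) * Real.log S0
      ≥ ((d:ℝ)+1) * (a * η ^ d / (2 * S0)) := by
    have key : Real.log S0 - Real.log (S0 + a * η ^ d) ≤ S0 / (S0 + a * η ^ d) - 1 := by
      have := Real.log_le_sub_one_of_pos (show 0 < S0 / (S0 + a * η ^ d) by positivity)
      rwa [Real.log_div hS0.ne' hSx.ne'] at this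
    have h2 : 1 - S0 / (S0 + a * η ^ d) = a * η ^ d / (S0 + a * η ^ d) := by field_simp; ring
    have hfrac : a * η ^ d / (2 * S0) ≤ a * η ^ d / (S0 + a * η ^ d) := by
      apply div_le_div_of_nonneg_left (by positivity) hSx (by linarith)
    have h1 : Real.log (S0 + a * η ^ d) - Real.log S0 ≥ a * η ^ d / (2 * S0) := by
      linarith [key, h2, hfrac]
    nlinarith [h1, hdpos]
  have hup : (d:ℝ) * Real.log (B + w * η ^ (d+1)) - (d:ℝ) * Real.log B
      ≤ (d:ℝ) * (w * η ^ (d+1) / B) := by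
    have key : Real.log (B + w * η ^ (d+1)) - Real.log B ≤ (B + w * η ^ (d+1)) / B - 1 := by
      have := Real.log_le_sub_one_of_pos (show 0 < (B + w * η ^ (d+1)) / B by positivity)
      rwa [Real.log_div hBx.ne' hB.ne'] at this
    have h2 : (B + w * η ^ (d+1)) / B - 1 = w * η ^ (d+1) / B := by field_simp; ring
    nlinarith [key, hdpos, hB]
  have hmain : (d:ℝ) * (w * η ^ (d+1) / B) < ((d:ℝ)+1) * (a * η ^ d / (2 * S0)) := by
    have hstep : (d:ℝ) * w * η / B < ((d:ℝ)+1) * a / (2*S0) := by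
      rw [div_lt_div_iff₀ hB (by positivity)]
      have hη3' : η * (4*S0*((d:ℝ)*w+1)) ≤ ((d:ℝ)+1)*a*B := (le_div_iff₀ (by positivity)).mp hη3
      nlinarith [mul_pos hηpos hS0,
        mul_nonneg (mul_nonneg (mul_nonneg hdpos.le hw) hηpos.le) hS0.le]
    have hηd : (0:ℝ) < η ^ d := pow_pos hηpos d
    have e1 : (d:ℝ) * (w * η ^ (d+1) / B) = ((d:ℝ) * w * η / B) * η ^ d := by
      rw [pow_succ]; ring
    have e2 : ((d:ℝ)+1) * (a * η ^ d / (2 * S0)) = (((d:ℝ)+1) * a / (2*S0)) * η ^ d := by ring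
    rw [e1, e2]
    exact mul_lt_mul_of_pos_right hstep hηd
  linarith

lemma sum3_update_id (qv R : Fin 3 → ℝ) (i : Fin 3) (x : ℝ) :
    ∑ j, qv j * Function.update R i x j = ∑ j, qv j * R j + qv i * (x - R i) := by
  fin_cases i <;> simp [Fin.sum_univ_three, Function.update_apply] <;> ring

lemma sum3_update_mul (qv R C : Fin 3 → ℝ) (i : Fin 3) (x : ℝ) :
    ∑ j, qv j * Function.update R i x j * C j
      = ∑ j, qv j * R j * C j + qv i * (x - R i) * C i := by
  fin_cases i <;> simp [Fin.sum_univ_three, Function.update_apply] <;> ring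

lemma sum3_update_mul' (qv R C : Fin 3 → ℝ) (i : Fin 3) (x : ℝ) :
    ∑ j, qv j * R j * Function.update C i x j
      = ∑ j, qv j * R j * C j + qv i * R i * (x - C i) := by
  fin_cases i <;> simp [Fin.sum_univ_three, Function.update_apply] <;> ring

lemma sum3_update_pow (qv R : Fin 3 → ℝ) (i : Fin 3) (x : ℝ) (p : ℝ) :
    ∑ j, qv j * (Function.update R i x j) ^ p
      = ∑ j, qv j * (R j) ^ p + qv i * (x ^ p - (R i) ^ p) := by
  fin_cases i <;> simp [Fin.sum_univ_three, Function.update_apply] <;> ring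

lemma Sfun_update_R (t : ℝ) (qv : Fin 3 → ℝ) (R0 C0 : ℝ) (R C : Fin 3 → ℝ) (i : Fin 3) (x : ℝ) :
    Sfun t qv R0 (Function.update R i x) C0 C
      = Sfun t qv R0 R C0 C + qv i * (x - R i) * (C0 * t + (∑ j, qv j * C j) - C i) := by
  unfold Sfun
  rw [sum3_update_id, sum3_update_mul]
  ring

lemma Sfun_update_C (t : ℝ) (qv : Fin 3 → ℝ) (R0 C0 : ℝ) (R C : Fin 3 → ℝ) (i : Fin 3) (x : ℝ) :
    Sfun t qv R0 R C0 (Function.update C i x)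
      = Sfun t qv R0 R C0 C + qv i * (x - C i) * (R0 * t + (∑ j, qv j * R j) - R i) := by
  unfold Sfun
  rw [sum3_update_id, sum3_update_mul']
  ring

lemma Sfun_R0 (t : ℝ) (qv : Fin 3 → ℝ) (R0 C0 : ℝ) (R C : Fin 3 → ℝ) (x : ℝ) :
    Sfun t qv x R C0 C
      = Sfun t qv R0 R C0 C + (x - R0) * (C0 * t ^ 2 + (∑ j, qv j * C j) * t) := by
  unfold Sfun; ring

lemma Sfun_C0 (t : ℝ) (qv : Fin 3 → ℝ) (R0 C0 : ℝ) (R C : Fin 3 → ℝ) (x : ℝ) :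
    Sfun t qv R0 R x C
      = Sfun t qv R0 R C0 C + (x - C0) * (R0 * t ^ 2 + (∑ j, qv j * R j) * t) := by
  unfold Sfun; ring

lemma Sfun_symm (t : ℝ) (qv : Fin 3 → ℝ) (R0 C0 : ℝ) (R C : Fin 3 → ℝ) :
    Sfun t qv R0 R C0 C = Sfun t qv C0 C R0 R := by
  unfold Sfun
  simp only [Fin.sum_univ_three]
  ring

lemma PhiS_symm (d : ℕ) (t : ℝ) (qv : Fin 3 → ℝ) (R0 C0 : ℝ) (R C : Fin 3 → ℝ) :
    PhiS d t qv R0 R C0 C = PhiS d t qv C0 C R0 R := by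
  unfold PhiS
  rw [Sfun_symm]
  ring

/-- Stationarity in the coordinate `C i`. -/
lemma statC (d : ℕ) (hd : 0 < d) (t : ℝ) (qv : Fin 3 → ℝ) (hqv : ∀ i, 0 ≤ qv i)
    (R0 C0 : ℝ) (R C : Fin 3 → ℝ)
    (hR0 : 0 ≤ R0) (hC0 : 0 ≤ C0) (hR : ∀ i, 0 ≤ R i) (hC : ∀ i, 0 ≤ C i)
    (hS : 0 < Sfun t qv R0 R C0 C)
    (hmax : ∀ (R0' C0' : ℝ) (R' C' : Fin 3 → ℝ),
      0 ≤ R0' → 0 ≤ C0' → (∀ i, 0 ≤ R' i) → (∀ i, 0 ≤ C' i) →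
      0 < Sfun t qv R0' R' C0' C' →
      PhiS d t qv R0' R' C0' C' ≤ PhiS d t qv R0 R C0 C)
    (i : Fin 3) (hqi : 0 < qv i) (hCi : 0 < C i)
    (hY : 0 < C0 ^ (((d:ℝ)+1)/d) + ∑ j, qv j * (C j) ^ (((d:ℝ)+1)/d)) :
    R0 * t + (∑ j, qv j * R j) - R i
      = (Sfun t qv R0 R C0 C / (C0 ^ (((d:ℝ)+1)/d) + ∑ j, qv j * (C j) ^ (((d:ℝ)+1)/d)))
          * (C i) ^ (1/(d:ℝ)) := by
  have hdR : (0:ℝ) < d := Nat.cast_pos.mpr hd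
  set p : ℝ := ((d:ℝ)+1)/d with hp
  set S : ℝ := Sfun t qv R0 R C0 C with hSdef
  set Y : ℝ := C0 ^ p + ∑ j, qv j * (C j) ^ p with hYdef
  set L : ℝ := R0 * t + (∑ j, qv j * R j) - R i with hLdef
  set b : ℝ := qv i * L with hbdef
  set S0 : ℝ := S - b * C i with hS0def
  set B : ℝ := Y - qv i * (C i) ^ p with hBdef
  have hS0b : S0 + b * C i = S := by rw [hS0def]; ring
  have hBY : B + qv i * (C i) ^ p = Y := by rw [hBdef]; ring
  have hmax1 : ∀ x, 0 ≤ x → 0 < S0 + b * x →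
      ((d:ℝ)+1) * Real.log (S0 + b * x) - (d:ℝ) * Real.log (B + qv i * x ^ p)
        ≤ ((d:ℝ)+1) * Real.log (S0 + b * C i) - (d:ℝ) * Real.log (B + qv i * (C i) ^ p) := by
    intro x hx hSx
    have hSup : Sfun t qv R0 R C0 (Function.update C i x) = S0 + b * x := by
      rw [Sfun_update_C]; rw [hS0def, hbdef, hLdef]; ring
    have hCup : ∀ j, 0 ≤ Function.update C i x j := by
      intro j
      rw [Function.update_apply]
      split_ifs
      · exact hx
      · exact hC j
    have hm := hmax R0 C0 R (Function.update C i x) hR0 hC0 hR hCup (by rw [hSup]; exact hSx)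
    unfold PhiS at hm
    rw [hSup, sum3_update_pow] at hm
    have e1 : C0 ^ p + (∑ j, qv j * (C j) ^ p + qv i * (x ^ p - (C i) ^ p))
        = B + qv i * x ^ p := by
      rw [hBdef, hYdef]; ring
    rw [e1] at hm
    rw [hS0b, hBY]
    have e2 : C0 ^ p + ∑ j, qv j * C j ^ p = Y := hYdef.symm
    rw [e2] at hm
    rw [← hSdef] at hm
    linarith
  have hBx : 0 < B + qv i * (C i) ^ p := by rw [hBY]; exact hY
  have E := phi_stationary d hd b S0 B (qv i) (C i) hCi (by rw [hS0b]; exact hS) hBx hmax1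
  rw [hS0b, hBY] at E
  have hexp : p - 1 = 1/(d:ℝ) := by rw [hp]; field_simp; ring
  rw [hexp] at E
  set u : ℝ := (C i) ^ ((1:ℝ)/(d:ℝ)) with hu
  have E2 : b / S = qv i * u / Y := by
    have h1 : ((d:ℝ)+1) * (b / S) = ((d:ℝ)+1) * (qv i * u / Y) := by
      rw [E]
      field_simp
    exact mul_left_cancel₀ (by positivity) h1
  rw [div_eq_div_iff hS.ne' hY.ne'] at E2
  have : qv i * (L * Y) = qv i * (u * S) := by rw [hbdef] at E2; linarith [E2]
  have hLY : L * Y = u * S := mul_left_cancel₀ hqi.ne' this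
  rw [hLdef] at hLY ⊢
  field_simp
  linarith [hLY]

/-- Stationarity in the coordinate `C0`. -/
lemma statC0 (d : ℕ) (hd : 0 < d) (t : ℝ) (qv : Fin 3 → ℝ)
    (R0 C0 : ℝ) (R C : Fin 3 → ℝ)
    (hR0 : 0 ≤ R0) (hR : ∀ i, 0 ≤ R i) (hC : ∀ i, 0 ≤ C i)
    (hS : 0 < Sfun t qv R0 R C0 C)
    (hmax : ∀ (R0' C0' : ℝ) (R' C' : Fin 3 → ℝ),
      0 ≤ R0' → 0 ≤ C0' → (∀ i, 0 ≤ R' i) → (∀ i, 0 ≤ C' i) →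
      0 < Sfun t qv R0' R' C0' C' →
      PhiS d t qv R0' R' C0' C' ≤ PhiS d t qv R0 R C0 C)
    (hC0 : 0 < C0)
    (hY : 0 < C0 ^ (((d:ℝ)+1)/d) + ∑ j, qv j * (C j) ^ (((d:ℝ)+1)/d)) :
    R0 * t ^ 2 + (∑ j, qv j * R j) * t
      = (Sfun t qv R0 R C0 C / (C0 ^ (((d:ℝ)+1)/d) + ∑ j, qv j * (C j) ^ (((d:ℝ)+1)/d)))
          * C0 ^ (1/(d:ℝ)) := by
  have hdR : (0:ℝ) < d := Nat.cast_pos.mpr hd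
  set p : ℝ := ((d:ℝ)+1)/d with hp
  set S : ℝ := Sfun t qv R0 R C0 C with hSdef
  set Y : ℝ := C0 ^ p + ∑ j, qv j * (C j) ^ p with hYdef
  set b : ℝ := R0 * t ^ 2 + (∑ j, qv j * R j) * t with hbdef
  set S0 : ℝ := S - b * C0 with hS0def
  set B : ℝ := ∑ j, qv j * (C j) ^ p with hBdef
  have hS0b : S0 + b * C0 = S := by rw [hS0def]; ring
  have hBY : B + 1 * C0 ^ p = Y := by rw [hBdef, hYdef]; ring
  have hmax1 : ∀ x, 0 ≤ x → 0 < S0 + b * x →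
      ((d:ℝ)+1) * Real.log (S0 + b * x) - (d:ℝ) * Real.log (B + 1 * x ^ p)
        ≤ ((d:ℝ)+1) * Real.log (S0 + b * C0) - (d:ℝ) * Real.log (B + 1 * C0 ^ p) := by
    intro x hx hSx
    have hSup : Sfun t qv R0 R x C = S0 + b * x := by
      rw [Sfun_C0 t qv R0 C0 R C x, hS0def, hbdef]; ring
    have hm := hmax R0 x R C hR0 hx hR hC (by rw [hSup]; exact hSx)
    unfold PhiS at hm
    rw [hSup] at hm
    have e1 : x ^ p + ∑ j, qv j * (C j) ^ p = B + 1 * x ^ p := by rw [hBdef]; ring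
    rw [e1] at hm
    rw [hS0b, hBY]
    have e2 : C0 ^ p + ∑ j, qv j * C j ^ p = Y := hYdef.symm
    rw [e2, ← hSdef] at hm
    linarith
  have hBx : 0 < B + 1 * C0 ^ p := by rw [hBY]; exact hY
  have E := phi_stationary d hd b S0 B 1 C0 hC0 (by rw [hS0b]; exact hS) hBx hmax1
  rw [hS0b, hBY] at E
  have hexp : p - 1 = 1/(d:ℝ) := by rw [hp]; field_simp; ring
  rw [hexp] at E
  set u : ℝ := C0 ^ ((1:ℝ)/(d:ℝ)) with hu
  have E2 : b / S = u / Y := by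
    have h1 : ((d:ℝ)+1) * (b / S) = ((d:ℝ)+1) * (u / Y) := by
      rw [E]
      field_simp
    exact mul_left_cancel₀ (by positivity) h1
  rw [div_eq_div_iff hS.ne' hY.ne'] at E2
  rw [hbdef] at E2 ⊢
  field_simp
  linarith [E2]

/-- At a maximizer, `R0` is positive. -/
lemma posR0 (d : ℕ) (hd : 0 < d) (t : ℝ) (ht : 0 < t) (qv : Fin 3 → ℝ) (hqv : ∀ i, 0 ≤ qv i)
    (R0 C0 : ℝ) (R C : Fin 3 → ℝ)
    (hR0 : 0 ≤ R0) (hC0 : 0 ≤ C0) (hR : ∀ i, 0 ≤ R i) (hC : ∀ i, 0 ≤ C i)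
    (hS : 0 < Sfun t qv R0 R C0 C)
    (hmax : ∀ (R0' C0' : ℝ) (R' C' : Fin 3 → ℝ),
      0 ≤ R0' → 0 ≤ C0' → (∀ i, 0 ≤ R' i) → (∀ i, 0 ≤ C' i) →
      0 < Sfun t qv R0' R' C0' C' →
      PhiS d t qv R0' R' C0' C' ≤ PhiS d t qv R0 R C0 C) :
    0 < R0 := by
  rcases hR0.lt_or_eq with h | h
  · exact h
  exfalso
  have hR0z : R0 = 0 := h.symm
  set p : ℝ := ((d:ℝ)+1)/d with hp
  have hdR : (0:ℝ) < d := Nat.cast_pos.mpr hd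
  have hpne : p ≠ 0 := by positivity
  set sR : ℝ := ∑ j, qv j * R j with hsRdef
  set sC : ℝ := ∑ j, qv j * C j with hsCdef
  set sRC : ℝ := ∑ j, qv j * R j * C j with hsRCdef
  have hsRnn : 0 ≤ sR := Finset.sum_nonneg fun j _ => mul_nonneg (hqv j) (hR j)
  have hsCnn : 0 ≤ sC := Finset.sum_nonneg fun j _ => mul_nonneg (hqv j) (hC j)
  have hsR : 0 < sR := by
    rcases hsRnn.lt_or_eq with h' | h'
    · exact h'
    exfalso
    have hz : ∀ j ∈ Finset.univ, qv j * R j = 0 :=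
      (Finset.sum_eq_zero_iff_of_nonneg fun j _ => mul_nonneg (hqv j) (hR j)).mp h'.symm
    have hzRC : sRC = 0 := by
      rw [hsRCdef]
      refine Finset.sum_eq_zero fun j hj => ?_
      rw [hz j hj, zero_mul]
    have : Sfun t qv R0 R C0 C = 0 := by
      unfold Sfun
      rw [← hsRdef, ← hsCdef, ← hsRCdef, hR0z, ← h', hzRC]
      ring
    rw [this] at hS
    exact lt_irrefl 0 hS
  set a0 : ℝ := C0 * t ^ 2 + sC * t with ha0def
  have ha0 : 0 < a0 := by
    rcases (show 0 ≤ a0 by positivity).lt_or_eq with h' | h'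
    · exact h'
    exfalso
    have h1 : C0 * t ^ 2 = 0 ∧ sC * t = 0 := by
      constructor <;> nlinarith [mul_nonneg hC0 (sq_nonneg t), mul_nonneg hsCnn ht.le]
    have hC0z : C0 = 0 := by
      have := h1.1
      have ht2 : (0:ℝ) < t ^ 2 := by positivity
      nlinarith
    have hsCz : sC = 0 := by
      have := h1.2
      nlinarith
    have hz : ∀ j ∈ Finset.univ, qv j * C j = 0 :=
      (Finset.sum_eq_zero_iff_of_nonneg fun j _ => mul_nonneg (hqv j) (hC j)).mp
        (by rw [← hsCdef]; exact hsCz)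
    have hzRC : sRC = 0 := by
      rw [hsRCdef]
      refine Finset.sum_eq_zero fun j hj => ?_
      rcases mul_eq_zero.mp (hz j hj) with h0 | h0 <;> rw [h0] <;> ring
    have : Sfun t qv R0 R C0 C = 0 := by
      unfold Sfun
      rw [← hsRdef, ← hsCdef, ← hsRCdef, hR0z, hC0z, hsCz, hzRC]
      ring
    rw [this] at hS
    exact lt_irrefl 0 hS
  set B : ℝ := ∑ j, qv j * (R j) ^ p with hBdef
  have hB : 0 < B := by
    have hex : ∃ j, 0 < qv j * R j := by
      by_contra hno
      push_neg at hno
      have : sR ≤ 0 := Finset.sum_nonpos fun j _ => hno j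
      linarith
    obtain ⟨j, hj⟩ := hex
    have hqj : 0 < qv j := by
      rcases (hqv j).lt_or_eq with h' | h'
      · exact h'
      · exfalso; rw [← h', zero_mul] at hj; exact lt_irrefl 0 hj
    have hRj : 0 < R j := by
      rcases (hR j).lt_or_eq with h' | h'
      · exact h'
      · exfalso; rw [← h', mul_zero] at hj; exact lt_irrefl 0 hj
    have hterm : 0 < qv j * (R j) ^ p := mul_pos hqj (Real.rpow_pos_of_pos hRj p)
    have hle : qv j * (R j) ^ p ≤ B :=
      Finset.single_le_sum (fun m _ => mul_nonneg (hqv m) (Real.rpow_nonneg (hR m) p))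
        (Finset.mem_univ j)
    linarith
  obtain ⟨x, hxpos, hfeas, hlt⟩ :=
    phi_improve d hd a0 (Sfun t qv R0 R C0 C) B 1 ha0 hS hB zero_le_one
  have hSx : Sfun t qv x R C0 C = Sfun t qv R0 R C0 C + a0 * x := by
    rw [Sfun_R0 t qv R0 C0 R C x, hR0z, ha0def, ← hsCdef]; ring
  have hm := hmax x C0 R C hxpos.le hC0 hR hC (by rw [hSx]; exact hfeas)
  unfold PhiS at hm
  rw [hSx] at hm
  have e1 : x ^ p + ∑ j, qv j * (R j) ^ p = B + 1 * x ^ p := by rw [hBdef]; ring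
  rw [e1] at hm
  have e2 : R0 ^ p + ∑ j, qv j * (R j) ^ p = B := by
    rw [hR0z, Real.zero_rpow hpne, hBdef]; ring
  rw [e2] at hm
  linarith

/-- At a maximizer with `R0, C0 > 0`, each `R i` with `qv i > 0` is positive. -/
lemma posRi (d : ℕ) (hd : 0 < d) (t : ℝ) (ht : 1 < t) (qv : Fin 3 → ℝ) (hqv : ∀ i, 0 ≤ qv i)
    (R0 C0 : ℝ) (R C : Fin 3 → ℝ)
    (hR : ∀ i, 0 ≤ R i) (hC : ∀ i, 0 ≤ C i)
    (hS : 0 < Sfun t qv R0 R C0 C)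
    (hmax : ∀ (R0' C0' : ℝ) (R' C' : Fin 3 → ℝ),
      0 ≤ R0' → 0 ≤ C0' → (∀ i, 0 ≤ R' i) → (∀ i, 0 ≤ C' i) →
      0 < Sfun t qv R0' R' C0' C' →
      PhiS d t qv R0' R' C0' C' ≤ PhiS d t qv R0 R C0 C)
    (hR0 : 0 < R0) (hC0 : 0 < C0) (i : Fin 3) (hqi : 0 < qv i) :
    0 < R i := by
  rcases (hR i).lt_or_eq with h | h
  · exact h
  exfalso
  have hRiz : R i = 0 := h.symm
  have ht0 : (0:ℝ) < t := lt_trans one_pos ht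
  have hdR : (0:ℝ) < d := Nat.cast_pos.mpr hd
  set p : ℝ := ((d:ℝ)+1)/d with hp
  have hpne : p ≠ 0 := by positivity
  set S : ℝ := Sfun t qv R0 R C0 C with hSdef
  set X : ℝ := R0 ^ p + ∑ j, qv j * (R j) ^ p with hXdef
  set Y : ℝ := C0 ^ p + ∑ j, qv j * (C j) ^ p with hYdef
  have hsumRnn : 0 ≤ ∑ j, qv j * (R j) ^ p :=
    Finset.sum_nonneg fun j _ => mul_nonneg (hqv j) (Real.rpow_nonneg (hR j) p)
  have hsumCnn : 0 ≤ ∑ j, qv j * (C j) ^ p :=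
    Finset.sum_nonneg fun j _ => mul_nonneg (hqv j) (Real.rpow_nonneg (hC j) p)
  have hX : 0 < X := by
    have := Real.rpow_pos_of_pos hR0 p
    rw [hXdef]; linarith
  have hY : 0 < Y := by
    have := Real.rpow_pos_of_pos hC0 p
    rw [hYdef]; linarith
  have hsCnn : 0 ≤ ∑ j, qv j * C j :=
    Finset.sum_nonneg fun j _ => mul_nonneg (hqv j) (hC j)
  set aL : ℝ := C0 * t + (∑ j, qv j * C j) - C i with haLdef
  have haL : 0 < aL := by
    rcases (hC i).lt_or_eq with hCi | hCi
    · have E1 := statC0 d hd t qv R0 C0 R C hR0.le hR hC hS hmax hC0 hY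
      have E2 := statC d hd t qv hqv R0 C0 R C hR0.le hC0.le hR hC hS hmax i hqi hCi hY
      rw [hRiz, sub_zero] at E2
      rw [← hSdef, ← hYdef] at E1 E2
      have hSY : 0 < S / Y := div_pos hS hY
      have h2 : (S/Y) * (t * (C i) ^ ((1:ℝ)/(d:ℝ))) = (S/Y) * (C0 ^ ((1:ℝ)/(d:ℝ))) := by
        linear_combination E1 - t * E2
      have hcan : t * (C i) ^ ((1:ℝ)/(d:ℝ)) = C0 ^ ((1:ℝ)/(d:ℝ)) :=
        mul_left_cancel₀ hSY.ne' h2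
      have h3 : (t * (C i) ^ ((1:ℝ)/(d:ℝ))) ^ (d:ℕ) = (C0 ^ ((1:ℝ)/(d:ℝ))) ^ (d:ℕ) := by
        rw [hcan]
      rw [mul_pow] at h3
      rw [one_div, Real.rpow_inv_natCast_pow (hC i) hd.ne',
        Real.rpow_inv_natCast_pow hC0.le hd.ne'] at h3
      have hC0t : C0 * t = t ^ (d+1) * C i := by rw [← h3, pow_succ]; ring
      have hgt : 1 < t ^ (d+1) := one_lt_pow₀ ht (Nat.succ_ne_zero d)
      rw [haLdef]
      nlinarith [hCi, hsCnn]
    · rw [haLdef, ← hCi, sub_zero]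
      have : 0 < C0 * t := mul_pos hC0 ht0
      linarith
  obtain ⟨x, hxpos, hfeas, hlt⟩ :=
    phi_improve d hd (qv i * aL) S X (qv i) (mul_pos hqi haL) hS hX (hqv i)
  have hSx : Sfun t qv R0 (Function.update R i x) C0 C = S + (qv i * aL) * x := by
    rw [Sfun_update_R t qv R0 C0 R C i x, hRiz, haLdef, ← hSdef]; ring
  have hRup : ∀ j, 0 ≤ Function.update R i x j := by
    intro j
    rw [Function.update_apply]
    split_ifs
    · exact hxpos.le
    · exact hR j
  have hm := hmax R0 C0 (Function.update R i x) C hR0.le hC0.le hRup hC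
    (by rw [hSx]; exact hfeas)
  unfold PhiS at hm
  rw [hSx, sum3_update_pow] at hm
  have e1 : R0 ^ p + (∑ j, qv j * (R j) ^ p + qv i * (x ^ p - (R i) ^ p))
      = X + qv i * x ^ p := by
    rw [hRiz, Real.zero_rpow hpne, hXdef]; ring
  rw [e1] at hm
  rw [← hSdef, ← hXdef, ← hYdef] at hm
  linarith

end Auxiliary

/-- If a tuple of nonnegative reals with `S > 0` attains the maximum of `Φ^S` over the
region of nonnegative tuples with `S > 0`, then: (a) `R_0, C_0 > 0`; (b) for every `i` with
`q_i > 0`, `R_i, C_i > 0`; and (c) for distinct `i, j` with `q_i, q_j > 0`,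
`R_i = R_j ↔ C_i = C_j`. -/
theorem stmt5 (q k d : ℕ) (hq : 4 ≤ q) (hqeven : Even q) (hk : 2 ≤ k)
    (hd : 5 * q ^ k ≤ d)
    (t : ℝ) (ht : t = ((q : ℝ) ^ k - q) ^ (1 / ((d : ℝ) + 1)))
    (qv : Fin 3 → ℝ) (hqv : ∀ i, 0 ≤ qv i) (hqsum : ∑ i, qv i = q)
    (R0 C0 : ℝ) (R C : Fin 3 → ℝ)
    (hR0 : 0 ≤ R0) (hC0 : 0 ≤ C0) (hR : ∀ i, 0 ≤ R i) (hC : ∀ i, 0 ≤ C i)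
    (hS : 0 < Sfun t qv R0 R C0 C)
    (hmax : ∀ (R0' C0' : ℝ) (R' C' : Fin 3 → ℝ),
      0 ≤ R0' → 0 ≤ C0' → (∀ i, 0 ≤ R' i) → (∀ i, 0 ≤ C' i) →
      0 < Sfun t qv R0' R' C0' C' →
      PhiS d t qv R0' R' C0' C' ≤ PhiS d t qv R0 R C0 C) :
    (0 < R0 ∧ 0 < C0) ∧
    (∀ i, 0 < qv i → 0 < R i ∧ 0 < C i) ∧
    (∀ i j, i ≠ j → 0 < qv i → 0 < qv j → (R i = R j ↔ C i = C j)) := by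
  -- basic numeric facts
  have hq0 : 0 < q := lt_of_lt_of_le (by norm_num) hq
  have hd0 : 0 < d := lt_of_lt_of_le (by positivity) hd
  have hq4 : (4:ℝ) ≤ (q:ℝ) := by exact_mod_cast hq
  have hbase : (1:ℝ) < (q:ℝ) ^ k - (q:ℝ) := by
    have h1 : (q:ℝ) ^ 2 ≤ (q:ℝ) ^ k := pow_le_pow_right₀ (by linarith) hk
    nlinarith
  have ht1 : 1 < t := by
    rw [ht]
    rw [Real.one_lt_rpow_iff_of_pos (by linarith)]
    exact Or.inl ⟨hbase, by positivity⟩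
  have ht0 : (0:ℝ) < t := lt_trans one_pos ht1
  -- symmetric versions
  have hSsym : 0 < Sfun t qv C0 C R0 R := by rw [← Sfun_symm]; exact hS
  have hmaxS : ∀ (R0' C0' : ℝ) (R' C' : Fin 3 → ℝ),
      0 ≤ R0' → 0 ≤ C0' → (∀ i, 0 ≤ R' i) → (∀ i, 0 ≤ C' i) →
      0 < Sfun t qv R0' R' C0' C' →
      PhiS d t qv R0' R' C0' C' ≤ PhiS d t qv C0 C R0 R := by
    intro a b f g ha hb hf hg hsg
    calc PhiS d t qv a f b g = PhiS d t qv b g a f := PhiS_symm d t qv a b f g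
    _ ≤ PhiS d t qv R0 R C0 C := hmax b a g f hb ha hg hf ((Sfun_symm t qv a b f g) ▸ hsg)
    _ = PhiS d t qv C0 C R0 R := PhiS_symm d t qv R0 C0 R C
  -- part (a)
  have hR0pos : 0 < R0 := posR0 d hd0 t ht0 qv hqv R0 C0 R C hR0 hC0 hR hC hS hmax
  have hC0pos : 0 < C0 := posR0 d hd0 t ht0 qv hqv C0 R0 C R hC0 hR0 hC hR hSsym hmaxS
  -- part (b)
  have hRpos : ∀ i, 0 < qv i → 0 < R i := fun i hqi =>
    posRi d hd0 t ht1 qv hqv R0 C0 R C hR hC hS hmax hR0pos hC0pos i hqi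
  have hCpos : ∀ i, 0 < qv i → 0 < C i := fun i hqi =>
    posRi d hd0 t ht1 qv hqv C0 R0 C R hC hR hSsym hmaxS hC0pos hR0pos i hqi
  -- norm positivity
  set p : ℝ := ((d:ℝ)+1)/d with hp
  have hXpos : 0 < R0 ^ p + ∑ j, qv j * (R j) ^ p := by
    have h1 := Real.rpow_pos_of_pos hR0pos p
    have h2 : 0 ≤ ∑ j, qv j * (R j) ^ p :=
      Finset.sum_nonneg fun j _ => mul_nonneg (hqv j) (Real.rpow_nonneg (hR j) p)
    linarith
  have hYpos : 0 < C0 ^ p + ∑ j, qv j * (C j) ^ p := by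
    have h1 := Real.rpow_pos_of_pos hC0pos p
    have h2 : 0 ≤ ∑ j, qv j * (C j) ^ p :=
      Finset.sum_nonneg fun j _ => mul_nonneg (hqv j) (Real.rpow_nonneg (hC j) p)
    linarith
  refine ⟨⟨hR0pos, hC0pos⟩, fun i hqi => ⟨hRpos i hqi, hCpos i hqi⟩, fun i j hij hqi hqj => ?_⟩
  constructor
  · -- R i = R j → C i = C j, via stationarity in R-coordinates (swapped problem)
    intro hRij
    have Ei := statC d hd0 t qv hqv C0 R0 C R hC0 hR0 hC hR hSsym hmaxS i hqi (hRpos i hqi) hXpos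
    have Ej := statC d hd0 t qv hqv C0 R0 C R hC0 hR0 hC hR hSsym hmaxS j hqj (hRpos j hqj) hXpos
    rw [hRij] at Ei
    linarith
  · -- C i = C j → R i = R j, via stationarity in C-coordinates
    intro hCij
    have Ei := statC d hd0 t qv hqv R0 C0 R C hR0 hC0 hR hC hS hmax i hqi (hCpos i hqi) hYpos
    have Ej := statC d hd0 t qv hqv R0 C0 R C hR0 hC0 hR hC hS hmax j hqj (hCpos j hqj) hYpos
    rw [hCij] at Ei
    linarith
end

section
/- Let q ≥ 4 be an even integer and set q' := q/2. For all integers k ≥ 2 and d ≥ 3q^k, the function h(x) := ((x^{d+1} − 1)/(x^d − 1))^d·(q^k − q) − (x^d − 1)/(x − 1) + q' + (q' − 1)·x^d has exactly one root in the interval (1, ∞). -/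
open Finset

private def big0 (D t s : ℝ) : ℝ := 11943936 * D^0 * t^0 * s^1 + 53747712 * D^0 * t^1 * s^0 + 89579520 * D^0 * t^1 * s^1 + 8792064 * D^0 * t^1 * s^2 + 209018880 * D^0 * t^2 * s^0 + 255467520 * D^0 * t^2 * s^1 + 65525760 * D^0 * t^2 * s^2 + 2820096 * D^0 * t^2 * s^3 + 403439616 * D^0 * t^3 * s^0 + 423677952 * D^0 * t^3 * s^1 + 130387968 * D^0 * t^3 * s^2 + 14929920 * D^0 * t^3 * s^3 + 331776 * D^0 * t^3 * s^4 + 497000448 * D^0 * t^4 * s^0 + 471785472 * D^0 * t^4 * s^1 + 153778176 * D^0 * t^4 * s^2 + 21399552 * D^0 * t^4 * s^3 + 995328 * D^0 * t^4 * s^4 + 424839168 * D^0 * t^5 * s^0 + 370262016 * D^0 * t^5 * s^1 + 115955712 * D^0 * t^5 * s^2 + 15925248 * D^0 * t^5 * s^3 + 995328 * D^0 * t^5 * s^4 + 258287616 * D^0 * t^6 * s^0 + 204871680 * D^0 * t^6 * s^1 + 59719680 * D^0 * t^6 * s^2 + 7962624 * D^0 * t^6 * s^3 + 331776 * D^0 *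 t^6 * s^4 + 109983744 * D^0 * t^7 * s^0 + 75644928 * D^0 * t^7 * s^1 + 17915904 * D^0 * t^7 * s^2 + 1327104 * D^0 * t^7 * s^3 + 30855168 * D^0 * t^8 * s^0 + 15925248 * D^0 * t^8 * s^1 + 1990656 * D^0 * t^8 * s^2 + 4976640 * D^0 * t^9 * s^0 + 1327104 * D^0 * t^9 * s^1 + 331776 * D^0 * t^10 * s^0 + 10948608 * D^1 * t^0 * s^1 + 92565504 * D^1 * t^1 * s^0
private def big1 (D t s : ℝ) : ℝ := 106002432 * D^1 * t^1 * s^1 + 5253120 * D^1 * t^1 * s^2 + 453869568 * D^1 * t^2 * s^0 + 383975424 * D^1 * t^2 * s^1 + 55268352 * D^1 * t^2 * s^2 + 829440 * D^1 * t^2 * s^3 + 1080594432 * D^1 * t^3 * s^0 + 807570432 * D^1 * t^3 * s^1 + 143078400 * D^1 * t^3 * s^2 + 7077888 * D^1 * t^3 * s^3 + 1617739776 * D^1 * t^4 * s^0 + 1127789568 * D^1 * t^4 * s^1 + 228635136 * D^1 * t^4 * s^2 + 12994560 * D^1 * t^4 * s^3 + 1667091456 * D^1 * t^5 * s^0 +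 1102657536 * D^1 * t^5 * s^1 + 229257216 * D^1 * t^5 * s^2 + 15261696 * D^1 * t^5 * s^3 + 1222622208 * D^1 * t^6 * s^0 + 760679424 * D^1 * t^6 * s^1 + 156390912 * D^1 * t^6 * s^2 + 11612160 * D^1 * t^6 * s^3 + 636982272 * D^1 * t^7 * s^0 + 359562240 * D^1 * t^7 * s^1 + 65691648 * D^1 * t^7 * s^2 + 3428352 * D^1 * t^7 * s^3 + 227390976 * D^1 * t^8 * s^0 + 105504768 * D^1 * t^8 * s^1 + 13271040 * D^1 * t^8 * s^2 + 331776 * D^1 * t^8 * s^3 + 51425280 * D^1 * t^9 * s^0 + 16257024 * D^1 * t^9 * s^1 + 995328 * D^1 * t^9 * s^2 + 6414336 * D^1 * t^10 * s^0 + 995328 * D^1 * t^10 * s^1 + 331776 * D^1 * t^11 * s^0 + 3317760 * D^2 * t^0 * s^1 + 66064896 * D^2 * t^1 * s^0 + 46780416 * D^2 * t^1 * s^1 + 774144 * D^2 * t^1 * s^2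
private def big2 (D t s : ℝ) : ℝ := 418659840 * D^2 * t^2 * s^0 + 230008320 * D^2 * t^2 * s^1 + 15372288 * D^2 * t^2 * s^2 + 1252150272 * D^2 * t^3 * s^0 + 637152768 * D^2 * t^3 * s^1 + 58254336 * D^2 * t^3 * s^2 + 774144 * D^2 * t^3 * s^3 + 2308608000 * D^2 * t^4 * s^0 + 1143272448 * D^2 * t^4 * s^1 + 134666496 * D^2 * t^4 * s^2 + 2322432 * D^2 * t^4 * s^3 + 2893041792 * D^2 * t^5 * s^0 + 1412550144 * D^2 * t^5 * s^1 + 185670144 * D^2 * t^5 * s^2 + 5474304 * D^2 * t^5 * s^3 + 2567617920 * D^2 * t^6 * s^0 + 1221727104 * D^2 * t^6 * s^1 + 170055936 * D^2 * t^6 * s^2 + 6469632 * D^2 * t^6 * s^3 + 1627395840 * D^2 * t^7 * s^0 + 731047680 * D^2 * t^7 * s^1 + 97417728 * D^2 * t^7 * s^2 + 3151872 * D^2 * t^7 * s^3 + 721581696 * D^2 * t^8 * s^0 + 283533696 * D^2 * t^8 * s^1 + 29956608 * D^2 * t^8 * s^2 + 608256 * D^2 * t^8 * s^3 + 212367744 *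 D^2 * t^9 * s^0 + 63645696 * D^2 * t^9 * s^1 + 4022784 * D^2 * t^9 * s^2 + 37960704 * D^2 * t^10 * s^0 + 6967296 * D^2 * t^10 * s^1 + 124416 * D^2 * t^10 * s^2 + 3552768 * D^2 * t^11 * s^0 + 248832 * D^2 * t^11 * s^1 + 124416 * D^2 * t^12 * s^0 + 331776 * D^3 * t^0 * s^1 + 25007616 * D^3 * t^1 * s^0 + 9123840 * D^3 * t^1 * s^1 + 212716800 * D^3 * t^2 * s^0
private def big3 (D t s : ℝ) : ℝ := 68626944 * D^3 * t^2 * s^1 + 1410048 * D^3 * t^2 * s^2 + 819485184 * D^3 * t^3 * s^0 + 266411520 * D^3 * t^3 * s^1 + 10423296 * D^3 * t^3 * s^2 + 1892350848 * D^3 * t^4 * s^0 + 636569856 * D^3 * t^4 * s^1 + 39280896 * D^3 * t^4 * s^2 + 110592 * D^3 * t^4 * s^3 + 2916728832 * D^3 * t^5 * s^0 + 1012181760 * D^3 * t^5 * s^1 + 78492672 * D^3 * t^5 * s^2 + 884736 * D^3 * t^5 * s^3 + 3152207808 * D^3 * t^6 * s^0 + 1108867584 * D^3 * t^6 * s^1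 + 97922304 * D^3 * t^6 * s^2 + 1658880 * D^3 * t^6 * s^3 + 2429400384 * D^3 * t^7 * s^0 + 838310400 * D^3 * t^7 * s^1 + 76059648 * D^3 * t^7 * s^2 + 1216512 * D^3 * t^7 * s^3 + 1322686944 * D^3 * t^8 * s^0 + 419851008 * D^3 * t^8 * s^1 + 33384960 * D^3 * t^8 * s^2 + 331776 * D^3 * t^8 * s^3 + 490272768 * D^3 * t^9 * s^0 + 127534080 * D^3 * t^9 * s^1 + 6704640 * D^3 * t^9 * s^2 + 115793184 * D^3 * t^10 * s^0 + 20549376 * D^3 * t^10 * s^1 + 456192 * D^3 * t^10 * s^2 + 15731712 * D^3 * t^11 * s^0 + 1430784 * D^3 * t^11 * s^1 + 1036800 * D^3 * t^12 * s^0 + 20736 * D^3 * t^12 * s^1 + 20736 * D^3 * t^13 * s^0 + 5294592 * D^4 * t^1 * s^0 + 663552 * D^4 * t^1 * s^1 + 64309248 * D^4 * t^2 * s^0 + 10197504 * D^4 * t^2 * s^1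
private def big4 (D t s : ℝ) : ℝ := 331087872 * D^4 * t^3 * s^0 + 62277120 * D^4 * t^3 * s^1 + 691200 * D^4 * t^3 * s^2 + 980232768 * D^4 * t^4 * s^0 + 209986560 * D^4 * t^4 * s^1 + 5674752 * D^4 * t^4 * s^2 + 1888419360 * D^4 * t^5 * s^0 + 442001664 * D^4 * t^5 * s^1 + 18109440 * D^4 * t^5 * s^2 + 55296 * D^4 * t^5 * s^3 + 2510984224 * D^4 * t^6 * s^0 + 625130208 * D^4 * t^6 * s^1 + 31677696 * D^4 * t^6 * s^2 + 165888 * D^4 * t^6 * s^3 + 2363448512 * D^4 * t^7 * s^0 + 601440192 * D^4 * t^7 * s^1 + 34231680 * D^4 * t^7 * s^2 + 165888 * D^4 * t^7 * s^3 + 1574482224 * D^4 * t^8 * s^0 + 386253792 * D^4 * t^8 * s^1 + 21050496 * D^4 * t^8 * s^2 + 55296 * D^4 * t^8 * s^3 + 723759936 * D^4 * t^9 * s^0 + 154051200 * D^4 * t^9 * s^1 + 5982336 * D^4 * t^9 * s^2 + 217856080 * D^4 * t^10 * s^0 + 34095744 * D^4 * t^10 * s^1 + 667008 * D^4 * t^10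 * s^2 + 39633744 * D^4 * t^11 * s^0 + 3597696 * D^4 * t^11 * s^1 + 3860784 * D^4 * t^12 * s^0 + 114048 * D^4 * t^12 * s^1 + 155952 * D^4 * t^13 * s^0 + 1296 * D^4 * t^14 * s^0 + 594432 * D^5 * t^1 * s^0 + 11570688 * D^5 * t^2 * s^0 + 603648 * D^5 * t^2 * s^1 + 84481536 * D^5 * t^3 * s^0 + 7718400 * D^5 * t^3 * s^1 + 332191296 * D^5 * t^4 * s^0
private def big5 (D t s : ℝ) : ℝ := 40969728 * D^5 * t^4 * s^1 + 324864 * D^5 * t^4 * s^2 + 819079584 * D^5 * t^5 * s^0 + 119996928 * D^5 * t^5 * s^1 + 2128896 * D^5 * t^5 * s^2 + 1361448592 * D^5 * t^6 * s^0 + 226533600 * D^5 * t^6 * s^1 + 5619456 * D^5 * t^6 * s^2 + 1579790544 * D^5 * t^7 * s^0 + 282251520 * D^5 * t^7 * s^1 + 9096192 * D^5 * t^7 * s^2 + 1290983448 * D^5 * t^8 * s^0 + 233481312 * D^5 * t^8 * s^1 + 7879680 * D^5 * t^8 * s^2 + 731631168 * D^5 * t^9 * s^0 + 120933504 * D^5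 * t^9 * s^1 + 3096576 * D^5 * t^9 * s^2 + 275749800 * D^5 * t^10 * s^0 + 35622720 * D^5 * t^10 * s^1 + 497664 * D^5 * t^10 * s^2 + 64628992 * D^5 * t^11 * s^0 + 5208768 * D^5 * t^11 * s^1 + 8527968 * D^5 * t^12 * s^0 + 271296 * D^5 * t^12 * s^1 + 529632 * D^5 * t^13 * s^0 + 9504 * D^5 * t^14 * s^0 + 27648 * D^6 * t^1 * s^0 + 1147392 * D^6 * t^2 * s^0 + 13278720 * D^6 * t^3 * s^0 + 396288 * D^6 * t^3 * s^1 + 73510272 * D^6 * t^4 * s^0 + 4368384 * D^6 * t^4 * s^1 + 240600192 * D^6 * t^5 * s^0 + 19694592 * D^6 * t^5 * s^1 + 96768 * D^6 * t^5 * s^2 + 512059008 * D^6 * t^6 * s^0 + 52627392 * D^6 * t^6 * s^1 + 483840 * D^6 * t^6 * s^2 + 743897488 * D^6 * t^7 * s^0 + 87628608 * D^6 * t^7 * s^1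
private def big6 (D t s : ℝ) : ℝ := 1389312 * D^6 * t^7 * s^2 + 751903340 * D^6 * t^8 * s^0 + 94828032 * D^6 * t^8 * s^1 + 1734912 * D^6 * t^8 * s^2 + 525830808 * D^6 * t^9 * s^0 + 63933600 * D^6 * t^9 * s^1 + 933120 * D^6 * t^9 * s^2 + 246300428 * D^6 * t^10 * s^0 + 24734304 * D^6 * t^10 * s^1 + 200448 * D^6 * t^10 * s^2 + 72904872 * D^6 * t^11 * s^0 + 4810464 * D^6 * t^11 * s^1 + 12497640 * D^6 * t^12 * s^0 + 366240 * D^6 * t^12 * s^1 + 1075080 * D^6 * t^13 * s^0 + 31320 * D^6 * t^14 * s^0 + 48384 * D^7 * t^2 * s^0 + 1173504 * D^7 * t^3 * s^0 + 10218240 * D^7 * t^4 * s^0 + 195840 * D^7 * t^4 * s^1 + 47152320 * D^7 * t^5 * s^0 + 1776384 * D^7 * t^5 * s^1 + 133336560 * D^7 * t^6 * s^0 + 7525440 * D^7 * t^6 * s^1 + 13824 * D^7 * t^6 * s^2 + 248353296 * D^7 * t^7 * s^0 + 17694720 * D^7 * t^7 * s^1 + 110592 * D^7 * t^7 * s^2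 + 315187100 * D^7 * t^8 * s^0 + 25815168 * D^7 * t^8 * s^1 + 207360 * D^7 * t^8 * s^2 + 273944272 * D^7 * t^9 * s^0 + 23023872 * D^7 * t^9 * s^1 + 152064 * D^7 * t^9 * s^2 + 159436844 * D^7 * t^10 * s^0 + 11686464 * D^7 * t^10 * s^1 + 41472 * D^7 * t^10 * s^2 + 59055152 * D^7 * t^11 * s^0 + 2963520 * D^7 * t^11 * s^1 + 12865272 * D^7 * t^12 * s^0
private def big7 (D t s : ℝ) : ℝ := 309312 * D^7 * t^12 * s^1 + 1455016 * D^7 * t^13 * s^0 + 61320 * D^7 * t^14 * s^0 + 44544 * D^8 * t^3 * s^0 + 806976 * D^8 * t^4 * s^0 + 5880480 * D^8 * t^5 * s^0 + 66816 * D^8 * t^5 * s^1 + 23481504 * D^8 * t^6 * s^0 + 596448 * D^8 * t^6 * s^1 + 58192848 * D^8 * t^7 * s^0 + 2203200 * D^8 * t^7 * s^1 + 3456 * D^8 * t^7 * s^2 + 95008764 * D^8 * t^8 * s^0 + 4578912 * D^8 * t^8 * s^1 + 10368 * D^8 * t^8 * s^2 + 104089984 * D^8 * t^9 * s^0 + 5600160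 * D^8 * t^9 * s^1 + 10368 * D^8 * t^9 * s^2 + 75754788 * D^8 * t^10 * s^0 + 3764448 * D^8 * t^10 * s^1 + 3456 * D^8 * t^10 * s^2 + 35055249 * D^8 * t^11 * s^0 + 1234656 * D^8 * t^11 * s^1 + 9599043 * D^8 * t^12 * s^0 + 169632 * D^8 * t^12 * s^1 + 1386483 * D^8 * t^13 * s^0 + 79441 * D^8 * t^14 * s^0 + 27456 * D^9 * t^4 * s^0 + 419232 * D^9 * t^5 * s^0 + 2649456 * D^9 * t^6 * s^0 + 19680 * D^9 * t^6 * s^1 + 9288816 * D^9 * t^7 * s^0 + 149760 * D^9 * t^7 * s^1 + 20283708 * D^9 * t^8 * s^0 + 495072 * D^9 * t^8 * s^1 + 28679568 * D^9 * t^9 * s^0 + 892032 * D^9 * t^9 * s^1 + 26461540 * D^9 * t^10 * s^0 + 810432 * D^9 * t^10 * s^1 + 15377648 * D^9 * t^11 * s^0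
private def big8 (D t s : ℝ) : ℝ := 343872 * D^9 * t^11 * s^1 + 5274528 * D^9 * t^12 * s^0 + 60480 * D^9 * t^12 * s^1 + 957104 * D^9 * t^13 * s^0 + 71760 * D^9 * t^14 * s^0 + 12864 * D^10 * t^5 * s^0 + 170816 * D^10 * t^6 * s^0 + 950704 * D^10 * t^7 * s^0 + 4032 * D^10 * t^7 * s^1 + 2964612 * D^10 * t^8 * s^0 + 28224 * D^10 * t^8 * s^1 + 5620464 * D^10 * t^9 * s^0 + 87264 * D^10 * t^9 * s^1 + 6731852 * D^10 * t^10 * s^0 + 110880 * D^10 * t^10 * s^1 + 4976636 * D^10 * t^11 * s^0 + 61344 * D^10 * t^11 * s^1 + 2144292 * D^10 * t^12 * s^0 + 13536 * D^10 * t^12 * s^1 + 484692 * D^10 * t^13 * s^0 + 46364 * D^10 * t^14 * s^0 + 4688 * D^11 * t^6 * s^0 + 55152 * D^11 * t^7 * s^0 + 278004 * D^11 * t^8 * s^0 + 576 * D^11 * t^8 * s^1 + 754032 * D^11 * t^9 * s^0 + 4608 * D^11 * t^9 * s^1 + 1219452 * D^11 * t^10 * s^0 + 8640 * D^11 * t^10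 * s^1 + 1173968 * D^11 * t^11 * s^0 + 6336 * D^11 * t^11 * s^1 + 641232 * D^11 * t^12 * s^0 + 1728 * D^11 * t^12 * s^1 + 180096 * D^11 * t^13 * s^0 + 21600 * D^11 * t^14 * s^0 + 1328 * D^12 * t^7 * s^0 + 14692 * D^12 * t^8 * s^0 + 64512 * D^12 * t^9 * s^0 + 96 * D^12 * t^9 * s^1 + 150844 * D^12 * t^10 * s^0
private def big9 (D t s : ℝ) : ℝ := 288 * D^12 * t^10 * s^1 + 196902 * D^12 * t^11 * s^0 + 288 * D^12 * t^11 * s^1 + 138594 * D^12 * t^12 * s^0 + 96 * D^12 * t^12 * s^1 + 48498 * D^12 * t^13 * s^0 + 7206 * D^12 * t^14 * s^0 + 316 * D^13 * t^8 * s^0 + 3056 * D^13 * t^9 * s^0 + 11812 * D^13 * t^10 * s^0 + 22480 * D^13 * t^11 * s^0 + 20928 * D^13 * t^12 * s^0 + 9200 * D^13 * t^13 * s^0 + 1680 * D^13 * t^14 * s^0 + 56 * D^14 * t^9 * s^0 + 504 * D^14 * t^10 * s^0 + 1620 * D^14 * t^11 * s^0 + 2076 * D^14 * t^12 * s^0 +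 1164 * D^14 * t^13 * s^0 + 260 * D^14 * t^14 * s^0 + 8 * D^15 * t^10 * s^0 + 64 * D^15 * t^11 * s^0 + 120 * D^15 * t^12 * s^0 + 88 * D^15 * t^13 * s^0 + 24 * D^15 * t^14 * s^0 + 1 * D^16 * t^11 * s^0 + 3 * D^16 * t^12 * s^0 + 3 * D^16 * t^13 * s^0 + 1 * D^16 * t^14 * s^0

private lemma bigsum_nonneg (D t s : ℝ) (hD : 0 ≤ D) (ht : 0 ≤ t) (hs : 0 ≤ s) :
    (0:ℝ) ≤ big0 D t s + big1 D t s + big2 D t s + big3 D t s + big4 D t s + big5 D t s + big6 D t s + big7 D t s + big8 D t s + big9 D t s := by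
  have hterm : ∀ (c : ℝ) (a b e : ℕ), 0 ≤ c → 0 ≤ c * D^a * t^b * s^e := fun c a b e hc =>
    mul_nonneg (mul_nonneg (mul_nonneg hc (pow_nonneg hD a)) (pow_nonneg ht b)) (pow_nonneg hs e)
  unfold big0 big1 big2 big3 big4 big5 big6 big7 big8 big9
  repeat' apply add_nonneg
  all_goals exact hterm _ _ _ _ (by norm_num)

set_option maxHeartbeats 4000000 in
private lemma alg0 (D t s : ℝ) (hD : 0 ≤ D) (ht : 0 ≤ t) (hs : 0 ≤ s) :
    (D+3)*((D+3)+1)*(t*((D+3) + t*((D+3)*((D+3)-1)/2 + (D+3)*((D+3)-1)*((D+3)-2)*t/6 + (D+3)*((D+3)-1)*((D+3)-2)*((D+3)-3)*t^2/24 + s))+1)*(2*(1+t)*((D+3) + t*((D+3)*((D+3)-1)/2 + (D+3)*((D+3)-1)*((D+3)-2)*t/6 + (D+3)*((D+3)-1)*((D+3)-2)*((D+3)-3)*t^2/24 + s))+(D+3))*((D+3)*((D+3) + t*((D+3)*((D+3)-1)/2 + (D+3)*((D+3)-1)*((D+3)-2)*t/6 + (D+3)*((D+3)-1)*((D+3)-2)*((D+3)-3)*t^2/24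 + s)) - ((D+3)*((D+3)-1)/2 + (D+3)*((D+3)-1)*((D+3)-2)*t/6 + (D+3)*((D+3)-1)*((D+3)-2)*((D+3)-3)*t^2/24 + s)) ≤ 3*(((D+3) + t*((D+3)*((D+3)-1)/2 + (D+3)*((D+3)-1)*((D+3)-2)*t/6 + (D+3)*((D+3)-1)*((D+3)-2)*((D+3)-3)*t^2/24 + s))+((D+3)*((D+3)-1)/2 + (D+3)*((D+3)-1)*((D+3)-2)*t/6 + (D+3)*((D+3)-1)*((D+3)-2)*((D+3)-3)*t^2/24 + s))*((D+3) + t*((D+3)*((D+3)-1)/2 + (D+3)*((D+3)-1)*((D+3)-2)*t/6 + (D+3)*((D+3)-1)*((D+3)-2)*((D+3)-3)*t^2/24 + s))*((1+t)*((D+3) + t*((D+3)*((D+3)-1)/2 + (D+3)*((D+3)-1)*((D+3)-2)*t/6 + (D+3)*((D+3)-1)*((D+3)-2)*((D+3)-3)*t^2/24 + s))+1)*(2*(1+t)*((D+3) + t*((D+3)*((D+3)-1)/2 + (D+3)*((D+3)-1)*((D+3)-2)*t/6 + (D+3)*((D+3)-1)*((D+3)-2)*((D+3)-3)*t^2/24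 + s)) - (D+3)) := by
  rw [← sub_nonneg]
  have key : 3*(((D+3) + t*((D+3)*((D+3)-1)/2 + (D+3)*((D+3)-1)*((D+3)-2)*t/6 + (D+3)*((D+3)-1)*((D+3)-2)*((D+3)-3)*t^2/24 + s))+((D+3)*((D+3)-1)/2 + (D+3)*((D+3)-1)*((D+3)-2)*t/6 + (D+3)*((D+3)-1)*((D+3)-2)*((D+3)-3)*t^2/24 + s))*((D+3) + t*((D+3)*((D+3)-1)/2 + (D+3)*((D+3)-1)*((D+3)-2)*t/6 + (D+3)*((D+3)-1)*((D+3)-2)*((D+3)-3)*t^2/24 + s))*((1+t)*((D+3) + t*((D+3)*((D+3)-1)/2 + (D+3)*((D+3)-1)*((D+3)-2)*t/6 + (D+3)*((D+3)-1)*((D+3)-2)*((D+3)-3)*t^2/24 + s))+1)*(2*(1+t)*((D+3) + t*((D+3)*((D+3)-1)/2 + (D+3)*((D+3)-1)*((D+3)-2)*t/6 + (D+3)*((D+3)-1)*((D+3)-2)*((D+3)-3)*t^2/24 + s)) - (D+3)) - ((D+3)*((D+3)+1)*(t*((D+3) + t*((D+3)*((D+3)-1)/2 + (D+3)*((D+3)-1)*((D+3)-2)*t/6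 + (D+3)*((D+3)-1)*((D+3)-2)*((D+3)-3)*t^2/24 + s))+1)*(2*(1+t)*((D+3) + t*((D+3)*((D+3)-1)/2 + (D+3)*((D+3)-1)*((D+3)-2)*t/6 + (D+3)*((D+3)-1)*((D+3)-2)*((D+3)-3)*t^2/24 + s))+(D+3))*((D+3)*((D+3) + t*((D+3)*((D+3)-1)/2 + (D+3)*((D+3)-1)*((D+3)-2)*t/6 + (D+3)*((D+3)-1)*((D+3)-2)*((D+3)-3)*t^2/24 + s)) - ((D+3)*((D+3)-1)/2 + (D+3)*((D+3)-1)*((D+3)-2)*t/6 + (D+3)*((D+3)-1)*((D+3)-2)*((D+3)-3)*t^2/24 + s))) = (1/55296) * (big0 D t s + big1 D t s + big2 D t s + big3 D t s + big4 D t s + big5 D t s + big6 D t s + big7 D t s + big8 D t s + big9 D t s) := by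
    unfold big0 big1 big2 big3 big4 big5 big6 big7 big8 big9
    ring
  rw [key]
  exact mul_nonneg (by norm_num) (bigsum_nonneg D t s hD ht hs)

private lemma alg (d t s M P : ℝ) (hd : 3 ≤ d) (ht : 0 ≤ t) (hs : 0 ≤ s)
    (hM : M = d*(d-1)/2 + d*(d-1)*(d-2)*t/6 + d*(d-1)*(d-2)*(d-3)*t^2/24 + s)
    (hP : P = d + t*M) :
    d*(d+1)*(t*P+1)*(2*(1+t)*P+d)*(d*P - M) ≤ 3*(P+M)*P*((1+t)*P+1)*(2*(1+t)*P - d) := by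
  obtain ⟨D, hD, rfl⟩ : ∃ D, 0 ≤ D ∧ d = D + 3 := ⟨d - 3, by linarith, by ring⟩
  subst hM; subst hP
  exact alg0 D t s hD ht hs

private noncomputable def sP (d : ℕ) (x : ℝ) : ℝ := ∑ i ∈ range d, x ^ i
private noncomputable def sT (d : ℕ) (x : ℝ) : ℝ := ∑ i ∈ range d, (i : ℝ) * x ^ i
private noncomputable def sDP (d : ℕ) (x : ℝ) : ℝ := ∑ i ∈ range d, (i : ℝ) * x ^ (i - 1)

private lemma hasDerivAt_sP (d : ℕ) (x : ℝ) : HasDerivAt (sP d) (sDP d x) x := by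
  unfold sP sDP
  exact HasDerivAt.fun_sum (fun i _ => hasDerivAt_pow i x)

private lemma f1 (d : ℕ) (x : ℝ) : (x - 1) * sP d x = x ^ d - 1 := by
  rw [mul_comm]; exact geom_sum_mul x d

private lemma f2 (d : ℕ) (x : ℝ) : (x - 1) * sT d x = d * x ^ d - x * sP d x := by
  induction d with
  | zero => simp [sT, sP]
  | succ n ih =>
    unfold sT sP at *
    rw [Finset.sum_range_succ, Finset.sum_range_succ (f := fun i => x ^ i)]
    push_cast
    linear_combination ih

private lemma f6 (d : ℕ) (x : ℝ) : x * sDP d x = sT d x := by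
  unfold sT sDP
  rw [Finset.mul_sum]
  refine Finset.sum_congr rfl (fun i _ => ?_)
  cases i with
  | zero => simp
  | succ n => rw [Nat.succ_sub_one]; push_cast; ring

private lemma sum_id_real (d : ℕ) : ∑ i ∈ range d, (i : ℝ) = d * (d - 1) / 2 := by
  induction d with
  | zero => simp
  | succ n ih => rw [Finset.sum_range_succ, ih]; push_cast; ring

private lemma sum_sq_real (d : ℕ) :
    ∑ i ∈ range d, (i : ℝ) * (i - 1) / 2 = d * (d - 1) * (d - 2) / 6 := by
  induction d with
  | zero => simp
  | succ n ih => rw [Finset.sum_range_succ, ih]; push_cast; ring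

private lemma sum_cube_real (d : ℕ) :
    ∑ i ∈ range d, (i : ℝ) * (i - 1) * (i - 2) / 6 = d * (d - 1) * (d - 2) * (d - 3) / 24 := by
  induction d with
  | zero => simp
  | succ n ih => rw [Finset.sum_range_succ, ih]; push_cast; ring

private lemma nn2 (n : ℕ) : (0 : ℝ) ≤ (n : ℝ) * (n - 1) := by
  rcases n with _ | m
  · norm_num
  · have e : ((m+1:ℕ):ℝ) * (((m+1:ℕ):ℝ) - 1) = ((m:ℝ)+1)*(m:ℝ) := by push_cast; ring
    rw [e]; positivity

private lemma nn3 (n : ℕ) : (0 : ℝ) ≤ (n : ℝ) * (n - 1) * (n - 2) := by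
  rcases n with _ | _ | m
  · norm_num
  · norm_num
  · have e : ((m+2:ℕ):ℝ) * (((m+2:ℕ):ℝ) - 1) * (((m+2:ℕ):ℝ) - 2) = ((m:ℝ)+2)*((m:ℝ)+1)*(m:ℝ) := by push_cast; ring
    rw [e]; positivity

private lemma pow_bound (t : ℝ) (ht : 0 ≤ t) :
    ∀ n : ℕ, 1 + n * t + (n : ℝ) * (n - 1) / 2 * t ^ 2 + (n : ℝ) * (n - 1) * (n - 2) / 6 * t ^ 3
      ≤ (1 + t) ^ n := by
  intro n
  induction n with
  | zero => norm_num
  | succ m ih =>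
    have h2 := nn2 m
    have h3 := nn3 m
    have hm : (0:ℝ) ≤ m := Nat.cast_nonneg m
    calc 1 + (m + 1 : ℕ) * t + ((m + 1 : ℕ) : ℝ) * ((m + 1 : ℕ) - 1) / 2 * t ^ 2
          + ((m + 1 : ℕ) : ℝ) * ((m + 1 : ℕ) - 1) * ((m + 1 : ℕ) - 2) / 6 * t ^ 3
        ≤ (1 + m * t + (m : ℝ) * (m - 1) / 2 * t ^ 2
            + (m : ℝ) * (m - 1) * (m - 2) / 6 * t ^ 3) * (1 + t) := by
          push_cast
          nlinarith [mul_nonneg (mul_nonneg h3 ht) (mul_nonneg (mul_nonneg ht ht) ht),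
            mul_nonneg h2 ht, mul_nonneg (mul_nonneg h2 ht) ht, mul_nonneg hm ht]
      _ ≤ (1 + t) ^ m * (1 + t) := by
          refine mul_le_mul_of_nonneg_right ih (by linarith)
      _ = (1 + t) ^ (m + 1) := by rw [pow_succ]

private lemma binom_lower (d : ℕ) (t : ℝ) (ht : 0 ≤ t) :
    (d : ℝ) + d * (d-1) / 2 * t + d * (d-1) * (d-2) / 6 * t ^ 2
      + d * (d-1) * (d-2) * (d-3) / 24 * t ^ 3 ≤ sP d (1 + t) := by
  have key : ∀ i ∈ range d,
      1 + (i : ℝ) * t + (i : ℝ) * (i - 1) / 2 * t ^ 2 + (i : ℝ) * (i - 1) * (i - 2) / 6 * t ^ 3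
        ≤ (1 + t) ^ i := fun i _ => pow_bound t ht i
  have hsum := Finset.sum_le_sum key
  have e1 : ∑ i ∈ range d, (1 + (i : ℝ) * t + (i : ℝ) * (i - 1) / 2 * t ^ 2
      + (i : ℝ) * (i - 1) * (i - 2) / 6 * t ^ 3)
      = (d : ℝ) + (∑ i ∈ range d, (i:ℝ)) * t + (∑ i ∈ range d, (i : ℝ) * (i - 1) / 2) * t ^ 2
        + (∑ i ∈ range d, (i : ℝ) * (i - 1) * (i - 2) / 6) * t ^ 3 := by
    rw [Finset.sum_add_distrib, Finset.sum_add_distrib, Finset.sum_add_distrib,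
      ← Finset.sum_mul, ← Finset.sum_mul, ← Finset.sum_mul]
    simp
  rw [e1, sum_id_real, sum_sq_real, sum_cube_real] at hsum
  unfold sP
  calc (d : ℝ) + d * (d-1) / 2 * t + d * (d-1) * (d-2) / 6 * t ^ 2
      + d * (d-1) * (d-2) * (d-3) / 24 * t ^ 3
      = (d : ℝ) + d * (d-1) / 2 * t + d * (d-1) * (d-2) / 6 * t ^ 2
        + d * (d-1) * (d-2) * (d-3) / 24 * t ^ 3 := rfl
    _ ≤ _ := hsum

private lemma pade (n : ℕ) (S : ℝ) (hS : (n : ℝ) / 2 < S) :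
    (S + 1) ^ n * (2 * S - n) ≤ S ^ n * (2 * S + n) := by
  induction n with
  | zero => norm_num
  | succ m ih =>
    have hm : (m : ℝ) / 2 < S := by
      have : (m : ℝ) ≤ (m + 1 : ℕ) := by push_cast; linarith
      push_cast at hS ⊢; linarith
    have hS0 : 0 < S := lt_of_le_of_lt (by positivity) hm
    have ih' := ih hm
    have hfac : (0 : ℝ) ≤ (S + 1) * (2 * S - (m + 1 : ℕ)) := by
      push_cast at hS ⊢; nlinarith
    have h2Sm : (0 : ℝ) < 2 * S - m := by push_cast at hm ⊢; linarith
    -- multiply ih' by (S+1)*(2S-(m+1)) ≥ 0 ... careful direction; instead prove via cancel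
    have key : (S + 1) ^ (m+1) * (2 * S - (m+1:ℕ)) * (2 * S - m)
        ≤ S ^ (m+1) * (2 * S + (m+1:ℕ)) * (2 * S - m) := by
      have e1 : (S + 1) ^ (m+1) * (2 * S - (m+1:ℕ)) * (2 * S - m)
          = ((S + 1) ^ m * (2 * S - m)) * ((S + 1) * (2 * S - (m+1:ℕ))) := by
        push_cast; ring
      have e2 : ((S + 1) ^ m * (2 * S - m)) * ((S + 1) * (2 * S - (m+1:ℕ)))
          ≤ (S ^ m * (2 * S + m)) * ((S + 1) * (2 * S - (m+1:ℕ))) :=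
        mul_le_mul_of_nonneg_right ih' hfac
      have e3 : (S ^ m * (2 * S + m)) * ((S + 1) * (2 * S - (m+1:ℕ)))
          ≤ S ^ (m+1) * (2 * S + (m+1:ℕ)) * (2 * S - m) := by
        have hpow : (0:ℝ) ≤ S ^ m := le_of_lt (pow_pos hS0 m)
        have hpoly : (2 * S + m) * ((S + 1) * (2 * S - (m+1:ℕ)))
            ≤ S * ((2 * S + (m+1:ℕ)) * (2 * S - m)) := by
          push_cast; nlinarith [Nat.cast_nonneg (α := ℝ) m]
        calc (S ^ m * (2 * S + m)) * ((S + 1) * (2 * S - (m+1:ℕ)))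
            = S ^ m * ((2 * S + m) * ((S + 1) * (2 * S - (m+1:ℕ)))) := by ring
          _ ≤ S ^ m * (S * ((2 * S + (m+1:ℕ)) * (2 * S - m))) :=
              mul_le_mul_of_nonneg_left hpoly hpow
          _ = S ^ (m+1) * (2 * S + (m+1:ℕ)) * (2 * S - m) := by rw [pow_succ]; ring
      linarith [e1 ▸ e2, e3]
    exact le_of_mul_le_mul_right key h2Sm

private lemma main' (d : ℕ) (hd3 : (3:ℝ) ≤ (d:ℝ)) (x : ℝ) (hx : 1 < x) :
    (d:ℝ)*((d:ℝ)+1)*x^d*(2*x*sP d x+(d:ℝ))*(sP d x + sT d x)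
      ≤ 3*((d:ℝ)*sP d x - sT d x)*sP d x*(sP d x + x^d)*(2*x*sP d x - (d:ℝ)) := by
  set P := sP d x with hPdef
  set T := sT d x with hTdef
  set t := x - 1 with htdef
  have ht0 : 0 < t := by rw [htdef]; linarith
  have h1 : t * P = x ^ d - 1 := by rw [htdef, hPdef]; exact f1 d x
  have h2 : t * T = (d:ℝ) * x ^ d - x * P := by rw [htdef, hTdef, hPdef]; exact f2 d x
  have hx1t : x = 1 + t := by rw [htdef]; ring
  set M := (P - (d:ℝ)) / t with hMdef
  have hm : t * M = P - (d:ℝ) := by rw [hMdef]; field_simp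
  have hPM : P = (d:ℝ) + t * M := by rw [hm]; ring
  set M0 : ℝ := (d:ℝ)*((d:ℝ)-1)/2 + (d:ℝ)*((d:ℝ)-1)*((d:ℝ)-2)*t/6
      + (d:ℝ)*((d:ℝ)-1)*((d:ℝ)-2)*((d:ℝ)-3)*t^2/24 with hM0def
  have hbin : (d : ℝ) + t * M0 ≤ P := by
    have hb := binom_lower d t (le_of_lt ht0)
    rw [← hx1t] at hb
    rw [← hPdef] at hb
    rw [hM0def]
    nlinarith [hb]
  have hs0 : 0 ≤ M - M0 := by
    have e : M - M0 = (P - (d:ℝ) - t*M0)/t := by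
      rw [eq_div_iff (ne_of_gt ht0)]; linear_combination hm
    rw [e]
    apply div_nonneg _ (le_of_lt ht0)
    linarith
  have halg := alg (d:ℝ) t (M - M0) M P hd3 (le_of_lt ht0) hs0 (by rw [hM0def]; ring) hPM
  have A2 : (1:ℝ) + t = x := by rw [htdef]; ring
  rw [A2] at halg
  have A1 : t * P + 1 = x ^ d := by linarith
  rw [A1] at halg
  have hxP : x * P - P = t * P := by rw [htdef]; ring
  have A3 : x * P + 1 = P + x ^ d := by linarith
  rw [A3] at halg
  have A4 : P + M = (d:ℝ) * P - T := by
    have key : t * (P + M) = t * ((d:ℝ) * P - T) := by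
      linear_combination hm + (-(d:ℝ))*h1 + h2
    exact mul_left_cancel₀ (ne_of_gt ht0) key
  have A5 : (d:ℝ) * P - M = P + T := by
    have key : t * ((d:ℝ) * P - M) = t * (P + T) := by
      linear_combination (-1 : ℝ)*hm + (d:ℝ)*h1 - h2
    exact mul_left_cancel₀ (ne_of_gt ht0) key
  rw [A4, A5] at halg
  exact halg

private noncomputable def Kf (d : ℕ) (C a : ℝ) (x : ℝ) : ℝ :=
  C * (sP d x + x ^ d) ^ d - (sP d x) ^ d * (sP d x - a - (a - 1) * x ^ d)

private noncomputable def Kd (d : ℕ) (C a : ℝ) (x : ℝ) : ℝ :=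
  C * ((d:ℝ) * (sP d x + x ^ d) ^ (d - 1) * (sDP d x + (d:ℝ) * x ^ (d - 1)))
    - ((d:ℝ) * (sP d x) ^ (d - 1) * sDP d x * (sP d x - a - (a - 1) * x ^ d)
        + (sP d x) ^ d * (sDP d x - (a - 1) * ((d:ℝ) * x ^ (d - 1))))

set_option maxHeartbeats 1000000 in
private lemma crux (d : ℕ) (C aa : ℝ) (x : ℝ) (hd48 : 48 ≤ d) (hC : 0 < C) (ha : 2 ≤ aa)
    (h3C : 3 * C ≤ (d:ℝ) - 6 * aa) (hx : 1 < x) (hroot : Kf d C aa x = 0) :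
    0 < Kd d C aa x := by
  have hx0 : (0:ℝ) < x := by linarith
  have hd48r : (48:ℝ) ≤ (d:ℝ) := by exact_mod_cast hd48
  set px := sP d x with hpx
  set tx := sT d x with htx
  set dpx := sDP d x with hdpx
  have hf1x : (x - 1) * px = x ^ d - 1 := f1 d x
  have hf2x : (x - 1) * tx = d * x ^ d - x * px := f2 d x
  have hf6x : x * dpx = tx := f6 d x
  have hP0 : 0 < px := by
    rw [hpx]; unfold sP
    exact Finset.sum_pos (fun i _ => pow_pos hx0 i) (Finset.nonempty_range_iff.mpr (by omega))
  have hPd : (d:ℝ) ≤ px := by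
    rw [hpx]; unfold sP
    calc (d:ℝ) = ∑ _i ∈ range d, (1:ℝ) := by simp
      _ ≤ ∑ i ∈ range d, x ^ i := Finset.sum_le_sum (fun i _ => one_le_pow₀ hx.le)
  have hT0 : 0 ≤ tx := by
    rw [htx]; unfold sT
    exact Finset.sum_nonneg (fun i _ => by positivity)
  have hy0 : (0:ℝ) < x ^ d := pow_pos hx0 d
  have hS1pos : (0:ℝ) < px + x ^ d := by linarith
  have hS1 : x * px + 1 = px + x ^ d := by linarith [hf1x]
  have hgr : C * (px + x ^ d) ^ d = px ^ d * (px - aa - (aa - 1) * x ^ d) := by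
    have h := hroot
    unfold Kf at h
    rw [← hpx] at h
    linarith
  have hpdpos : (0:ℝ) < px ^ d := pow_pos hP0 d
  have hg0 : 0 < px - aa - (aa - 1) * x ^ d := by
    have h1 : 0 < C * (px + x ^ d) ^ d := mul_pos hC (pow_pos hS1pos d)
    rw [hgr] at h1
    by_contra hcon
    push_neg at hcon
    nlinarith [mul_nonneg hpdpos.le (neg_nonneg.mpr hcon)]
  have hSd2 : (d:ℝ)/2 < x * px := by nlinarith
  have hgb : (px - aa - (aa - 1) * x ^ d) * (2 * x * px - (d:ℝ)) ≤ C * x ^ d * (2 * x * px + (d:ℝ)) := by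
    have hcalc : ((px - aa - (aa - 1) * x ^ d) * (2 * x * px - (d:ℝ))) * px ^ d
        ≤ (C * x ^ d * (2 * x * px + (d:ℝ))) * px ^ d := by
      calc ((px - aa - (aa - 1) * x ^ d) * (2 * x * px - (d:ℝ))) * px ^ d
          = (C * (px + x ^ d) ^ d) * (2 * x * px - (d:ℝ)) := by rw [hgr]; ring
        _ = C * ((x * px + 1) ^ d * (2 * (x * px) - (d:ℝ))) := by rw [hS1]; ring
        _ ≤ C * ((x * px) ^ d * (2 * (x * px) + (d:ℝ))) :=
            mul_le_mul_of_nonneg_left (pade d (x * px) hSd2) hC.le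
        _ = (C * x ^ d * (2 * x * px + (d:ℝ))) * px ^ d := by rw [mul_pow]; ring
    exact le_of_mul_le_mul_right hcalc hpdpos
  have hMAIN := main' d (by linarith) x hx
  rw [← hpx, ← htx] at hMAIN
  have hVe : (d:ℝ) * px - tx = ∑ i ∈ range d, ((d:ℝ) - i) * x ^ i := by
    rw [hpx, htx]; unfold sP sT
    rw [Finset.mul_sum, ← Finset.sum_sub_distrib]
    exact Finset.sum_congr rfl (fun i _ => by ring)
  have hVb : (d:ℝ) * ((d:ℝ) + 1) / 2 ≤ (d:ℝ) * px - tx := by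
    rw [hVe]
    have h1 : ∑ i ∈ range d, ((d:ℝ) - i) ≤ ∑ i ∈ range d, ((d:ℝ) - i) * x ^ i := by
      refine Finset.sum_le_sum (fun i hi => ?_)
      have hir := Finset.mem_range.mp hi
      have hdi : (0:ℝ) ≤ (d:ℝ) - i := by
        have : (i:ℝ) ≤ (d:ℝ) := by exact_mod_cast hir.le
        linarith
      nlinarith [one_le_pow₀ (a := x) (n := i) hx.le]
    have h2 : ∑ i ∈ range d, ((d:ℝ) - i) = (d:ℝ) * ((d:ℝ) + 1) / 2 := by
      rw [Finset.sum_sub_distrib, Finset.sum_const, card_range, sum_id_real]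
      push_cast
      ring
    linarith
  have hW0 : (0:ℝ) < px + tx := by linarith
  have h6a0 : (0:ℝ) ≤ (d:ℝ) - 6 * aa := by linarith
  have hApos : (0:ℝ) < 2 * x * px - (d:ℝ) := by nlinarith
  have c4 : ((d:ℝ) - 6 * aa) * ((d:ℝ) * px - tx) < ((d:ℝ) + 1) * ((d:ℝ) * px - tx - (d:ℝ) * aa) := by
    nlinarith [mul_le_mul_of_nonneg_left hVb (show (0:ℝ) ≤ 6*aa+1 by linarith),
      mul_pos (mul_pos (show (0:ℝ) < (d:ℝ) by linarith) (show (0:ℝ) < (d:ℝ)+1 by linarith))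
        (show (0:ℝ) < 4*aa+1 by linarith)]
  have hT' : (d:ℝ) * ((px - aa - (aa - 1) * x ^ d) * (px + tx))
      < ((d:ℝ) * px - tx - (d:ℝ) * aa) * (px * (px + x ^ d)) := by
    have hfacpos : (0:ℝ) < 3 * ((d:ℝ) + 1) * (2 * x * px - (d:ℝ)) := by nlinarith
    have hchain : ((d:ℝ) * ((px - aa - (aa - 1) * x ^ d) * (px + tx))) * (3 * ((d:ℝ) + 1) * (2 * x * px - (d:ℝ)))
        < (((d:ℝ) * px - tx - (d:ℝ) * aa) * (px * (px + x ^ d))) * (3 * ((d:ℝ) + 1) * (2 * x * px - (d:ℝ))) := by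
      calc ((d:ℝ) * ((px - aa - (aa - 1) * x ^ d) * (px + tx))) * (3 * ((d:ℝ) + 1) * (2 * x * px - (d:ℝ)))
          = (3 * ((d:ℝ) + 1) * (d:ℝ) * (px + tx)) * ((px - aa - (aa - 1) * x ^ d) * (2 * x * px - (d:ℝ))) := by
            ring
        _ ≤ (3 * ((d:ℝ) + 1) * (d:ℝ) * (px + tx)) * (C * x ^ d * (2 * x * px + (d:ℝ))) := by
            refine mul_le_mul_of_nonneg_left hgb ?_
            have h0d : (0:ℝ) ≤ (d:ℝ) := Nat.cast_nonneg d
            nlinarith [mul_nonneg (mul_nonneg (show (0:ℝ) ≤ 3*((d:ℝ)+1) by linarith) h0d) hW0.le]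
        _ = (3 * C) * ((d:ℝ) * ((d:ℝ) + 1) * x ^ d * (2 * x * px + (d:ℝ)) * (px + tx)) := by ring
        _ ≤ ((d:ℝ) - 6 * aa) * ((d:ℝ) * ((d:ℝ) + 1) * x ^ d * (2 * x * px + (d:ℝ)) * (px + tx)) := by
            refine mul_le_mul_of_nonneg_right h3C ?_
            have h0d : (0:ℝ) ≤ (d:ℝ) := Nat.cast_nonneg d
            have h1 : (0:ℝ) ≤ 2 * x * px + (d:ℝ) := by nlinarith
            have h2 := hW0.le
            positivity
        _ ≤ ((d:ℝ) - 6 * aa) * (3 * ((d:ℝ) * px - tx) * px * (px + x ^ d) * (2 * x * px - (d:ℝ))) :=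
            mul_le_mul_of_nonneg_left hMAIN h6a0
        _ = (((d:ℝ) - 6 * aa) * ((d:ℝ) * px - tx)) * (3 * px * (px + x ^ d) * (2 * x * px - (d:ℝ))) := by
            ring
        _ < (((d:ℝ) + 1) * ((d:ℝ) * px - tx - (d:ℝ) * aa)) * (3 * px * (px + x ^ d) * (2 * x * px - (d:ℝ))) := by
            refine mul_lt_mul_of_pos_right c4 ?_
            have := hP0
            have := hS1pos
            positivity
        _ = (((d:ℝ) * px - tx - (d:ℝ) * aa) * (px * (px + x ^ d))) * (3 * ((d:ℝ) + 1) * (2 * x * px - (d:ℝ))) := by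
            ring
    exact lt_of_mul_lt_mul_right hchain hfacpos.le
  -- identity linking Kd with the bracket
  have hepd : px ^ (d - 1) * px = px ^ d := by
    rw [← pow_succ]
    congr 1
    omega
  have hea1 : (px + x ^ d) ^ (d - 1) * (px + x ^ d) = (px + x ^ d) ^ d := by
    rw [← pow_succ]
    congr 1
    omega
  have hex : x ^ (d - 1) * x = x ^ d := by
    rw [← pow_succ]
    congr 1
    omega
  have he1 : C * ((px + x ^ d) ^ (d - 1) * (px + x ^ d))
      = px ^ (d - 1) * px * (px - aa - (aa - 1) * x ^ d) := by
    rw [hea1, hepd, hgr]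
  have kid : (x - 1) * (x * (px + x ^ d) * Kd d C aa x)
      = (x - 1) * (px ^ (d - 1) * (((d:ℝ) * px - tx - (d:ℝ) * aa) * (px * (px + x ^ d))
          - (d:ℝ) * ((px - aa - (aa - 1) * x ^ d) * (px + tx)))) := by
    unfold Kd
    rw [← hdpx]
    linear_combination (((-1) * x * (x^(d-1)) * ((d:ℕ):ℝ)^2 + (-1) * x * dpx * ((d:ℕ):ℝ) + (1) * x^2 * (x^(d-1)) * ((d:ℕ):ℝ)^2 + (1) * x^2 * dpx * ((d:ℕ):ℝ))) * he1 + (((-1) * x * (x^(d-1)) * (x^d) * ((d:ℕ):ℝ) + (1) * x * (x^(d-1)) * (x^d) * aa * ((d:ℕ):ℝ) + (-1) * x * dpx * (x^d) + (-1) * x * px * (x^(d-1)) * ((d:ℕ):ℝ) + (1) * x * px * (x^(d-1)) * aa * ((d:ℕ):ℝ) + (-1) * x * px * dpx + (1) * x^2 * (x^(d-1)) * (x^d) * ((d:ℕ):ℝ) + (-1) * x^2 * (x^(d-1)) * (x^d) * aa * ((d:ℕ):ℝ) + (1) * x^2 * dpx * (x^d) + (1) * x^2 * px * (x^(d-1))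 * ((d:ℕ):ℝ) + (-1) * x^2 * px * (x^(d-1)) * aa * ((d:ℕ):ℝ) + (1) * x^2 * px * dpx)) * hepd + (((-1) * (x^d) * aa * (px^(d-1)) * ((d:ℕ):ℝ) + (1) * (x^d)^2 * (px^(d-1)) * ((d:ℕ):ℝ) + (-1) * (x^d)^2 * aa * (px^(d-1)) * ((d:ℕ):ℝ) + (1) * px * (x^d) * (px^(d-1)) + (1) * px * (x^d) * (px^(d-1)) * ((d:ℕ):ℝ) + (1) * px^2 * (px^(d-1)) + (1) * x * (x^d) * aa * (px^(d-1)) * ((d:ℕ):ℝ) + (-1) * x * (x^d)^2 * (px^(d-1)) * ((d:ℕ):ℝ) + (1) * x * (x^d)^2 * aa * (px^(d-1)) * ((d:ℕ):ℝ) + (-1) * x * px * (x^d) * (px^(d-1)) + (-1) * x * px * (x^d) * (px^(d-1)) * ((d:ℕ):ℝ) + (-1) * x * px^2 * (px^(d-1)))) * hf6x +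
      (((1) * px * aa * (px^(d-1)) * ((d:ℕ):ℝ)^2 + (1) * px * (x^d) * (px^(d-1)) * ((d:ℕ):ℝ) + (-1) * px * (x^d) * (px^(d-1)) * ((d:ℕ):ℝ)^2 + (-1) * px * (x^d) * aa * (px^(d-1)) * ((d:ℕ):ℝ) + (1) * px * (x^d) * aa * (px^(d-1)) * ((d:ℕ):ℝ)^2 + (1) * px^2 * (px^(d-1)) * ((d:ℕ):ℝ) + (-1) * px^2 * (px^(d-1)) * ((d:ℕ):ℝ)^2 + (-1) * px^2 * aa * (px^(d-1)) * ((d:ℕ):ℝ) + (-1) * x * px * aa * (px^(d-1)) * ((d:ℕ):ℝ)^2 + (-1) * x * px * (x^d) * (px^(d-1)) * ((d:ℕ):ℝ) + (1) * x * px * (x^d) * (px^(d-1)) * ((d:ℕ):ℝ)^2 + (1) * x * px * (x^d) * aa * (px^(d-1)) * ((d:ℕ):ℝ) + (-1) * x * px * (x^d) * aa * (px^(d-1)) * ((d:ℕ):ℝ)^2 + (-1) * x * px^2 * (px^(d-1)) * ((d:ℕ):ℝ) + (1) * x * px^2 * (px^(d-1)) * ((d:ℕ):ℝ)^2 + (1)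 * x * px^2 * aa * (px^(d-1)) * ((d:ℕ):ℝ))) * hex + (((1) * tx * aa * (px^(d-1)) * ((d:ℕ):ℝ) + (-1) * (x^d) * tx * (px^(d-1)) * ((d:ℕ):ℝ) + (1) * (x^d) * tx * aa * (px^(d-1)) * ((d:ℕ):ℝ) + (1) * px * aa * (px^(d-1)) * ((d:ℕ):ℝ) + (-1) * px * tx * aa * (px^(d-1)) * ((d:ℕ):ℝ) + (-1) * px * (x^d) * (px^(d-1)) * ((d:ℕ):ℝ) + (1) * px * (x^d) * (px^(d-1)) * ((d:ℕ):ℝ)^2 + (1) * px * (x^d) * aa * (px^(d-1)) * ((d:ℕ):ℝ) + (-1) * px * (x^d) * aa * (px^(d-1)) * ((d:ℕ):ℝ)^2 + (-1) * px^2 * (px^(d-1)) * ((d:ℕ):ℝ) + (-1) * x * tx * aa * (px^(d-1)) * ((d:ℕ):ℝ) + (1) * x * (x^d) * tx * (px^(d-1)) * ((d:ℕ):ℝ) + (-1) * x * (x^d) * tx * aa * (px^(d-1)) * ((d:ℕ):ℝ) + (-1) * x * px * aa * (px^(d-1)) * ((d:ℕ):ℝ) + (-1) * x * px * tx * (px^(d-1))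 * ((d:ℕ):ℝ) + (2) * x * px * tx * aa * (px^(d-1)) * ((d:ℕ):ℝ) + (1) * x * px * (x^d) * (px^(d-1)) * ((d:ℕ):ℝ) + (-1) * x * px * (x^d) * (px^(d-1)) * ((d:ℕ):ℝ)^2 + (-1) * x * px * (x^d) * aa * (px^(d-1)) * ((d:ℕ):ℝ) + (1) * x * px * (x^d) * aa * (px^(d-1)) * ((d:ℕ):ℝ)^2 + (1) * x * px^2 * aa * (px^(d-1)) * ((d:ℕ):ℝ) + (1) * x^2 * px * tx * (px^(d-1)) * ((d:ℕ):ℝ) + (-1) * x^2 * px * tx * aa * (px^(d-1)) * ((d:ℕ):ℝ) + (1) * x^2 * px^2 * (px^(d-1)) * ((d:ℕ):ℝ) + (-1) * x^2 * px^2 * aa * (px^(d-1)) * ((d:ℕ):ℝ))) * hf1x + (((1) * px * (px^(d-1)) * ((d:ℕ):ℝ) + (-2) * px * aa * (px^(d-1)) * ((d:ℕ):ℝ) + (1) * px^2 * aa * (px^(d-1)) * ((d:ℕ):ℝ) + (-1) * x * px * (px^(d-1)) * ((d:ℕ):ℝ) + (2) * x * px * aa * (px^(d-1)) * ((d:ℕ):ℝ)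 + (1) * x * px^2 * (px^(d-1)) * ((d:ℕ):ℝ) + (-2) * x * px^2 * aa * (px^(d-1)) * ((d:ℕ):ℝ) + (-1) * x^2 * px^2 * (px^(d-1)) * ((d:ℕ):ℝ) + (1) * x^2 * px^2 * aa * (px^(d-1)) * ((d:ℕ):ℝ))) * hf2x
  have kid' : x * (px + x ^ d) * Kd d C aa x
      = px ^ (d - 1) * (((d:ℝ) * px - tx - (d:ℝ) * aa) * (px * (px + x ^ d))
          - (d:ℝ) * ((px - aa - (aa - 1) * x ^ d) * (px + tx))) :=
    mul_left_cancel₀ (sub_ne_zero.mpr hx.ne') kid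
  have hbr : 0 < px ^ (d - 1) * (((d:ℝ) * px - tx - (d:ℝ) * aa) * (px * (px + x ^ d))
      - (d:ℝ) * ((px - aa - (aa - 1) * x ^ d) * (px + tx))) := by
    have h1 : 0 < px ^ (d - 1) := pow_pos hP0 (d - 1)
    have h2 : 0 < ((d:ℝ) * px - tx - (d:ℝ) * aa) * (px * (px + x ^ d))
        - (d:ℝ) * ((px - aa - (aa - 1) * x ^ d) * (px + tx)) := by linarith
    exact mul_pos h1 h2
  rw [← kid'] at hbr
  by_contra hcon
  push_neg at hcon
  nlinarith [mul_nonpos_of_nonneg_of_nonpos (mul_pos hx0 hS1pos).le hcon]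

private lemma hasDerivAt_Kf (d : ℕ) (C a : ℝ) (x : ℝ) :
    HasDerivAt (Kf d C a) (Kd d C a x) x := by
  have hP := hasDerivAt_sP d x
  have hxd := hasDerivAt_pow d x
  have h1 : HasDerivAt (fun y => (sP d y + y ^ d) ^ d)
      ((d:ℝ) * (sP d x + x ^ d) ^ (d - 1) * (sDP d x + (d:ℝ) * x ^ (d - 1))) x :=
    (hP.add hxd).pow d
  have hg : HasDerivAt (fun y => sP d y - a - (a - 1) * y ^ d)
      (sDP d x - (a - 1) * ((d:ℝ) * x ^ (d - 1))) x :=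
    (hP.sub_const a).sub (hxd.const_mul (a - 1))
  have h2 : HasDerivAt (fun y => (sP d y) ^ d * (sP d y - a - (a - 1) * y ^ d))
      (((d:ℝ) * (sP d x) ^ (d - 1) * sDP d x) * (sP d x - a - (a - 1) * x ^ d)
        + (sP d x) ^ d * (sDP d x - (a - 1) * ((d:ℝ) * x ^ (d - 1)))) x :=
    (hP.pow d).mul hg
  have := (h1.const_mul C).sub h2
  exact this

private lemma cont_Kf (d : ℕ) (C a : ℝ) : Continuous (Kf d C a) := by
  have hdiff : Differentiable ℝ (Kf d C a) := fun x => (hasDerivAt_Kf d C a x).differentiableAt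
  exact hdiff.continuous

private lemma sP_one (d : ℕ) : sP d 1 = d := by
  unfold sP; simp

private lemma exist_root (d : ℕ) (C aa : ℝ) (hd48 : 48 ≤ d) (hC : 0 < C) (ha : 2 ≤ aa)
    (h3C : 3 * C ≤ (d:ℝ) - 6 * aa) :
    ∃ c, c ∈ Set.Ioo (1:ℝ) 2 ∧ Kf d C aa c = 0 := by
  have hd0 : (0:ℝ) < (d:ℝ) := by
    have : (48:ℝ) ≤ (d:ℝ) := by exact_mod_cast hd48
    linarith
  have hK1 : Kf d C aa 1 < 0 := by
    have e : Kf d C aa 1 = C * ((d:ℝ) + 1) ^ d - (d:ℝ) ^ d * ((d:ℝ) - aa - (aa - 1)) := by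
      unfold Kf; rw [sP_one]; norm_num
    have hp := pade d (d:ℝ) (by linarith)
    have hpow3 : ((d:ℝ) + 1) ^ d ≤ 3 * (d:ℝ) ^ d := by
      have h2 : ((d:ℝ) + 1) ^ d * (d:ℝ) ≤ (d:ℝ) ^ d * (3 * (d:ℝ)) := by nlinarith [hp]
      have := le_of_mul_le_mul_right (by linarith [h2] : ((d:ℝ)+1)^d * (d:ℝ) ≤ (3 * (d:ℝ)^d) * (d:ℝ)) hd0
      linarith
    have hCle : C * ((d:ℝ) + 1) ^ d ≤ 3 * C * (d:ℝ) ^ d := by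
      have := mul_le_mul_of_nonneg_left hpow3 hC.le
      nlinarith [this]
    have hstrict : 3 * C * (d:ℝ) ^ d < ((d:ℝ) - 2 * aa + 1) * (d:ℝ) ^ d := by
      have h3 : 3 * C < (d:ℝ) - 2 * aa + 1 := by linarith
      exact mul_lt_mul_of_pos_right h3 (pow_pos hd0 d)
    rw [e]
    nlinarith [hCle, hstrict]
  have hK2 : 0 < Kf d C aa 2 := by
    have hP2 : sP d 2 = 2 ^ d - 1 := by
      have := f1 d 2
      norm_num at this
      linarith
    have h2d : (2:ℝ) ≤ 2 ^ d := by
      calc (2:ℝ) = 2 ^ 1 := by norm_num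
        _ ≤ 2 ^ d := by
          apply pow_le_pow_right₀ (by norm_num)
          omega
    have hP2pos : 0 < sP d 2 := by rw [hP2]; linarith
    have hg2 : sP d 2 - aa - (aa - 1) * 2 ^ d < 0 := by
      rw [hP2]
      nlinarith [h2d]
    have t1 : 0 < C * (sP d 2 + 2 ^ d) ^ d :=
      mul_pos hC (pow_pos (by linarith) d)
    have t2 : 0 < (sP d 2) ^ d * (-(sP d 2 - aa - (aa - 1) * 2 ^ d)) :=
      mul_pos (pow_pos hP2pos d) (by linarith)
    unfold Kf
    nlinarith [t1, t2]
  have hsub : Set.Ioo (Kf d C aa 1) (Kf d C aa 2) ⊆ Kf d C aa '' Set.Ioo 1 2 :=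
    intermediate_value_Ioo (by norm_num) (cont_Kf d C aa).continuousOn
  obtain ⟨c, hc, hKc⟩ := hsub ⟨hK1, hK2⟩
  exact ⟨c, hc, hKc⟩

private lemma no_two_roots (d : ℕ) (C aa : ℝ) (hd48 : 48 ≤ d) (hC : 0 < C) (ha : 2 ≤ aa)
    (h3C : 3 * C ≤ (d:ℝ) - 6 * aa) (y z : ℝ) (hy : 1 < y) (hyz : y < z)
    (hKy : Kf d C aa y = 0) (hKz : Kf d C aa z = 0) : False := by
  have hKdy := crux d C aa y hd48 hC ha h3C hy hKy
  -- find u ∈ (y,z) with Kf u > 0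
  have hslope : Filter.Tendsto (slope (Kf d C aa) y) (nhdsWithin y {y}ᶜ) (nhds (Kd d C aa y)) :=
    hasDerivAt_iff_tendsto_slope.mp (hasDerivAt_Kf d C aa y)
  have hslope2 : Filter.Tendsto (slope (Kf d C aa) y) (nhdsWithin y (Set.Ioi y)) (nhds (Kd d C aa y)) :=
    hslope.mono_left (nhdsWithin_mono y (fun w hw => (Set.mem_Ioi.mp hw).ne'))
  have hev : ∀ᶠ w in nhdsWithin y (Set.Ioi y), 0 < slope (Kf d C aa) y w :=
    hslope2.eventually (eventually_gt_nhds hKdy)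
  have hIoo : Set.Ioo y z ∈ nhdsWithin y (Set.Ioi y) :=
    Ioo_mem_nhdsGT_of_mem ⟨le_refl y, hyz⟩
  have hIoo' : ∀ᶠ w in nhdsWithin y (Set.Ioi y), w ∈ Set.Ioo y z := hIoo
  obtain ⟨u, hslopeu, huIoo⟩ := (hev.and hIoo').exists
  have hyu : y < u := huIoo.1
  have huz : u < z := huIoo.2
  have hKu : 0 < Kf d C aa u := by
    rw [slope_def_field] at hslopeu
    rw [hKy] at hslopeu
    have h1 : 0 < u - y := by linarith
    have := mul_pos hslopeu h1
    rw [div_mul_cancel₀] at this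
    · linarith
    · linarith
  -- infimum of roots in [u,z]
  set B := Set.Icc u z ∩ (Kf d C aa)⁻¹' {0} with hBdef
  have hBclosed : IsClosed B :=
    isClosed_Icc.inter ((isClosed_singleton).preimage (cont_Kf d C aa))
  have hBne : B.Nonempty := ⟨z, ⟨⟨huz.le, le_refl z⟩, hKz⟩⟩
  have hBbdd : BddBelow B := ⟨u, fun w hw => hw.1.1⟩
  set m := sInf B with hmdef
  have hmB : m ∈ B := hBclosed.csInf_mem hBne hBbdd
  have hKm : Kf d C aa m = 0 := hmB.2
  have hum : u < m := by
    rcases lt_or_eq_of_le hmB.1.1 with h | h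
    · exact h
    · exfalso; rw [← h] at hKm; linarith
  have hm1 : 1 < m := by linarith
  have hKdm := crux d C aa m hd48 hC ha h3C hm1 hKm
  have hKpos : ∀ w, u ≤ w → w < m → 0 < Kf d C aa w := by
    intro w hw1 hw2
    have hwz : w ≤ z := le_trans hw2.le (hmB.1.2)
    rcases lt_trichotomy (Kf d C aa w) 0 with hneg | heq | hpos
    · exfalso
      have hIcc : Set.Icc (Kf d C aa w) (Kf d C aa u) ⊆ Kf d C aa '' Set.Icc u w :=
        intermediate_value_Icc' hw1 (cont_Kf d C aa).continuousOn
      obtain ⟨v, hvIcc, hKv⟩ := hIcc ⟨hneg.le, hKu.le⟩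
      have hvB : v ∈ B := ⟨⟨hvIcc.1, le_trans hvIcc.2 hwz⟩, hKv⟩
      have := csInf_le hBbdd hvB
      rw [← hmdef] at this
      linarith [hvIcc.2]
    · exfalso
      have hwB : w ∈ B := ⟨⟨hw1, hwz⟩, heq⟩
      have := csInf_le hBbdd hwB
      rw [← hmdef] at this
      linarith
    · exact hpos
  -- left slope at m is ≤ 0, contradiction with Kd m > 0
  have hslopem : Filter.Tendsto (slope (Kf d C aa) m) (nhdsWithin m (Set.Iio m)) (nhds (Kd d C aa m)) :=
    (hasDerivAt_iff_tendsto_slope.mp (hasDerivAt_Kf d C aa m)).mono_left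
      (nhdsWithin_mono m (fun w hw => (Set.mem_Iio.mp hw).ne))
  have hIco : Set.Ico u m ∈ nhdsWithin m (Set.Iio m) :=
    Ico_mem_nhdsLT_of_mem ⟨hum, le_refl m⟩
  have hevneg : ∀ᶠ w in nhdsWithin m (Set.Iio m), slope (Kf d C aa) m w ≤ 0 := by
    refine Filter.eventually_of_mem hIco (fun w hw => ?_)
    rw [slope_def_field, hKm]
    have h1 : 0 < Kf d C aa w := hKpos w hw.1 hw.2
    have h2 : w - m < 0 := by linarith [hw.2]
    have : (Kf d C aa w - 0) / (w - m) < 0 := div_neg_of_pos_of_neg (by linarith) h2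
    linarith
  have : Kd d C aa m ≤ 0 := le_of_tendsto hslopem hevneg
  linarith

private lemma H_iff_K (d : ℕ) (C aa : ℝ) (hd : 1 ≤ d) (x : ℝ) (hx : 1 < x) :
    (((x ^ (d + 1) - 1) / (x ^ d - 1)) ^ d * C - (x ^ d - 1) / (x - 1) + aa + (aa - 1) * x ^ d = 0)
      ↔ Kf d C aa x = 0 := by
  have hx0 : (0:ℝ) < x := by linarith
  have hx1 : x - 1 ≠ 0 := sub_ne_zero.mpr hx.ne'
  have hP0 : 0 < sP d x := by
    unfold sP
    exact Finset.sum_pos (fun i _ => pow_pos hx0 i) (Finset.nonempty_range_iff.mpr (by omega))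
  have hPne : sP d x ≠ 0 := ne_of_gt hP0
  have hf1x := f1 d x
  have hxd1 : x ^ d - 1 = (x - 1) * sP d x := hf1x.symm
  have hxd11 : x ^ (d+1) - 1 = (x - 1) * (x * sP d x + 1) := by
    rw [pow_succ]
    linear_combination (-x) * hf1x
  have e1 : (x ^ (d+1) - 1) / (x ^ d - 1) = (x * sP d x + 1) / sP d x := by
    rw [hxd11, hxd1, mul_div_mul_left _ _ hx1]
  have e2 : (x ^ d - 1)/(x - 1) = sP d x := by
    rw [hxd1, mul_div_cancel_left₀ _ hx1]
  rw [e1, e2]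
  have hS1 : x * sP d x + 1 = sP d x + x ^ d := by linarith
  rw [hS1]
  have key : Kf d C aa x
      = (((sP d x + x ^ d) / sP d x) ^ d * C - sP d x + aa + (aa - 1) * x ^ d) * (sP d x) ^ d := by
    unfold Kf
    rw [div_pow]
    linear_combination (-C) * div_mul_cancel₀ ((sP d x + x ^ d) ^ d) (pow_ne_zero d hPne)
  constructor
  · intro h
    rw [key, h, zero_mul]
  · intro h
    rw [key] at h
    rcases mul_eq_zero.mp h with h1 | h2
    · exact h1
    · exact absurd h2 (pow_ne_zero d hPne)

/-- Let `q ≥ 4` be an even integer and `q' = q/2`. For all integers `k ≥ 2` and `d ≥ 3q^k`,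
the function `h(x) = ((x^{d+1} − 1)/(x^d − 1))^d·(q^k − q) − (x^d − 1)/(x − 1) + q' +
(q' − 1)·x^d` has exactly one root in `(1, ∞)`. -/
theorem stmt6 (q k d : ℕ) (hq : 4 ≤ q) (heven : Even q) (hk : 2 ≤ k)
    (hd : 3 * q ^ k ≤ d) :
    ∃! x : ℝ, 1 < x ∧
      ((x ^ (d + 1) - 1) / (x ^ d - 1)) ^ d * ((q : ℝ) ^ k - q)
        - (x ^ d - 1) / (x - 1) + ((q : ℝ) / 2) + ((q : ℝ) / 2 - 1) * x ^ d = 0 := by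
  set C : ℝ := (q:ℝ) ^ k - q with hCdef
  set aa : ℝ := (q:ℝ) / 2 with haadef
  have hqr : (4:ℝ) ≤ (q:ℝ) := by exact_mod_cast hq
  have hq1 : (1:ℝ) ≤ (q:ℝ) := by linarith
  have hqk : (q:ℝ) ^ 2 ≤ (q:ℝ) ^ k := pow_le_pow_right₀ hq1 hk
  have hC : 0 < C := by rw [hCdef]; nlinarith
  have ha : 2 ≤ aa := by rw [haadef]; linarith
  have hdr : 3 * (q:ℝ) ^ k ≤ (d:ℝ) := by
    have : ((3 * q ^ k : ℕ) : ℝ) ≤ ((d:ℕ) : ℝ) := by exact_mod_cast hd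
    push_cast at this
    linarith
  have h3C : 3 * C ≤ (d:ℝ) - 6 * aa := by
    rw [hCdef, haadef]
    nlinarith
  have hd48 : 48 ≤ d := by
    have h1 : 16 ≤ q ^ k := by
      calc 16 = 4 ^ 2 := by norm_num
        _ ≤ q ^ 2 := Nat.pow_le_pow_left hq 2
        _ ≤ q ^ k := Nat.pow_le_pow_right (by omega) hk
    omega
  have hd1 : 1 ≤ d := by omega
  obtain ⟨c, hcIoo, hKc⟩ := exist_root d C aa hd48 hC ha h3C
  refine ⟨c, ⟨hcIoo.1, ?_⟩, ?_⟩
  · exact (H_iff_K d C aa hd1 c hcIoo.1).mpr hKc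
  · rintro w ⟨hw1, hwH⟩
    have hKw : Kf d C aa w = 0 := (H_iff_K d C aa hd1 w hw1).mp hwH
    by_contra hne
    rcases lt_or_gt_of_ne hne with h | h
    · exact no_two_roots d C aa hd48 hC ha h3C w c hw1 h hKw hKc
    · exact no_two_roots d C aa hd48 hC ha h3C c w hcIoo.1 h hKc hKw
end
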